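/- arXiv:1407.3516 — 5 statements merged into one kernel-verified Lean document; each statement's English description precedes it below -/
import Mathlib

section
/- For every integer n ≥ 1, the cardinality of 𝓛_n equals the Catalan number C_{n−1} = (1/n)·binomial(2n−2, n−1). -/
/-- A Catalan word: a word `a : Fin n → ℕ` satisfying (i) `a (i+1) ≥ a i - 1` for all
adjacent positions, and (ii) if `i` is the minimal index with `a i = k > 0`, then there
exist `i₁ < i < i₂` with `a i₁ = a i₂ = k - 1`. -/
def IsCatalanWord {n : ℕ} (a : Fin n → ℕ) : Prop :=
  (∀ (i : ℕ) (h : i + 1 < n), a ⟨i, Nat.lt_of_succ_lt h⟩ ≤ a ⟨i + 1, h⟩ + 1) ∧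
  (∀ i : Fin n, 0 < a i → (∀ j : Fin n, a j = a i → i ≤ j) →
    ((∃ i₁ : Fin n, i₁ < i ∧ a i₁ + 1 = a i) ∧ (∃ i₂ : Fin n, i < i₂ ∧ a i₂ + 1 = a i)))

/-- The number of letters of the word `a` equal to `c`. -/
noncomputable def countEq {n : ℕ} (a : Fin n → ℕ) (c : ℕ) : ℕ :=
  Set.ncard {i : Fin n | a i = c}

open Finset List


open Finset List

/-- Valid continuation words of length `q` from automaton state (current value `c`, max `M`). -/
def WS : ℕ → ℕ → ℕ → Finset (List ℕ)
  | 0, _, _ => {[]}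
  | q+1, c, M =>
      ((Finset.Icc (c-1) M).biUnion fun v => (WS q v M).image (v :: ·)) ∪
      (((WS q (M+1) (M+1)).filter (fun l => ∃ x ∈ l, x < M + 1)).image ((M+1) :: ·))

/-- Structural predicate matching `WS` membership. -/
def Good : ℕ → ℕ → List ℕ → Prop
  | _, _, [] => True
  | c, M, x :: t => c ≤ x + 1 ∧ x ≤ M + 1 ∧ (x = M + 1 → ∃ y ∈ t, y < x) ∧ Good x (max M x) t

lemma mem_WS : ∀ (q c M : ℕ), c ≤ M + 1 → ∀ (l : List ℕ),
    (l ∈ WS q c M ↔ (l.length = q ∧ Good c M l)) := by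
  intro q
  induction q with
  | zero =>
    intro c M _ l
    simp only [WS, Finset.mem_singleton]
    constructor
    · rintro rfl; exact ⟨rfl, trivial⟩
    · rintro ⟨h, -⟩; exact List.length_eq_zero_iff.mp h
  | succ q ih =>
    intro c M hc l
    simp only [WS, Finset.mem_union, Finset.mem_biUnion, Finset.mem_image, Finset.mem_filter,
      Finset.mem_Icc]
    constructor
    · rintro (⟨v, ⟨hv1, hv2⟩, t, ht, rfl⟩ | ⟨t, ⟨ht, hlow⟩, rfl⟩)
      · obtain ⟨hlen, hg⟩ := (ih v M (by omega) t).mp ht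
        refine ⟨by simp [hlen], ?_, le_trans hv2 (Nat.le_succ M), ?_, ?_⟩
        · omega
        · intro h; omega
        · rw [max_eq_left hv2]; exact hg
      · obtain ⟨hlen, hg⟩ := (ih (M+1) (M+1) (by omega) t).mp ht
        refine ⟨by simp [hlen], by omega, le_refl _, fun _ => hlow, ?_⟩
        rw [max_eq_right (Nat.le_succ M)]; exact hg
    · rintro ⟨hlen, hg⟩
      match l with
      | [] => simp at hlen
      | x :: t =>
        obtain ⟨h1, h2, h3, h4⟩ := hg
        simp only [List.length_cons, Nat.add_right_cancel_iff] at hlen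
        rcases Nat.lt_or_ge x (M+1) with hx | hx
        · left
          refine ⟨x, ⟨by omega, by omega⟩, t, ?_, rfl⟩
          rw [ih x M (by omega)]
          exact ⟨hlen, by rwa [max_eq_left (by omega)] at h4⟩
        · right
          have hxe : x = M + 1 := le_antisymm h2 hx
          refine ⟨t, ⟨?_, hxe ▸ h3 hxe⟩, by rw [hxe]⟩
          rw [ih (M+1) (M+1) (by omega)]
          subst hxe
          exact ⟨hlen, by rwa [max_eq_right (Nat.le_succ M)] at h4⟩

/-- The counting function. -/
def Acnt (q c M : ℕ) : ℕ := (WS q c M).card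

lemma Acnt_zero (c M : ℕ) : Acnt 0 c M = 1 := by simp [Acnt, WS]

lemma WS_one_zero (q M : ℕ) : WS q 1 M = WS q 0 M := by
  cases q with
  | zero => rfl
  | succ q => simp [WS]

lemma Good_shift (s : ℕ) : ∀ (l : List ℕ) (c M : ℕ),
    Good c M l ↔ Good (c+s) (M+s) (l.map (· + s)) := by
  intro l
  induction l with
  | nil => intro c M; simp [Good]
  | cons x t ih =>
    intro c M
    simp only [List.map_cons, Good]
    constructor
    · rintro ⟨h1, h2, h3, h4⟩
      refine ⟨by omega, by omega, ?_, ?_⟩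
      · intro hx
        have hx' : x = M + 1 := by omega
        obtain ⟨y, hy, hy2⟩ := h3 hx'
        exact ⟨y + s, List.mem_map_of_mem hy, by omega⟩
      · have : max M x + s = max (M+s) (x+s) := by omega
        rw [← this]
        exact (ih x (max M x)).mp h4
    · rintro ⟨h1, h2, h3, h4⟩
      refine ⟨by omega, by omega, ?_, ?_⟩
      · intro hx
        obtain ⟨y, hy, hy2⟩ := h3 (by omega)
        obtain ⟨z, hz, rfl⟩ := List.mem_map.mp hy
        exact ⟨z, hz, by omega⟩
      · have : max M x + s = max (M+s) (x+s) := by omega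
        rw [ih x (max M x), this]
        exact h4
    
lemma WS_shift (s q c M : ℕ) (hc : c ≤ M + 1) :
    (WS q (c+s) (M+s)).filter (fun l => ∀ x ∈ l, s ≤ x) =
      (WS q c M).image (List.map (· + s)) := by
  ext l
  simp only [Finset.mem_filter, Finset.mem_image]
  constructor
  · rintro ⟨hl, hall⟩
    obtain ⟨hlen, hg⟩ := (mem_WS q (c+s) (M+s) (by omega) l).mp hl
    refine ⟨l.map (· - s), ?_, ?_⟩
    · rw [mem_WS q c M hc]
      constructor
      · simp [hlen]
      · rw [Good_shift s]
        have : (l.map (· - s)).map (· + s) = l := by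
          rw [List.map_map]
          conv_rhs => rw [← List.map_id l]
          apply List.map_congr_left
          intro x hx
          have := hall x hx
          simp; omega
        rwa [this]
    · rw [List.map_map]
      conv_rhs => rw [← List.map_id l]
      apply List.map_congr_left
      intro x hx
      have := hall x hx
      simp; omega
  · rintro ⟨t, ht, rfl⟩
    obtain ⟨hlen, hg⟩ := (mem_WS q c M hc t).mp ht
    refine ⟨?_, ?_⟩
    · rw [mem_WS q (c+s) (M+s) (by omega)]
      exact ⟨by simp [hlen], (Good_shift s t c M).mp hg⟩
    · intro x hx
      obtain ⟨z, hz, rfl⟩ := List.mem_map.mp hx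
      omega

lemma Acnt_rec (q c M : ℕ) :
    Acnt (q+1) c M + Acnt q 0 0 =
      (∑ v ∈ Finset.Icc (c-1) M, Acnt q v M) + Acnt q (M+1) (M+1) := by
  have hdisj : Disjoint
      ((Finset.Icc (c-1) M).biUnion fun v => (WS q v M).image (v :: ·))
      (((WS q (M+1) (M+1)).filter (fun l => ∃ x ∈ l, x < M + 1)).image ((M+1) :: ·)) := by
    rw [Finset.disjoint_left]
    intro l hl hr
    obtain ⟨v, hv, t, -, rfl⟩ := by
      simpa only [Finset.mem_biUnion, Finset.mem_image] using hl
    obtain ⟨t', -, het⟩ := by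
      simpa only [Finset.mem_image] using hr
    have : v = M + 1 := by
      have h' := het.symm
      simp only [List.cons.injEq] at h'
      omega
    simp only [Finset.mem_Icc] at hv
    omega
  have h1 : Acnt (q+1) c M =
      (∑ v ∈ Finset.Icc (c-1) M, Acnt q v M) +
        ((WS q (M+1) (M+1)).filter (fun l => ∃ x ∈ l, x < M + 1)).card := by
    rw [Acnt, WS, Finset.card_union_of_disjoint hdisj]
    congr 1
    · rw [Finset.card_biUnion]
      · apply Finset.sum_congr rfl
        intro v _
        rw [Finset.card_image_of_injective _ (fun a b h => by injection h)]
        rfl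
      · intro v₁ h₁ v₂ h₂ hne
        rw [Function.onFun, Finset.disjoint_left]
        intro l hl₁ hl₂
        obtain ⟨t₁, -, rfl⟩ := by simpa only [Finset.mem_image] using hl₁
        obtain ⟨t₂, -, het⟩ := by simpa only [Finset.mem_image] using hl₂
        simp only [List.cons.injEq] at het
        exact hne het.1.symm
    · rw [Finset.card_image_of_injective _ (fun a b h => by injection h)]
  have h2 : ((WS q (M+1) (M+1)).filter (fun l => ∃ x ∈ l, x < M + 1)).card
      + Acnt q 0 0 = Acnt q (M+1) (M+1) := by
    have hsplit := Finset.card_filter_add_card_filter_not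
      (s := WS q (M+1) (M+1)) (p := fun l => ∃ x ∈ l, x < M + 1)
    have hneg : (WS q (M+1) (M+1)).filter (fun l => ¬ ∃ x ∈ l, x < M + 1) =
        (WS q (M+1) (M+1)).filter (fun l => ∀ x ∈ l, M + 1 ≤ x) := by
      apply Finset.filter_congr
      intro l _
      push_neg
      rfl
    have hz : ((WS q (M+1) (M+1)).filter (fun l => ∀ x ∈ l, M + 1 ≤ x)).card =
        Acnt q 0 0 := by
      have := WS_shift (M+1) q 0 0 (by omega)
      simp only [Nat.zero_add] at this
      rw [this, Finset.card_image_of_injective _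
        (List.map_injective_iff.mpr (fun a b h => by omega))]
      rfl
    rw [hneg, hz] at hsplit
    exact hsplit
  omega


lemma Acnt_one_zero (q M : ℕ) : Acnt q 1 M = Acnt q 0 M := by
  unfold Acnt
  rw [WS_one_zero]

lemma Acnt_one (c M : ℕ) : Acnt 1 c M = (Finset.Icc (c-1) M).card := by
  have h := Acnt_rec 0 c M
  simp only [Acnt_zero, Finset.sum_const, smul_eq_mul, mul_one] at h
  have h' : Acnt 1 c M + 1 = #(Finset.Icc (c - 1) M) + 1 := h
  omega

lemma Tstar : ∀ q, ∀ c M : ℕ, c ≤ M + 1 →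
    Acnt (q+1) c (M+1) = Acnt (q+1) c M + Acnt q c (M+2) := by
  intro q
  induction q with
  | zero =>
    intro c M hc
    rw [Acnt_one, Acnt_one, Acnt_zero, Nat.card_Icc, Nat.card_Icc]
    omega
  | succ p ih =>
    intro c M hc
    have E1 := Acnt_rec (p+1) c (M+1)
    have E2 := Acnt_rec (p+1) c M
    have E3 := Acnt_rec p c (M+2)
    have E4 := Acnt_rec p (M+2) (M+2)
    have hS1 : ∑ v ∈ Finset.Icc (c-1) (M+1), Acnt (p+1) v (M+1) =
        (∑ v ∈ Finset.Icc (c-1) M, Acnt (p+1) v (M+1)) + Acnt (p+1) (M+1) (M+1) :=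
      Finset.sum_Icc_succ_top (by omega) _
    have hIH : ∑ v ∈ Finset.Icc (c-1) M, Acnt (p+1) v (M+1) =
        (∑ v ∈ Finset.Icc (c-1) M, Acnt (p+1) v M) +
          ∑ v ∈ Finset.Icc (c-1) M, Acnt p v (M+2) := by
      rw [← Finset.sum_add_distrib]
      refine Finset.sum_congr rfl (fun v hv => ?_)
      exact ih v M (by simp only [Finset.mem_Icc] at hv; omega)
    have hS3a : ∑ v ∈ Finset.Icc (c-1) (M+2), Acnt p v (M+2) =
        (∑ v ∈ Finset.Icc (c-1) (M+1), Acnt p v (M+2)) + Acnt p (M+2) (M+2) :=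
      Finset.sum_Icc_succ_top (by omega) _
    have hS3b : ∑ v ∈ Finset.Icc (c-1) (M+1), Acnt p v (M+2) =
        (∑ v ∈ Finset.Icc (c-1) M, Acnt p v (M+2)) + Acnt p (M+1) (M+2) :=
      Finset.sum_Icc_succ_top (by omega) _
    have hE4 : ∑ v ∈ Finset.Icc (M+2-1) (M+2), Acnt p v (M+2) =
        (∑ v ∈ Finset.Icc (M+2-1) (M+1), Acnt p v (M+2)) + Acnt p (M+2) (M+2) :=
      Finset.sum_Icc_succ_top (by omega) _
    have hE4b : ∑ v ∈ Finset.Icc (M+2-1) (M+1), Acnt p v (M+2) = Acnt p (M+1) (M+2) := by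
      have : M+2-1 = M+1 := by omega
      rw [this, Finset.Icc_self, Finset.sum_singleton]
    simp only [show M+1+1 = M+2 from by omega, show M+2+1 = M+3 from by omega,
      show M+1+1+1 = M+3 from by omega] at E1 E2 E3 E4 hS1 hIH hS3a hS3b hE4 hE4b ⊢
    omega

lemma Acol (q : ℕ) : Acnt (q+1) 0 0 = Acnt q 0 1 := by
  have h := Acnt_rec q 0 0
  have e : Finset.Icc (0-1 : ℕ) 0 = Finset.Icc 0 0 := rfl
  rw [e, Finset.Icc_self, Finset.sum_singleton, Acnt_one_zero] at h
  norm_num at h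
  omega

lemma Aval : ∀ q W : ℕ,
    (Acnt q 0 W : ℚ) * ((q : ℚ) + (W : ℚ) + 1) = ((W : ℚ) + 1) * ((2*q + W).choose q : ℚ) := by
  intro q
  induction q with
  | zero =>
    intro W
    simp [Acnt_zero]
  | succ p ihp =>
    intro W
    induction W with
    | zero =>
      have h0 : Acnt (p+1) 0 0 = Acnt p 0 1 := Acol p
      have h1 := ihp 1
      have hch : (2*(p+1) + 0).choose (p+1) = 2 * ((2*p+1).choose p) := by
        have e1 : 2*(p+1) + 0 = (2*p+1) + 1 := by ring
        rw [e1, Nat.choose_succ_succ (2*p+1) p]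
        simp only [Nat.succ_eq_add_one]
        have e2 : (2*p+1).choose (p+1) = (2*p+1).choose p := by
          rw [← Nat.choose_symm (show p ≤ 2*p+1 by omega)]
          congr 1
          omega
        omega
      have e3 : 2*p + 1 = 2*p + (1:ℕ) := rfl
      rw [h0, hch]
      push_cast
      push_cast at h1
      linarith
    | succ V ihV =>
      have hT : Acnt (p+1) 0 (V+1) = Acnt (p+1) 0 V + Acnt p 0 (V+2) :=
        Tstar p 0 V (by omega)
      have h1 := ihV
      have h2 := ihp (V+2)
      -- choose identities
      have hpas : (2*(p+1) + (V+1)).choose (p+1) =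
          (2*p + V + 2).choose (p+1) + (2*p + V + 2).choose p := by
        have e1 : 2*(p+1) + (V+1) = (2*p + V + 2) + 1 := by ring
        rw [e1, Nat.choose_succ_succ (2*p+V+2) p]
        simp only [Nat.succ_eq_add_one]
        omega
      have hrt : (2*p + V + 2).choose (p+1) * (p+1) = (2*p + V + 2).choose p * (p + V + 2) := by
        have := Nat.choose_succ_right_eq (2*p + V + 2) p
        have e : 2*p + V + 2 - p = p + V + 2 := by omega
        rw [e] at this
        exact this
      have e4 : 2*(p+1) + V = 2*p + V + 2 := by ring
      have e5 : 2*p + (V+2) = 2*p + V + 2 := by ring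
      rw [e4] at h1
      rw [e5] at h2
      rw [hT, hpas]
      have hrt' : ((2*p + V + 2).choose (p+1) : ℚ) * ((p:ℚ)+1) =
          ((2*p + V + 2).choose p : ℚ) * ((p:ℚ) + V + 2) := by exact_mod_cast hrt
      push_cast
      push_cast at h1 h2
      set x := (Acnt (p+1) 0 V : ℚ)
      set y := (Acnt p 0 (V+2) : ℚ)
      set C1 := ((2*p + V + 2).choose (p+1) : ℚ)
      set C2 := ((2*p + V + 2).choose p : ℚ)
      have hne : ((p:ℚ) + V + 2) ≠ 0 := by positivity
      have goal' : ((x + y) * ((p:ℚ) + 1 + (V + 1) + 1)) * ((p:ℚ) + V + 2) =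
          (((V:ℚ) + 1 + 1) * (C1 + C2)) * ((p:ℚ) + V + 2) := by
        linear_combination ((p:ℚ) + V + 3) * h1 + ((p:ℚ) + V + 2) * h2 - hrt'
      have := mul_right_cancel₀ hne goal'
      linarith [this]

lemma Acnt_catalan (q : ℕ) : Acnt q 0 0 = catalan q := by
  have h := Aval q 0
  have hc := succ_mul_catalan_eq_centralBinom q
  have hcb : Nat.centralBinom q = (2*q).choose q := rfl
  have h2 : ((catalan q : ℚ)) * ((q:ℚ) + 1) = ((2*q + 0).choose q : ℚ) := by
    rw [Nat.add_zero]
    rw [← hcb]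
    rw [← hc]
    push_cast
    ring
  have hne : ((q:ℚ) + 1) ≠ 0 := by positivity
  have : (Acnt q 0 0 : ℚ) = (catalan q : ℚ) := by
    have h' : (Acnt q 0 0 : ℚ) * ((q:ℚ) + 1) = (catalan q : ℚ) * ((q:ℚ) + 1) := by
      rw [h2]
      simpa using h
    exact mul_right_cancel₀ hne h'
  exact_mod_cast this

/-- running max over first `i` entries, seeded with `M`. -/
def qm (M : ℕ) (l : List ℕ) (i : ℕ) : ℕ := List.foldl max M (l.take i)

lemma qm_zero (M : ℕ) (l : List ℕ) : qm M l 0 = M := rfl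

lemma qm_cons (M x : ℕ) (t : List ℕ) (i : ℕ) :
    qm M (x :: t) (i+1) = qm (max M x) t i := rfl

lemma good_iff : ∀ (l : List ℕ) (c M : ℕ),
    Good c M l ↔ ∀ i, i < l.length →
      ((if i = 0 then c else l.getD (i-1) 0) ≤ l.getD i 0 + 1) ∧
      l.getD i 0 ≤ qm M l i + 1 ∧
      (l.getD i 0 = qm M l i + 1 →
        ∃ j, i < j ∧ j < l.length ∧ l.getD j 0 < l.getD i 0) := by
  intro l
  induction l with
  | nil => intro c M; simp [Good]
  | cons x t ih =>
    intro c M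
    simp only [Good, List.length_cons]
    constructor
    · rintro ⟨h1, h2, h3, h4⟩ i hi
      match i with
      | 0 =>
        refine ⟨by simpa using h1, by simpa [qm_zero] using h2, ?_⟩
        intro hx
        simp only [List.getD_cons_zero, qm_zero] at hx
        obtain ⟨y, hy, hy2⟩ := h3 hx
        obtain ⟨j, hj, rfl⟩ := List.mem_iff_getElem.mp hy
        refine ⟨j+1, by omega, by omega, ?_⟩
        simp only [List.getD_cons_zero, List.getD_cons_succ]
        rwa [List.getD_eq_getElem t 0 hj]
      | i+1 =>
        have := (ih x (max M x)).mp h4 i (by omega)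
        simp only [List.getD_cons_succ, qm_cons]
        match i with
        | 0 =>
          refine ⟨by simpa using this.1, this.2.1, ?_⟩
          intro hx
          obtain ⟨j, hj1, hj2, hj3⟩ := this.2.2 hx
          exact ⟨j+1, by omega, by omega, by simpa using hj3⟩
        | i+1 =>
          refine ⟨by simpa using this.1, this.2.1, ?_⟩
          intro hx
          obtain ⟨j, hj1, hj2, hj3⟩ := this.2.2 hx
          exact ⟨j+1, by omega, by omega, by simpa using hj3⟩
    · intro h
      have h0 := h 0 (by omega)
      simp only [List.getD_cons_zero, qm_zero, eq_self_iff_true, if_true] at h0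
      refine ⟨by omega, h0.2.1, ?_, ?_⟩
      · intro hx
        obtain ⟨j, hj1, hj2, hj3⟩ := h0.2.2 hx
        match j, hj1 with
        | j+1, _ =>
          simp only [List.getD_cons_succ] at hj3
          have hjt : j < t.length := by omega
          refine ⟨t.getD j 0, ?_, hj3⟩
          rw [List.getD_eq_getElem t 0 hjt]
          exact List.getElem_mem hjt
      · rw [ih x (max M x)]
        intro i hi
        have := h (i+1) (by omega)
        simp only [List.getD_cons_succ, qm_cons] at this
        match i with
        | 0 =>
          refine ⟨by simpa using this.1, this.2.1, ?_⟩
          intro hx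
          obtain ⟨j, hj1, hj2, hj3⟩ := this.2.2 hx
          match j, hj1 with
          | j+1, _ =>
            simp only [List.getD_cons_succ] at hj3
            exact ⟨j, by omega, by omega, hj3⟩
        | i+1 =>
          refine ⟨by simpa using this.1, this.2.1, ?_⟩
          intro hx
          obtain ⟨j, hj1, hj2, hj3⟩ := this.2.2 hx
          match j, hj1 with
          | j+1, _ =>
            simp only [List.getD_cons_succ] at hj3
            exact ⟨j, by omega, by omega, hj3⟩


/-- prefix max of `b` over indices `< i`. -/
def pmx (b : ℕ → ℕ) : ℕ → ℕ
  | 0 => 0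
  | i+1 => max (pmx b i) (b i)

lemma le_pmx (b : ℕ → ℕ) : ∀ {j i : ℕ}, j < i → b j ≤ pmx b i := by
  intro j i
  induction i with
  | zero => omega
  | succ i ih =>
    intro h
    rcases Nat.lt_or_ge j i with h' | h'
    · exact le_trans (ih h') (le_max_left _ _)
    · have : j = i := by omega
      subst this
      exact le_max_right _ _

theorem cw_iff_idx (n : ℕ) (hn : 1 ≤ n) (b : ℕ → ℕ) :
    ((∀ i, i+1 < n → b i ≤ b (i+1) + 1) ∧
     (∀ i, i < n → 0 < b i → (∀ j, j < n → b j = b i → i ≤ j) →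
       ((∃ i₁, i₁ < i ∧ b i₁ + 1 = b i) ∧ (∃ i₂, i < i₂ ∧ i₂ < n ∧ b i₂ + 1 = b i))))
    ↔
    (b 0 = 0 ∧ (∀ i, i+1 < n → b i ≤ b (i+1) + 1) ∧
     (∀ i, 0 < i → i < n → b i ≤ pmx b i + 1) ∧
     (∀ i, 0 < i → i < n → b i = pmx b i + 1 → ∃ j, i < j ∧ j < n ∧ b j < b i)) := by
  constructor
  · rintro ⟨hchain, hmain⟩
    have a0 : b 0 = 0 := by
      by_contra h
      obtain ⟨⟨i₁, hi₁, -⟩, -⟩ := hmain 0 (by omega) (by omega) (fun j _ _ => Nat.zero_le j)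
      omega
    refine ⟨a0, hchain, ?_, ?_⟩
    · -- ceiling
      intro i h0 hin
      rcases Nat.eq_zero_or_pos (b i) with hbz | hbp
      · omega
      · have hex : ∃ j, b j = b i ∧ j < n := ⟨i, rfl, hin⟩
        obtain ⟨hspec1, hspec2⟩ := Nat.find_spec hex
        have hj₀i : Nat.find hex ≤ i := Nat.find_min' hex ⟨rfl, hin⟩
        have hminimal : ∀ j, j < n → b j = b (Nat.find hex) → Nat.find hex ≤ j := by
          intro j hjn hbj
          by_contra hlt
          exact Nat.find_min hex (by omega) ⟨by omega, hjn⟩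
        obtain ⟨⟨i₁, hi₁lt, hi₁⟩, -⟩ := hmain (Nat.find hex) hspec2 (by omega) hminimal
        have : b i₁ ≤ pmx b i := le_pmx b (by omega)
        omega
    · -- obligation
      intro i h0 hin heq
      have hminimal : ∀ j, j < n → b j = b i → i ≤ j := by
        intro j hjn hbj
        by_contra hlt
        have : b j ≤ pmx b i := le_pmx b (by omega)
        omega
      obtain ⟨-, ⟨i₂, h₂, h₂n, hb₂⟩⟩ := hmain i hin (by omega) hminimal
      exact ⟨i₂, h₂, h₂n, by omega⟩
  · rintro ⟨a0, hchain, hceil, hobl⟩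
    have surj : ∀ m, m < n → ∀ v, v ≤ pmx b (m+1) → ∃ j, j ≤ m ∧ b j = v := by
      intro m
      induction m with
      | zero =>
        intro _ v hv
        simp only [pmx, a0] at hv
        exact ⟨0, le_refl 0, by omega⟩
      | succ m ih =>
        intro hmn v hv
        rcases le_or_gt v (pmx b (m+1)) with hvle | hvgt
        · obtain ⟨j, hj, hbj⟩ := ih (by omega) v hvle
          exact ⟨j, by omega, hbj⟩
        · have h1 : v ≤ max (pmx b (m+1)) (b (m+1)) := hv
          have h2 : b (m+1) ≤ pmx b (m+1) + 1 := hceil (m+1) (by omega) hmn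
          have : v = b (m+1) := by omega
          exact ⟨m+1, le_refl _, this.symm⟩
    refine ⟨hchain, ?_⟩
    intro i hin hpos hmin
    have h0 : 0 < i := by
      rcases Nat.eq_zero_or_pos i with h | h
      · subst h; omega
      · exact h
    have hceil' : b i ≤ pmx b i + 1 := hceil i h0 hin
    have heq : b i = pmx b i + 1 := by
      by_contra hne
      have hk : b i ≤ pmx b i := by omega
      obtain ⟨j, hj, hbj⟩ := surj (i-1) (by omega) (b i) (by
        have : i - 1 + 1 = i := by omega
        rw [this]; exact hk)
      have := hmin j (by omega) hbj
      omega
    constructor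
    · obtain ⟨j, hj, hbj⟩ := surj (i-1) (by omega) (pmx b i) (by
        have : i - 1 + 1 = i := by omega
        rw [this])
      exact ⟨j, by omega, by omega⟩
    · obtain ⟨j, hij, hjn, hbij⟩ := hobl i h0 hin heq
      have hex : ∃ t, i < t ∧ b t < b i := ⟨j, hij, hbij⟩
      obtain ⟨hs1, hs2⟩ := Nat.find_spec hex
      have ht₀j : Nat.find hex ≤ j := Nat.find_min' hex ⟨hij, hbij⟩
      have ht₀n : Nat.find hex < n := by omega
      have hprev : b i ≤ b (Nat.find hex - 1) := by
        rcases Nat.eq_or_lt_of_le (show i ≤ Nat.find hex - 1 by omega) with h | h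
        · rw [← h]
        · have := Nat.find_min hex (show Nat.find hex - 1 < Nat.find hex by omega)
          simp only [not_and, not_lt] at this
          exact this h
      have hch : b (Nat.find hex - 1) ≤ b (Nat.find hex - 1 + 1) + 1 := hchain _ (by omega)
      have ht : Nat.find hex - 1 + 1 = Nat.find hex := by omega
      rw [ht] at hch
      exact ⟨Nat.find hex, hs1, ht₀n, by omega⟩

-- pmx helper lemmas
lemma pmx_zero (b : ℕ → ℕ) : pmx b 0 = 0 := rfl
lemma pmx_succ (b : ℕ → ℕ) (i : ℕ) : pmx b (i+1) = max (pmx b i) (b i) := rfl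

/-- step 6a : Fin ↔ ℕ indexing -/
lemma isCW_iff_nat (n : ℕ) (a : Fin n → ℕ) (b : ℕ → ℕ)
    (hb : ∀ i (h : i < n), b i = a ⟨i, h⟩) :
    IsCatalanWord a ↔
    ((∀ i, i+1 < n → b i ≤ b (i+1) + 1) ∧
     (∀ i, i < n → 0 < b i → (∀ j, j < n → b j = b i → i ≤ j) →
       ((∃ i₁, i₁ < i ∧ b i₁ + 1 = b i) ∧ (∃ i₂, i < i₂ ∧ i₂ < n ∧ b i₂ + 1 = b i)))) := by
  constructor
  · rintro ⟨h1, h2⟩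
    constructor
    · intro i hi
      rw [hb i (by omega), hb (i+1) (by omega)]
      exact h1 i hi
    · intro i hin hpos hmin
      have hpos' : 0 < a ⟨i, hin⟩ := by rwa [hb i hin] at hpos
      have hmin' : ∀ j : Fin n, a j = a ⟨i, hin⟩ → (⟨i, hin⟩ : Fin n) ≤ j := by
        intro j hj
        have := hmin j.val j.isLt (by rw [hb j.val j.isLt, hb i hin]; simpa using hj)
        exact this
      obtain ⟨⟨i₁, hlt₁, he₁⟩, ⟨i₂, hlt₂, he₂⟩⟩ := h2 ⟨i, hin⟩ hpos' hmin'
      constructor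
      · exact ⟨i₁.val, hlt₁, by rw [hb i₁.val i₁.isLt, hb i hin]; simpa using he₁⟩
      · exact ⟨i₂.val, hlt₂, i₂.isLt, by rw [hb i₂.val i₂.isLt, hb i hin]; simpa using he₂⟩
  · rintro ⟨h1, h2⟩
    constructor
    · intro i hi
      have := h1 i hi
      rwa [hb i (by omega), hb (i+1) (by omega)] at this
    · intro i hpos hmin
      have hpos' : 0 < b i.val := by rw [hb i.val i.isLt]; simpa using hpos
      have hmin' : ∀ j, j < n → b j = b i.val → i.val ≤ j := by
        intro j hjn hj
        have : a ⟨j, hjn⟩ = a i := by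
          rw [← hb j hjn, hj, hb i.val i.isLt]
        exact hmin ⟨j, hjn⟩ this
      obtain ⟨⟨i₁, hlt₁, he₁⟩, ⟨i₂, hlt₂, hi₂n, he₂⟩⟩ := h2 i.val i.isLt hpos' hmin'
      constructor
      · refine ⟨⟨i₁, by omega⟩, Fin.lt_iff_val_lt_val.mpr hlt₁, ?_⟩
        have := he₁
        rw [hb i₁ (by omega), hb i.val i.isLt] at this
        simpa using this
      · refine ⟨⟨i₂, hi₂n⟩, Fin.lt_iff_val_lt_val.mpr hlt₂, ?_⟩
        have := he₂
        rw [hb i₂ hi₂n, hb i.val i.isLt] at this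
        simpa using this

lemma qm_succ : ∀ (l : List ℕ) (M i : ℕ), i < l.length →
    qm M l (i+1) = max (qm M l i) (l.getD i 0) := by
  intro l
  induction l with
  | nil => intro M i h; simp at h
  | cons x t ih =>
    intro M i h
    match i with
    | 0 => rw [qm_cons, qm_zero, qm_zero, List.getD_cons_zero]
    | i+1 =>
      rw [qm_cons, ih (max M x) i (by simpa using h), qm_cons, List.getD_cons_succ]

lemma idx_iff_good (n : ℕ) (b : ℕ → ℕ) (l : List ℕ)
    (hlen : l.length + 1 = n) (hl : ∀ i, i < l.length → l.getD i 0 = b (i+1))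
    (hb0 : b 0 = 0) :
    ((∀ i, i+1 < n → b i ≤ b (i+1) + 1) ∧
     (∀ i, 0 < i → i < n → b i ≤ pmx b i + 1) ∧
     (∀ i, 0 < i → i < n → b i = pmx b i + 1 → ∃ j, i < j ∧ j < n ∧ b j < b i))
    ↔ Good 0 0 l := by
  have hqm : ∀ i, i ≤ l.length → qm 0 l i = pmx b (i+1) := by
    intro i
    induction i with
    | zero =>
      intro _
      rw [qm_zero, pmx_succ, pmx_zero, hb0]
      simp
    | succ i ih =>
      intro h
      rw [qm_succ l 0 i (by omega), ih (by omega), hl i (by omega),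
        pmx_succ b (i+1)]
  rw [good_iff]
  constructor
  · rintro ⟨hch, hceil, hobl⟩ i hi
    refine ⟨?_, ?_, ?_⟩
    · match i with
      | 0 => simp
      | i+1 =>
        simp only [Nat.add_sub_cancel, if_neg (Nat.succ_ne_zero i)]
        rw [hl i (by omega), hl (i+1) hi]
        exact hch (i+1) (by omega)
    · rw [hl i hi, hqm i (by omega)]
      exact hceil (i+1) (by omega) (by omega)
    · intro he
      rw [hl i hi, hqm i (by omega)] at he
      obtain ⟨j, hj1, hj2, hj3⟩ := hobl (i+1) (by omega) (by omega) he
      obtain ⟨j', rfl⟩ : ∃ j', j = j' + 1 := ⟨j - 1, by omega⟩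
      refine ⟨j', by omega, by omega, ?_⟩
      rw [hl j' (by omega), hl i hi]
      exact hj3
  · intro h
    refine ⟨?_, ?_, ?_⟩
    · intro i hi
      match i with
      | 0 => rw [hb0]; exact Nat.zero_le _
      | i+1 =>
        have := (h (i+1) (by omega)).1
        simp only [Nat.add_sub_cancel, if_neg (Nat.succ_ne_zero i)] at this
        rwa [hl i (by omega), hl (i+1) (by omega)] at this
    · intro i h0 hin
      obtain ⟨i', rfl⟩ : ∃ i', i = i' + 1 := ⟨i - 1, by omega⟩
      have := (h i' (by omega)).2.1
      rwa [hl i' (by omega), hqm i' (by omega)] at this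
    · intro i h0 hin he
      obtain ⟨i', rfl⟩ : ∃ i', i = i' + 1 := ⟨i - 1, by omega⟩
      have := (h i' (by omega)).2.2
      rw [hl i' (by omega), hqm i' (by omega)] at this
      obtain ⟨j, hj1, hj2, hj3⟩ := this he
      rw [hl j (by omega)] at hj3
      exact ⟨j+1, by omega, by omega, hj3⟩

lemma main_iff (n : ℕ) (hn : 1 ≤ n) (a : Fin n → ℕ) :
    IsCatalanWord a ↔ (a ⟨0, hn⟩ = 0 ∧ Good 0 0 ((List.ofFn a).tail)) := by
  classical
  set b : ℕ → ℕ := fun i => if h : i < n then a ⟨i, h⟩ else 0 with hbdef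
  have hb : ∀ i (h : i < n), b i = a ⟨i, h⟩ := fun i h => dif_pos h
  have hlen : ((List.ofFn a).tail).length + 1 = n := by
    simp only [List.length_tail, List.length_ofFn]
    omega
  have hl : ∀ i, i < ((List.ofFn a).tail).length →
      ((List.ofFn a).tail).getD i 0 = b (i+1) := by
    intro i hi
    rw [List.getD_eq_getElem _ 0 hi]
    rw [List.getElem_tail]
    rw [List.getElem_ofFn]
    rw [hb (i+1) (by omega)]
  rw [isCW_iff_nat n a b hb, cw_iff_idx n hn b]
  constructor
  · rintro ⟨hb0, rest⟩
    exact ⟨by rw [← hb 0 (by omega)]; exact hb0,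
      (idx_iff_good n b _ hlen hl hb0).mp rest⟩
  · rintro ⟨ha0, hgood⟩
    have hb0 : b 0 = 0 := by rw [hb 0 (by omega)]; exact ha0
    exact ⟨hb0, (idx_iff_good n b _ hlen hl hb0).mpr hgood⟩

lemma WS_card_catalan (q : ℕ) : (WS q 0 0).card = catalan q := Acnt_catalan q

lemma tail_getD (n : ℕ) (a : Fin n → ℕ) (i : Fin n) (h0 : 0 < i.val) :
    ((List.ofFn a).tail).getD (i.val - 1) 0 = a i := by
  have hi : i.val - 1 < ((List.ofFn a).tail).length := by
    simp only [List.length_tail, List.length_ofFn]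
    omega
  rw [List.getD_eq_getElem _ 0 hi, List.getElem_tail, List.getElem_ofFn]
  congr 1
  apply Fin.ext
  simp
  omega


/-- The cardinality of `𝓛 n` is the Catalan number `C (n-1) = (1/n) * choose (2n-2) (n-1)`. -/
theorem card_catalanWords (n : ℕ) (hn : 1 ≤ n) :
    Set.ncard {a : Fin n → ℕ | IsCatalanWord a} = catalan (n - 1) ∧
    (Set.ncard {a : Fin n → ℕ | IsCatalanWord a} : ℚ) =
      (Nat.choose (2 * n - 2) (n - 1) : ℚ) / (n : ℚ) := by
  classical
  have key : Set.ncard {a : Fin n → ℕ | IsCatalanWord a} = catalan (n - 1) := by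
    set S := {a : Fin n → ℕ | IsCatalanWord a} with hS
    set Φ : (Fin n → ℕ) → List ℕ := fun a => (List.ofFn a).tail with hΦ
    have hΦa : ∀ (l : List ℕ), l.length = n - 1 →
        Φ (fun i : Fin n => (0 :: l).getD i.val 0) = l := by
      intro l hlen
      apply List.ext_getElem
      · simp only [hΦ, List.length_tail, List.length_ofFn]
        omega
      · intro i h1 h2
        simp only [hΦ]
        rw [List.getElem_tail, List.getElem_ofFn]
        simp only [List.getD_cons_succ]
        exact List.getD_eq_getElem l 0 h2
    have himg : Φ '' S = ↑(WS (n-1) 0 0) := by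
      ext l
      simp only [Set.mem_image, Finset.mem_coe]
      constructor
      · rintro ⟨a, ha, rfl⟩
        obtain ⟨ha0, hg⟩ := (main_iff n hn a).mp ha
        rw [mem_WS (n-1) 0 0 (by omega)]
        refine ⟨?_, hg⟩
        simp only [hΦ, List.length_tail, List.length_ofFn]
      · intro hl
        obtain ⟨hlen, hg⟩ := (mem_WS (n-1) 0 0 (by omega) l).mp hl
        refine ⟨fun i : Fin n => (0 :: l).getD i.val 0, ?_, hΦa l hlen⟩
        rw [hS, Set.mem_setOf_eq, main_iff n hn]
        constructor
        · simp
        · rw [show (List.ofFn fun i : Fin n => (0 :: l).getD i.val 0).tail =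
            Φ (fun i : Fin n => (0 :: l).getD i.val 0) from rfl, hΦa l hlen]
          exact hg
    have hinj : Set.InjOn Φ S := by
      intro a1 h1 a2 h2 he
      obtain ⟨h10, -⟩ := (main_iff n hn a1).mp h1
      obtain ⟨h20, -⟩ := (main_iff n hn a2).mp h2
      funext i
      rcases Nat.eq_zero_or_pos i.val with h0 | h0
      · have hi : i = ⟨0, by omega⟩ := Fin.ext (by simp [h0])
        rw [hi, h10, h20]
      · rw [← tail_getD n a1 i h0, ← tail_getD n a2 i h0]
        show (Φ a1).getD (i.val - 1) 0 = (Φ a2).getD (i.val - 1) 0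
        rw [he]
    calc S.ncard = (Φ '' S).ncard := (Set.ncard_image_of_injOn hinj).symm
    _ = ((WS (n-1) 0 0 : Finset (List ℕ)) : Set (List ℕ)).ncard := by rw [himg]
    _ = (WS (n-1) 0 0).card := Set.ncard_coe_finset _
    _ = catalan (n-1) := WS_card_catalan _
  refine ⟨key, ?_⟩
  rw [key]
  have h := succ_mul_catalan_eq_centralBinom (n-1)
  have e1 : n - 1 + 1 = n := by omega
  rw [e1] at h
  have e2 : 2 * n - 2 = 2 * (n-1) := by omega
  rw [e2]
  have hcb : Nat.centralBinom (n-1) = (2*(n-1)).choose (n-1) := rfl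
  rw [hcb] at h
  have hn0 : (n:ℚ) ≠ 0 := Nat.cast_ne_zero.mpr (by omega)
  rw [eq_div_iff hn0]
  have : ((n * catalan (n-1) : ℕ) : ℚ) = ((2*(n-1)).choose (n-1) : ℚ) := by
    exact_mod_cast congrArg (fun x : ℕ => (x : ℚ)) h
  push_cast at this
  linarith
end

section
/- For n ≥ 2 and 1 ≤ m ≤ n−1, a(n,m) = Σ_{j=1}^{n−m} (binomial(j+m−1, j) − 1)·a(n−m, j); moreover a(n,n) = 1 for all n ≥ 1. -/
/-- `aZ n m` is the number of Catalan words of length `n` with exactly `m` zeros. -/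
noncomputable def aZ (n m : ℕ) : ℕ :=
  Set.ncard {a : Fin n → ℕ | IsCatalanWord a ∧ countEq a 0 = m}


namespace AZ

def Chn (l : List ℕ) : Prop := l.Chain' (fun x y => x ≤ y + 1)

def Fst (l : List ℕ) : Prop :=
  ∀ p k s, l = p ++ (k+1) :: s → (k+1) ∉ p → k ∈ p ∧ k ∈ s

def CL (l : List ℕ) : Prop := Chn l ∧ Fst l

def go : List ℕ → List ℕ → List ℕ
  | _, [] => []
  | cs, 0 :: b => 1 :: (List.replicate cs.headI 0 ++ go cs.tail b)
  | cs, (x+1) :: b => (x+2) :: go cs b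

def recomp (c₀ : ℕ) (cs : List ℕ) (b : List ℕ) : List ℕ :=
  List.replicate c₀ 0 ++ go cs b

def strip (l : List ℕ) : List ℕ := (l.filter (· ≠ 0)).map (· - 1)

def lead (l : List ℕ) : ℕ := (l.takeWhile (· == 0)).length

def gaps : List ℕ → List ℕ
  | [] => []
  | 0 :: l => gaps l
  | 1 :: l => (l.takeWhile (· == 0)).length :: gaps (l.dropWhile (· == 0))
  | (_+2) :: l => gaps l
  termination_by l => l.length
  decreasing_by
    all_goals simp_wf
    all_goals try omega
    have := (List.dropWhile_suffix (l := l) (· == 0)).length_le; omega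

@[simp] theorem go_nil (cs : List ℕ) : go cs [] = [] := rfl

@[simp] theorem go_zero (cs b) : go cs (0 :: b) = 1 :: (List.replicate cs.headI 0 ++ go cs.tail b) := rfl

@[simp] theorem go_succ (cs x b) : go cs ((x+1) :: b) = (x+2) :: go cs b := rfl

@[simp] theorem strip_nil : strip [] = [] := rfl

@[simp] theorem strip_cons_zero (l) : strip (0 :: l) = strip l := by simp [strip]

@[simp] theorem strip_cons_succ (x l) : strip ((x+1) :: l) = x :: strip l := by simp [strip]

@[simp] theorem strip_append (l₁ l₂) : strip (l₁ ++ l₂) = strip l₁ ++ strip l₂ := by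
  simp [strip]

@[simp] theorem strip_replicate_zero (q) : strip (List.replicate q 0) = [] := by
  induction q with
  | zero => rfl
  | succ q ih => simpa [List.replicate_succ] using ih

theorem strip_go (b : List ℕ) : ∀ cs, strip (go cs b) = b := by
  induction b with
  | nil => intro cs; rfl
  | cons x b ih =>
    intro cs
    match x with
    | 0 => simp [ih]
    | x+1 => simp [ih]

theorem mem_go_succ {x : ℕ} (b : List ℕ) : ∀ cs, ((x+1) ∈ go cs b ↔ x ∈ b) := by
  induction b with
  | nil => simp
  | cons y b ih =>
    intro cs
    match y with
    | 0 =>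
      simp [ih, List.mem_replicate]
    | y+1 =>
      simp [ih]

theorem go_append (p q : List ℕ) : ∀ cs, go cs (p ++ q) = go cs p ++ go (cs.drop (p.count 0)) q := by
  induction p with
  | nil => simp
  | cons x p ih =>
    intro cs
    match x with
    | 0 =>
      simp only [List.cons_append, go_zero, ih, List.count_cons_self, List.append_assoc]
      congr 2
      rw [← List.drop_one, List.drop_drop, Nat.add_comm]
    | x+1 =>
      simp only [List.cons_append, go_succ, ih, List.cons_append]
      rw [List.count_cons_of_ne (by omega)]

theorem zero_mem_go (b : List ℕ) : ∀ cs, cs.length = b.count 0 → (0 ∈ go cs b ↔ 0 < cs.sum) := by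
  induction b with
  | nil => intro cs h; simp only [List.count_nil] at h; rw [List.length_eq_zero_iff] at h; subst h; simp
  | cons x b ih =>
    intro cs h
    match x with
    | 0 =>
      simp only [List.count_cons_self] at h
      match cs with
      | [] => simp at h
      | c :: cs =>
        simp [List.mem_replicate, ih cs (by simpa using h)]
        omega
    | x+1 =>
      rw [List.count_cons_of_ne (by omega)] at h
      simp [ih cs h]

theorem count_zero_go (b : List ℕ) : ∀ cs, cs.length = b.count 0 → (go cs b).count 0 = cs.sum := by
  induction b with
  | nil => intro cs h; simp only [List.count_nil] at h; rw [List.length_eq_zero_iff] at h; subst h; simp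
  | cons x b ih =>
    intro cs h
    match x with
    | 0 =>
      simp only [List.count_cons_self] at h
      match cs with
      | [] => simp at h
      | c :: cs =>
        simp [List.count_cons, List.count_append, List.count_replicate, ih cs (by simpa using h)]
    | x+1 =>
      rw [List.count_cons_of_ne (by omega)] at h
      simp [List.count_cons, ih cs h]

theorem count_one_go (b : List ℕ) : ∀ cs, (go cs b).count 1 = b.count 0 := by
  induction b with
  | nil => simp
  | cons x b ih =>
    intro cs
    match x with
    | 0 =>
      simp [List.count_cons, List.count_append, List.count_replicate, ih]
    | x+1 =>
      simp [List.count_cons, ih]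

theorem length_go (b : List ℕ) : ∀ cs, cs.length = b.count 0 → (go cs b).length = b.length + cs.sum := by
  induction b with
  | nil => intro cs h; simp only [List.count_nil] at h; rw [List.length_eq_zero_iff] at h; subst h; simp
  | cons x b ih =>
    intro cs h
    match x with
    | 0 =>
      simp only [List.count_cons_self] at h
      match cs with
      | [] => simp at h
      | c :: cs =>
        simp [ih cs (by simpa using h)]
        omega
    | x+1 =>
      rw [List.count_cons_of_ne (by omega)] at h
      simp [ih cs h]
      omega

@[simp] theorem gaps_nil : gaps [] = [] := by rw [gaps]

@[simp] theorem gaps_cons_zero (l) : gaps (0 :: l) = gaps l := by rw [gaps]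

@[simp] theorem gaps_cons_one (l) : gaps (1 :: l) =
    (l.takeWhile (· == 0)).length :: gaps (l.dropWhile (· == 0)) := by rw [gaps]

@[simp] theorem gaps_cons_succ (x l) : gaps ((x+2) :: l) = gaps l := by rw [gaps]

theorem head_go_ne_zero {cs b t} (h : go cs b = 0 :: t) : False := by
  match b with
  | [] => simp at h
  | 0 :: b => simp at h
  | (x+1) :: b => simp at h

theorem takeWhile_rep_append {r : List ℕ} (hr : ∀ t, r ≠ 0 :: t) (q : ℕ) :
    (List.replicate q 0 ++ r).takeWhile (· == 0) = List.replicate q 0 := by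
  induction q with
  | zero =>
    simp only [List.replicate_zero, List.nil_append]
    match r with
    | [] => rfl
    | x :: t =>
      have : x ≠ 0 := fun h => hr t (by rw [h])
      rw [List.takeWhile_cons_of_neg (by simpa using this)]
  | succ q ih =>
    rw [List.replicate_succ, List.cons_append, List.takeWhile_cons_of_pos (by simp), ih]

theorem dropWhile_rep_append {r : List ℕ} (hr : ∀ t, r ≠ 0 :: t) (q : ℕ) :
    (List.replicate q 0 ++ r).dropWhile (· == 0) = r := by
  induction q with
  | zero =>
    simp only [List.replicate_zero, List.nil_append]
    match r with
    | [] => rfl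
    | x :: t =>
      have : x ≠ 0 := fun h => hr t (by rw [h])
      rw [List.dropWhile_cons_of_neg (by simpa using this)]
  | succ q ih =>
    rw [List.replicate_succ, List.cons_append, List.dropWhile_cons_of_pos (by simp), ih]

theorem gaps_rep_append (r : List ℕ) (q : ℕ) :
    gaps (List.replicate q 0 ++ r) = gaps r := by
  induction q with
  | zero => simp
  | succ q ih => rw [List.replicate_succ, List.cons_append, gaps_cons_zero, ih]

@[simp] theorem lead_recomp (c₀ cs b) : lead (recomp c₀ cs b) = c₀ := by
  rw [recomp, lead, takeWhile_rep_append (fun t h => head_go_ne_zero h), List.length_replicate]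

@[simp] theorem strip_recomp (c₀ cs b) : strip (recomp c₀ cs b) = b := by
  rw [recomp, strip_append, strip_replicate_zero, List.nil_append, strip_go]

theorem gaps_go (b : List ℕ) : ∀ cs, cs.length = b.count 0 → gaps (go cs b) = cs := by
  induction b with
  | nil => intro cs h; simp only [List.count_nil] at h; rw [List.length_eq_zero_iff] at h; subst h; simp
  | cons x b ih =>
    intro cs h
    match x with
    | 0 =>
      simp only [List.count_cons_self] at h
      match cs with
      | [] => simp at h
      | c :: cs =>
        rw [go_zero, gaps_cons_one,
          takeWhile_rep_append (fun t h => head_go_ne_zero h),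
          dropWhile_rep_append (fun t h => head_go_ne_zero h)]
        simp [ih cs (by simpa using h)]
    | x+1 =>
      rw [List.count_cons_of_ne (by omega)] at h
      rw [go_succ, gaps_cons_succ, ih cs h]

@[simp] theorem gaps_recomp (c₀ cs b) (h : cs.length = b.count 0) :
    gaps (recomp c₀ cs b) = cs := by
  rw [recomp, gaps_rep_append, gaps_go b cs h]

theorem head?_go (cs b) : (go cs b).head? = b.head?.map (· + 1) := by
  match b with
  | [] => rfl
  | 0 :: b => rfl
  | (x+1) :: b => rfl

theorem chn_cons (x : ℕ) (l : List ℕ) :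
    Chn (x :: l) ↔ (∀ y ∈ l.head?, x ≤ y + 1) ∧ Chn l := List.isChain_cons

theorem chn_rep_append (q : ℕ) (r : List ℕ) :
    Chn (List.replicate q 0 ++ r) ↔ Chn r := by
  induction q with
  | zero => simp
  | succ q ih =>
    rw [List.replicate_succ, List.cons_append, chn_cons, ih]
    exact ⟨fun h => h.2, fun h => ⟨fun y _ => by omega, h⟩⟩

theorem chn_go_iff (b : List ℕ) : ∀ cs, cs.length = b.count 0 → (Chn (go cs b) ↔ Chn b) := by
  induction b with
  | nil => intro cs h; simp [Chn]
  | cons x b ih =>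
    intro cs h
    match x with
    | 0 =>
      simp only [List.count_cons_self] at h
      match cs with
      | [] => simp at h
      | c :: cs =>
        rw [go_zero, chn_cons, chn_rep_append, chn_cons (l := b),
          ih (c :: cs).tail (by simpa using h)]
        constructor
        · rintro ⟨-, h2⟩; exact ⟨fun y _ => by omega, h2⟩
        · rintro ⟨-, h2⟩; exact ⟨fun y _ => by omega, h2⟩
    | x+1 =>
      rw [List.count_cons_of_ne (by omega)] at h
      rw [go_succ, chn_cons, ih cs h, chn_cons (l := b)]
      rw [head?_go cs b]
      constructor
      · rintro ⟨h1, h2⟩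
        refine ⟨fun y hy => ?_, h2⟩
        rw [Option.mem_def] at hy
        have := h1 (y+1) (by simp [hy])
        omega
      · rintro ⟨h1, h2⟩
        refine ⟨fun y hy => ?_, h2⟩
        simp only [Option.mem_def, Option.map_eq_some_iff] at hy
        obtain ⟨a, ha, rfl⟩ := hy
        have := h1 a ha
        omega

theorem exists_first_split {x : ℕ} {l : List ℕ} (h : x ∈ l) :
    ∃ p s, l = p ++ x :: s ∧ x ∉ p := by
  induction l with
  | nil => simp at h
  | cons y l ih =>
    by_cases hxy : x = y
    · exact ⟨[], l, by simp [hxy], by simp⟩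
    · have : x ∈ l := by
        rcases List.mem_cons.mp h with h | h
        · exact absurd h hxy
        · exact h
      obtain ⟨p, s, rfl, hp⟩ := ih this
      exact ⟨y :: p, s, rfl, by simp [hp, hxy]⟩

theorem first_split_unique {x : ℕ} : ∀ {p s p' s' : List ℕ},
    p ++ x :: s = p' ++ x :: s' → x ∉ p → x ∉ p' → p = p' ∧ s = s' := by
  intro p
  induction p with
  | nil =>
    intro s p' s' h hp hp'
    match p' with
    | [] => simp_all
    | y :: p' =>
      simp only [List.nil_append, List.cons_append, List.cons.injEq] at h
      exact absurd (h.1 ▸ List.mem_cons_self (a := y) (l := p')) (by simpa [← h.1] using hp')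
  | cons y p ih =>
    intro s p' s' h hp hp'
    match p' with
    | [] =>
      simp only [List.cons_append, List.nil_append, List.cons.injEq] at h
      exact absurd (h.1 ▸ List.mem_cons_self (a := y) (l := p)) (by simpa [h.1] using hp)
    | z :: p' =>
      simp only [List.cons_append, List.cons.injEq] at h
      obtain ⟨rfl, h2⟩ := h
      have hp2 : x ∉ p := fun hh => hp (List.mem_cons_of_mem _ hh)
      have hp2' : x ∉ p' := fun hh => hp' (List.mem_cons_of_mem _ hh)
      obtain ⟨rfl, rfl⟩ := ih h2 hp2 hp2'
      exact ⟨rfl, rfl⟩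

theorem split_replicate {c k : ℕ} {X p s : List ℕ}
    (h : List.replicate c 0 ++ X = p ++ (k+1) :: s) :
    ∃ p', p = List.replicate c 0 ++ p' ∧ X = p' ++ (k+1) :: s := by
  induction c generalizing p with
  | zero => exact ⟨p, by simpa using h, by simpa using h⟩
  | succ c ih =>
    rw [List.replicate_succ, List.cons_append] at h
    match p with
    | [] => simp at h
    | a :: p₁ =>
      rw [List.cons_append] at h
      obtain ⟨ha, h2⟩ := List.cons.injEq .. ▸ h
      obtain ⟨p', hp, hX⟩ := ih h2
      exact ⟨p', by rw [List.replicate_succ, List.cons_append, ← hp, ha], hX⟩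

theorem fst_recomp {b cs : List ℕ} {c₀ : ℕ} (hfb : Fst b)
    (hlen : cs.length = b.count 0) (hc₀ : 1 ≤ c₀) (hsum : 1 ≤ cs.sum) :
    Fst (recomp c₀ cs b) := by
  intro p k s heq hnp
  rw [recomp] at heq
  obtain ⟨p', rfl, hgo⟩ := split_replicate heq
  match k with
  | 0 =>
    refine ⟨List.mem_append_left _ ?_, ?_⟩
    · rw [List.mem_replicate]; exact ⟨by omega, rfl⟩
    · -- find first zero of b
      match cs, hlen with
      | c :: cs', hlen =>
        have hb0 : 0 ∈ b := by
          rw [← List.count_pos_iff]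
          rw [← hlen]
          simp
        obtain ⟨u, v, rfl, hu⟩ := exists_first_split hb0
        have hcount : u.count 0 = 0 := List.count_eq_zero.mpr hu
        have hsplit : go (c :: cs') (u ++ 0 :: v) =
            go (c :: cs') u ++ 1 :: (List.replicate c 0 ++ go cs' v) := by
          rw [go_append, hcount, List.drop_zero, go_zero]
          rfl
        have h1np' : (1 : ℕ) ∉ p' := fun hh => hnp (List.mem_append_right _ hh)
        have h1ngo : (1 : ℕ) ∉ go (c :: cs') u := fun hh => hu ((mem_go_succ u _).mp hh)
        obtain ⟨hpeq, hseq⟩ := first_split_unique (x := 1) (hgo.symm.trans hsplit) h1np' h1ngo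
        subst hseq
        rcases Nat.eq_zero_or_pos c with rfl | hc
        · have hlv : cs'.length = v.count 0 := by
            rw [List.count_append, List.count_cons_self, hcount] at hlen
            simpa using hlen
          have : cs'.sum ≥ 1 := by simpa using hsum
          refine List.mem_append_right _ ?_
          exact (zero_mem_go v cs' hlv).mpr (by omega)
        · exact List.mem_append_left _ (by rw [List.mem_replicate]; exact ⟨by omega, rfl⟩)
  | j+1 =>
    have hmem : (j+1) ∈ b := by
      have : (j+2) ∈ go cs b := by rw [hgo]; exact List.mem_append_right _ (List.mem_cons_self)
      exact (mem_go_succ b cs).mp this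
    obtain ⟨u, v, rfl, hu⟩ := exists_first_split hmem
    obtain ⟨hju, hjv⟩ := hfb u j v rfl hu
    have hsplit : go cs (u ++ (j+1) :: v) =
        go cs u ++ (j+2) :: go (cs.drop (u.count 0)) v := by
      rw [go_append, go_succ]
    have hnp' : (j+2) ∉ p' := fun hh => hnp (List.mem_append_right _ hh)
    have hngo : (j+2) ∉ go cs u := fun hh => hu ((mem_go_succ u cs).mp hh)
    obtain ⟨hpeq, hseq⟩ := first_split_unique (x := j+2) (hgo.symm.trans hsplit) hnp' hngo
    subst hseq
    constructor
    · refine List.mem_append_right _ ?_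
      rw [hpeq]
      exact (mem_go_succ u cs).mpr hju
    · exact (mem_go_succ v _).mpr hjv

theorem fst_back {b cs : List ℕ} {c₀ : ℕ}
    (hf : Fst (recomp c₀ cs b)) : Fst b := by
  intro u k v hb hnu
  have hsplit : recomp c₀ cs b =
      (List.replicate c₀ 0 ++ go cs u) ++ ((k+1)+1) :: go (cs.drop (u.count 0)) v := by
    rw [hb, recomp, go_append, go_succ, List.append_assoc]
  have hnp : (k+2) ∉ List.replicate c₀ 0 ++ go cs u := by
    intro hh
    rcases List.mem_append.mp hh with hh | hh
    · exact absurd (List.eq_of_mem_replicate hh) (by omega)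
    · exact hnu ((mem_go_succ u cs).mp hh)
  obtain ⟨h1, h2⟩ := hf _ (k+1) _ hsplit hnp
  constructor
  · rcases List.mem_append.mp h1 with hh | hh
    · exact absurd (List.eq_of_mem_replicate hh) (by omega)
    · exact (mem_go_succ u cs).mp hh
  · exact (mem_go_succ v _).mp h2

theorem fst_head_zero {l : List ℕ} (hf : Fst l) (hne : l ≠ []) : ∃ t, l = 0 :: t := by
  match l with
  | [] => exact absurd rfl hne
  | 0 :: t => exact ⟨t, rfl⟩
  | (x+1) :: t =>
    have := hf [] x t (by simp) (by simp)
    simp at this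

theorem one_mem {l : List ℕ} (hf : Fst l) : ∀ x, x ∈ l → x ≠ 0 → 1 ∈ l := by
  intro x
  induction x using Nat.strong_induction_on with
  | _ x ih =>
    intro hx hx0
    match x, hx0 with
    | 1, _ => exact hx
    | k+2, _ =>
      obtain ⟨p, s, rfl, hp⟩ := exists_first_split hx
      obtain ⟨h1, -⟩ := hf p (k+1) s rfl hp
      exact ih (k+1) (by omega) (List.mem_append_left _ h1) (by omega)

theorem pos_ge {l : List ℕ} (hf : Fst l) :
    ∀ k, k ∈ l → ∃ p s, l = p ++ k :: s ∧ k ∉ p ∧ k ≤ p.length := by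
  intro k
  induction k using Nat.strong_induction_on with
  | _ k ih =>
    intro hk
    match k with
    | 0 =>
      obtain ⟨p, s, h, hp⟩ := exists_first_split hk
      exact ⟨p, s, h, hp, by omega⟩
    | k+1 =>
      obtain ⟨p, s, rfl, hp⟩ := exists_first_split hk
      obtain ⟨h1, -⟩ := hf p k s rfl hp
      obtain ⟨p₁, s₁, he₁, hnp₁, hb₁⟩ := ih k (by omega) (List.mem_append_left _ h1)
      have hlt : p₁.length < p.length := by
        by_contra hle
        push_neg at hle
        have hpre : p <+: p₁ := by
          refine List.prefix_of_prefix_length_le ⟨(k+1)::s, rfl⟩ ⟨k::s₁, he₁.symm⟩ hle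
        exact hnp₁ (hpre.subset h1)
      exact ⟨p, s, rfl, hp, by omega⟩

theorem mem_lt_length {l : List ℕ} (hf : Fst l) {x : ℕ} (hx : x ∈ l) : x < l.length := by
  obtain ⟨p, s, rfl, -, hb⟩ := pos_ge hf x hx
  simp only [List.length_append, List.length_cons]
  omega

theorem count_zero_strip (l : List ℕ) : (strip l).count 0 = l.count 1 := by
  induction l with
  | nil => rfl
  | cons x l ih =>
    match x with
    | 0 => simpa using ih
    | 1 => simpa [List.count_cons] using ih
    | x+2 =>
      rw [strip_cons_succ, List.count_cons, List.count_cons, ih]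
      simp

theorem length_strip (l : List ℕ) : (strip l).length = l.length - l.count 0 := by
  induction l with
  | nil => rfl
  | cons x l ih =>
    have hc : l.count 0 ≤ l.length := List.count_le_length (a := 0) (l := l)
    match x with
    | 0 =>
      rw [strip_cons_zero, ih, List.count_cons_self, List.length_cons]
      omega
    | x+1 =>
      rw [strip_cons_succ, List.length_cons, ih, List.count_cons_of_ne (by omega), List.length_cons]
      omega

theorem count01_le_length (l : List ℕ) : l.count 0 + l.count 1 ≤ l.length := by
  induction l with
  | nil => simp
  | cons x l ih =>
    rw [List.count_cons, List.count_cons, List.length_cons]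
    have : ¬ ((x = 0) ∧ (x = 1)) := by omega
    by_cases h0 : x = 0 <;> by_cases h1 : x = 1 <;> simp [h0, h1] <;> omega

theorem takeWhile_zero_eq_replicate (l : List ℕ) :
    l.takeWhile (· == 0) = List.replicate (l.takeWhile (· == 0)).length 0 := by
  rw [List.eq_replicate_length]
  intro b hb
  have := List.mem_takeWhile_imp hb
  simpa using this

theorem dropWhile_zero_ne_cons (l : List ℕ) : ∀ t, l.dropWhile (· == 0) ≠ 0 :: t := by
  induction l with
  | nil => simp
  | cons x l ih =>
    intro t
    by_cases hx : x = 0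
    · rw [hx, List.dropWhile_cons_of_pos (by simp)]
      exact ih t
    · rw [List.dropWhile_cons_of_neg (by simpa using hx)]
      intro h
      exact hx (List.cons.injEq .. ▸ h).1

theorem strip_takeWhile_zero (l : List ℕ) : strip (l.takeWhile (· == 0)) = [] := by
  rw [takeWhile_zero_eq_replicate, strip_replicate_zero]

theorem recon (r : List ℕ) (hc : Chn r) (hr : ∀ t, r ≠ 0 :: t) :
    go (gaps r) (strip r) = r := by
  induction r using gaps.induct with
  | case1 => rfl
  | case2 l ih => exact absurd rfl (hr l)
  | case3 l ih =>
    have hl : l = l.takeWhile (· == 0) ++ l.dropWhile (· == 0) :=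
      (List.takeWhile_append_dropWhile).symm
    have hchn : Chn (l.dropWhile (· == 0)) :=
      List.IsChain.suffix hc ((List.dropWhile_suffix _).trans (List.suffix_cons 1 l))
    have ihr := ih hchn (dropWhile_zero_ne_cons l)
    rw [gaps_cons_one]
    have hstrip : strip (1 :: l) = 0 :: strip (l.dropWhile (· == 0)) := by
      rw [strip_cons_succ]
      conv_lhs => rw [hl]
      rw [strip_append, strip_takeWhile_zero, List.nil_append]
    rw [hstrip, go_zero]
    simp only [List.headI, List.tail]
    rw [ihr]
    conv_rhs => rw [hl]
    rw [takeWhile_zero_eq_replicate]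
    simp
  | case4 x l ih =>
    have hl : ∀ t, l ≠ 0 :: t := by
      intro t ht
      subst ht
      have := (List.isChain_cons_cons.mp hc).1
      omega
    have hchn : Chn l := (List.isChain_cons.mp hc).2
    rw [gaps_cons_succ, strip_cons_succ, go_succ, ih hchn hl]

theorem recon_full (l : List ℕ) (hc : Chn l) :
    recomp (lead l) (gaps l) (strip l) = l := by
  have hl : l = l.takeWhile (· == 0) ++ l.dropWhile (· == 0) :=
    (List.takeWhile_append_dropWhile).symm
  have hrep := takeWhile_zero_eq_replicate l
  have hchn : Chn (l.dropWhile (· == 0)) := List.IsChain.suffix hc (List.dropWhile_suffix _)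
  rw [recomp, lead]
  conv_rhs => rw [hl]
  rw [← hrep]
  congr 1
  · have hg : gaps l = gaps (l.dropWhile (· == 0)) := by
      conv_lhs => rw [hl, hrep]
      rw [gaps_rep_append]
    have hs : strip l = strip (l.dropWhile (· == 0)) := by
      conv_lhs => rw [hl]
      rw [strip_append, strip_takeWhile_zero, List.nil_append]
    rw [hg, hs, recon _ hchn (dropWhile_zero_ne_cons l)]

theorem gaps_length (r : List ℕ) : (gaps r).length = r.count 1 := by
  induction r using gaps.induct with
  | case1 => simp
  | case2 l ih => rw [gaps_cons_zero, ih, List.count_cons_of_ne (by omega)]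
  | case3 l ih =>
    rw [gaps_cons_one, List.length_cons, ih, List.count_cons_self]
    congr 1
    conv_rhs => rw [← List.takeWhile_append_dropWhile (p := (· == 0)) (l := l)]
    rw [List.count_append, takeWhile_zero_eq_replicate, List.count_replicate]
    simp
  | case4 x l ih => rw [gaps_cons_succ, ih, List.count_cons_of_ne (by omega)]

def Tset (n m : ℕ) : Set (List ℕ) := {l | l.length = n ∧ CL l ∧ l.count 0 = m}

def Sset (n m j : ℕ) : Set (List ℕ) :=
  {l | l.length = n ∧ CL l ∧ l.count 0 = m ∧ l.count 1 = j}

def Cset (m j : ℕ) : Set (ℕ × List ℕ) :=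
  {c | c.2.length = j ∧ 1 ≤ c.1 ∧ 1 ≤ c.2.sum ∧ c.1 + c.2.sum = m}

noncomputable def Psi (x : (ℕ × List ℕ) × List ℕ) : List ℕ := recomp x.1.1 x.1.2 x.2

theorem psi_mapsTo {N m j : ℕ} :
    Set.MapsTo Psi (Cset m j ×ˢ Tset N j) (Sset (N + m) m j) := by
  rintro ⟨⟨c₀, cs⟩, b⟩ ⟨⟨hlen, hc₀, hsum, hms⟩, hbN, ⟨hbc, hbf⟩, hbcount⟩
  replace hlen : cs.length = j := hlen
  replace hc₀ : 1 ≤ c₀ := hc₀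
  replace hsum : 1 ≤ cs.sum := hsum
  replace hms : c₀ + cs.sum = m := hms
  replace hbN : b.length = N := hbN
  replace hbcount : b.count 0 = j := hbcount
  have hcb : cs.length = b.count 0 := by rw [hlen, hbcount]
  have hPsi : Psi ((c₀, cs), b) = recomp c₀ cs b := rfl
  refine ⟨?_, ⟨?_, ?_⟩, ?_, ?_⟩
  · rw [hPsi, recomp, List.length_append, List.length_replicate, length_go b cs hcb, hbN]
    omega
  · rw [hPsi, recomp, chn_rep_append, chn_go_iff b cs hcb]
    exact hbc
  · exact fst_recomp hbf hcb hc₀ hsum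
  · rw [hPsi, recomp, List.count_append, List.count_replicate, count_zero_go b cs hcb]
    simpa using hms
  · rw [hPsi, recomp, List.count_append, List.count_replicate, count_one_go b cs,
      hbcount]
    simp

theorem psi_injOn {N m j : ℕ} :
    Set.InjOn Psi (Cset m j ×ˢ Tset N j) := by
  rintro ⟨⟨c₀, cs⟩, b⟩ ⟨⟨hlen, -, -, -⟩, -, -, hbcount⟩
    ⟨⟨c₀', cs'⟩, b'⟩ ⟨⟨hlen', -, -, -⟩, -, -, hbcount'⟩ heq
  have hcb : cs.length = b.count 0 := by rw [hlen, hbcount]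
  have hcb' : cs'.length = b'.count 0 := by rw [hlen', hbcount']
  have h1 : c₀ = c₀' := by
    have := congrArg lead heq
    rwa [Psi, Psi, lead_recomp, lead_recomp] at this
  have h2 : b = b' := by
    have := congrArg strip heq
    rwa [Psi, Psi, strip_recomp, strip_recomp] at this
  have h3 : cs = cs' := by
    have := congrArg gaps heq
    rwa [Psi, Psi, gaps_recomp _ _ _ hcb, gaps_recomp _ _ _ hcb'] at this
  simp [h1, h2, h3]

theorem psi_surjOn {N m j : ℕ} (hj : 1 ≤ j) :
    Set.SurjOn Psi (Cset m j ×ˢ Tset N j) (Sset (N + m) m j) := by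
  rintro l ⟨hlen, ⟨hc, hf⟩, hc0, hc1⟩
  have hrecon := recon_full l hc
  have hgl : (gaps l).length = (strip l).count 0 := by
    rw [gaps_length, count_zero_strip]
  have hcount0 : l.count 0 = lead l + (gaps l).sum := by
    conv_lhs => rw [← hrecon]
    rw [recomp, List.count_append, List.count_replicate, count_zero_go _ _ hgl]
    simp
  -- lead l ≥ 1
  have hlne : l ≠ [] := by
    intro h
    rw [h] at hc1
    simp at hc1
    omega
  obtain ⟨t, ht⟩ := fst_head_zero hf hlne
  have hlead : 1 ≤ lead l := by
    rw [ht, lead, List.takeWhile_cons_of_pos (by simp), List.length_cons]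
    omega
  -- (gaps l).sum ≥ 1
  have h1mem : (1 : ℕ) ∈ l := by
    rw [← List.count_pos_iff, hc1]; omega
  obtain ⟨p, sfx, hsplit, hp⟩ := exists_first_split h1mem
  obtain ⟨h0p, h0s⟩ := hf p 0 sfx hsplit hp
  have hsum : 1 ≤ (gaps l).sum := by
    -- count 0 p ≥ lead l
    have htw : l.takeWhile (· == 0) = List.replicate (lead l) 0 := takeWhile_zero_eq_replicate l
    have hcp : lead l ≤ p.count 0 := by
      rcases le_or_gt (lead l) p.length with hle | hlt
      · have hpre : l.takeWhile (· == 0) <+: p :=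
          List.prefix_of_prefix_length_le (List.takeWhile_prefix _)
            ⟨1 :: sfx, hsplit.symm⟩ (by rw [htw, List.length_replicate]; exact hle)
        calc lead l = (l.takeWhile (· == 0)).count 0 := by
              rw [htw, List.count_replicate]; simp
          _ ≤ p.count 0 := hpre.sublist.count_le 0
      · exfalso
        have hpre : p <+: l.takeWhile (· == 0) :=
          List.prefix_of_prefix_length_le ⟨1 :: sfx, hsplit.symm⟩ (List.takeWhile_prefix _)
            (by rw [htw, List.length_replicate]; omega)
        obtain ⟨w, hw⟩ := hpre
        have hwne : w ≠ [] := by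
          intro h
          rw [h, List.append_nil] at hw
          rw [← hw] at htw
          have := congrArg List.length htw
          rw [List.length_replicate] at this
          omega
        have hlw : l = p ++ (w ++ l.dropWhile (· == 0)) := by
          conv_lhs => rw [← List.takeWhile_append_dropWhile (p := (· == 0)) (l := l)]
          rw [← hw, List.append_assoc]
        have hlw2 : p ++ 1 :: sfx = p ++ (w ++ l.dropWhile (· == 0)) := by
          rw [← hsplit]; exact hlw
        have hcancel : (1 : ℕ) :: sfx = w ++ l.dropWhile (· == 0) :=
          List.append_cancel_left hlw2
        match w, hwne with
        | w₀ :: w', _ =>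
          rw [List.cons_append] at hcancel
          have hw₀ : w₀ = 1 := ((List.cons.injEq .. ).mp hcancel.symm).1
          have : w₀ ∈ l.takeWhile (· == 0) := by
            rw [← hw]
            exact List.mem_append_right _ (List.mem_cons_self)
          have := List.mem_takeWhile_imp this
          simp [hw₀] at this
      -- count 0 s ≥ 1
    have hcs : 1 ≤ sfx.count 0 := by
      rw [← List.count_pos_iff] at h0s
      omega
    have : l.count 0 = p.count 0 + sfx.count 0 := by
      rw [hsplit, List.count_append, List.count_cons_of_ne (by omega)]
    omega
  refine ⟨⟨(lead l, gaps l), strip l⟩, ⟨⟨?_, hlead, hsum, ?_⟩, ?_, ⟨?_, ?_⟩, ?_⟩, hrecon⟩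
  · show (gaps l).length = j
    rw [gaps_length, hc1]
  · show lead l + (gaps l).sum = m
    omega
  · -- length of strip
    show (strip l).length = N
    rw [length_strip, hlen, hc0]
    omega
  · -- Chn (strip l)
    have hcr : Chn (recomp (lead l) (gaps l) (strip l)) := by rw [hrecon]; exact hc
    rwa [recomp, chn_rep_append, chn_go_iff _ _ hgl] at hcr
  · -- Fst (strip l)
    have hfr : Fst (recomp (lead l) (gaps l) (strip l)) := by rw [hrecon]; exact hf
    exact fst_back hfr
  · show (strip l).count 0 = j
    rw [count_zero_strip, hc1]

theorem finite_list (k M : ℕ) : {l : List ℕ | l.length = k ∧ ∀ x ∈ l, x < M}.Finite := by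
  induction k with
  | zero =>
    refine (Set.finite_singleton ([] : List ℕ)).subset ?_
    rintro l ⟨hl, -⟩
    simp [List.length_eq_zero_iff.mp hl]
  | succ k ih =>
    refine (Set.Finite.image2 (fun x t => x :: t) (Set.finite_Iio M) ih).subset ?_
    rintro l ⟨hl, hb⟩
    match l with
    | x :: t =>
      refine Set.mem_image2_of_mem (hb x (by simp)) ⟨by simpa using hl, fun y hy => hb y (by simp [hy])⟩

theorem finite_T (n m : ℕ) : (Tset n m).Finite := by
  refine (finite_list n n).subset ?_
  rintro l ⟨hlen, ⟨-, hf⟩, -⟩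
  exact ⟨hlen, fun x hx => hlen ▸ mem_lt_length hf hx⟩

theorem finite_S (n m j : ℕ) : (Sset n m j).Finite := by
  refine (finite_list n n).subset ?_
  rintro l ⟨hlen, ⟨-, hf⟩, -, -⟩
  exact ⟨hlen, fun x hx => hlen ▸ mem_lt_length hf hx⟩

theorem finite_sum_le (j M : ℕ) : {cs : List ℕ | cs.length = j ∧ cs.sum ≤ M}.Finite := by
  refine (finite_list j (M+1)).subset ?_
  rintro cs ⟨h1, h2⟩
  refine ⟨h1, fun x hx => ?_⟩
  have := List.le_sum_of_mem hx
  omega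

theorem finite_C (m j : ℕ) : (Cset m j).Finite := by
  refine ((Set.finite_Iio (m+1)).prod (finite_list j (m+1))).subset ?_
  rintro ⟨c₀, cs⟩ ⟨h1, h2, h3, h4⟩
  replace h1 : cs.length = j := h1
  replace h3 : 1 ≤ cs.sum := h3
  replace h4 : c₀ + cs.sum = m := h4
  refine ⟨(show c₀ < m + 1 by omega), h1, fun x hx => ?_⟩
  replace hx : x ∈ cs := hx
  have := List.le_sum_of_mem hx
  omega

theorem ncard_sum_le (j M : ℕ) :
    {cs : List ℕ | cs.length = j ∧ cs.sum ≤ M}.ncard = (M + j).choose j := by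
  induction j generalizing M with
  | zero =>
    have : {cs : List ℕ | cs.length = 0 ∧ cs.sum ≤ M} = {([] : List ℕ)} := by
      ext l
      simp only [Set.mem_setOf_eq, Set.mem_singleton_iff, List.length_eq_zero_iff]
      constructor
      · rintro ⟨rfl, -⟩; rfl
      · rintro rfl; simp
    rw [this, Set.ncard_singleton, Nat.choose_zero_right]
  | succ j ih =>
    have hA := finite_sum_le (j+1) M
    rw [Set.ncard_eq_toFinset_card _ hA]
    have hEq : hA.toFinset = (Finset.range (M+1)).biUnion
        (fun x => ((finite_sum_le j (M-x)).toFinset).image (fun t => x :: t)) := by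
      ext l
      simp only [Set.Finite.mem_toFinset, Set.mem_setOf_eq, Finset.mem_biUnion,
        Finset.mem_range, Finset.mem_image]
      constructor
      · rintro ⟨hlen, hsum⟩
        match l with
        | x :: t =>
          rw [List.sum_cons] at hsum
          exact ⟨x, by omega, t, ⟨by simpa using hlen, by omega⟩, rfl⟩
      · rintro ⟨x, hx, t, ⟨hlen, hsum⟩, rfl⟩
        rw [List.sum_cons]
        exact ⟨by simpa using hlen, by omega⟩
    rw [hEq, Finset.card_biUnion]
    · have hcard : ∀ x ∈ Finset.range (M+1),
          (((finite_sum_le j (M-x)).toFinset).image (fun t => x :: t)).card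
            = (M - x + j).choose j := by
        intro x hx
        rw [Finset.card_image_of_injective _ (fun a b h => ((List.cons.injEq _ _ _ _).mp h).2),
          ← Set.ncard_eq_toFinset_card _ (finite_sum_le j (M-x)), ih (M-x)]
      rw [Finset.sum_congr rfl hcard]
      have hrefl := Finset.sum_range_reflect (fun x => (x + j).choose j) (M+1)
      have hstep1 : ∑ x ∈ Finset.range (M+1), (M - x + j).choose j
          = ∑ x ∈ Finset.range (M+1), (x + j).choose j := by
        rw [← hrefl]
        refine Finset.sum_congr rfl (fun x hx => ?_)
        congr 2 <;> omega
      rw [hstep1]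
      have hstep2 : ∑ x ∈ Finset.range (M+1), (x + j).choose j
          = ∑ i ∈ Finset.Icc j (M+j), i.choose j := by
        rw [← Finset.Ico_add_one_right_eq_Icc, Finset.sum_Ico_eq_sum_range]
        have hM : M + j + 1 - j = M + 1 := by omega
        rw [hM]
        exact Finset.sum_congr rfl (fun x hx => by rw [Nat.add_comm])
      rw [hstep2, Nat.sum_Icc_choose]
      have hfin : M + j + 1 = M + (j + 1) := by omega
      rw [hfin]
    · intro x hx y hy hxy
      rw [Function.onFun, Finset.disjoint_left]
      rintro a ha ha'
      simp only [Finset.mem_image] at ha ha'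
      obtain ⟨t, -, rfl⟩ := ha
      obtain ⟨t', -, he⟩ := ha'
      exact hxy (((List.cons.injEq _ _ _ _).mp he).1.symm)

theorem sum_zero_eq_replicate {cs : List ℕ} (h : cs.sum = 0) : cs = List.replicate cs.length 0 := by
  rw [List.eq_replicate_length]
  intro b hb
  have := List.le_sum_of_mem hb
  omega

theorem ncard_Cset (m j : ℕ) (hm : 1 ≤ m) :
    (Cset m j).ncard = (j + m - 1).choose j - 1 := by
  have himg : Cset m j = (fun cs => (m - cs.sum, cs)) ''
      {cs : List ℕ | cs.length = j ∧ 1 ≤ cs.sum ∧ cs.sum ≤ m - 1} := by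
    ext c
    simp only [Cset, Set.mem_setOf_eq, Set.mem_image, Prod.ext_iff]
    constructor
    · rintro ⟨h1, h2, h3, h4⟩
      exact ⟨c.2, ⟨h1, h3, by omega⟩, by omega, rfl⟩
    · rintro ⟨cs, ⟨h1, h2, h3⟩, hfst, hsnd⟩
      subst hsnd
      refine ⟨h1, by omega, h2, by omega⟩
  rw [himg, Set.ncard_image_of_injective _ (fun a b h => ((Prod.mk.injEq _ _ _ _).mp h).2)]
  have hdiff : {cs : List ℕ | cs.length = j ∧ 1 ≤ cs.sum ∧ cs.sum ≤ m - 1}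
      = {cs : List ℕ | cs.length = j ∧ cs.sum ≤ m - 1} \ {List.replicate j 0} := by
    ext cs
    simp only [Set.mem_setOf_eq, Set.mem_diff, Set.mem_singleton_iff]
    constructor
    · rintro ⟨h1, h2, h3⟩
      refine ⟨⟨h1, h3⟩, fun hc => ?_⟩
      rw [hc] at h2
      simp at h2
    · rintro ⟨⟨h1, h2⟩, h3⟩
      refine ⟨h1, ?_, h2⟩
      by_contra hs
      push_neg at hs
      have : cs.sum = 0 := by omega
      exact h3 (h1 ▸ sum_zero_eq_replicate this)
  rw [hdiff, Set.ncard_diff (by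
      rintro x hx
      rw [Set.mem_singleton_iff] at hx
      subst hx
      refine ⟨by simp, by simp⟩) (Set.finite_singleton _),
    ncard_sum_le, Set.ncard_singleton]
  congr 2
  omega

theorem ncard_prod {α β : Type*} (A : Set α) (B : Set β) (hA : A.Finite) (hB : B.Finite) :
    (A ×ˢ B).ncard = A.ncard * B.ncard := by
  rw [Set.ncard_eq_toFinset_card _ (hA.prod hB), ← Set.Finite.toFinset_prod hA hB,
    Finset.card_product, ← Set.ncard_eq_toFinset_card _ hA, ← Set.ncard_eq_toFinset_card _ hB]

theorem key (N m j : ℕ) (hm : 1 ≤ m) (hj : 1 ≤ j) :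
    (Sset (N + m) m j).ncard = ((j + m - 1).choose j - 1) * (Tset N j).ncard := by
  have himg : Sset (N + m) m j = Psi '' (Cset m j ×ˢ Tset N j) :=
    (Set.BijOn.image_eq ⟨psi_mapsTo, psi_injOn, psi_surjOn hj⟩).symm
  rw [himg, Set.ncard_image_of_injOn psi_injOn,
    ncard_prod _ _ (finite_C m j) (finite_T N j), ncard_Cset m j hm]

theorem list_main (n m : ℕ) (hm1 : 1 ≤ m) (hmn : m ≤ n - 1) (h2 : 2 ≤ n) :
    (Tset n m).ncard
      = ∑ j ∈ Finset.Icc 1 (n - m), ((j + m - 1).choose j - 1) * (Tset (n - m) j).ncard := by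
  classical
  have hfin := finite_T n m
  have hmaps : ∀ l ∈ hfin.toFinset, l.count 1 ∈ Finset.Icc 1 (n - m) := by
    intro l hl
    rw [Set.Finite.mem_toFinset] at hl
    obtain ⟨hlen, ⟨hchn, hfst⟩, hcnt⟩ := hl
    rw [Finset.mem_Icc]
    constructor
    · have hx : ∃ x ∈ l, x ≠ 0 := by
        by_contra hno
        push_neg at hno
        have hrep : l = List.replicate l.length 0 :=
          List.eq_replicate_length.mpr (fun b hb => hno b hb)
        have := congrArg (List.count 0) hrep
        rw [List.count_replicate] at this
        simp at this
        omega
      obtain ⟨x, hxl, hx0⟩ := hx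
      have h1l := one_mem hfst x hxl hx0
      rw [← List.count_pos_iff] at h1l
      omega
    · have := count01_le_length l
      omega
  rw [Set.ncard_eq_toFinset_card _ hfin, Finset.card_eq_sum_card_fiberwise hmaps]
  refine Finset.sum_congr rfl (fun j hj => ?_)
  simp only [Finset.mem_Icc] at hj
  have hSeq : hfin.toFinset.filter (fun l => l.count 1 = j) = (finite_S n m j).toFinset := by
    ext l
    simp only [Finset.mem_filter, Set.Finite.mem_toFinset]
    constructor
    · rintro ⟨⟨h1, h2', h3⟩, h4⟩; exact ⟨h1, h2', h3, h4⟩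
    · rintro ⟨h1, h2', h3, h4⟩; exact ⟨⟨h1, h2', h3⟩, h4⟩
  rw [hSeq, ← Set.ncard_eq_toFinset_card _ (finite_S n m j)]
  have hkey := key (n - m) m j hm1 hj.1
  rw [show n - m + m = n from by omega] at hkey
  rw [hkey]

theorem mem_take_ofFn {n : ℕ} {a : Fin n → ℕ} {x : ℕ} {t : ℕ} (ht : t ≤ n) :
    x ∈ (List.ofFn a).take t ↔ ∃ j : Fin n, j.val < t ∧ a j = x := by
  rw [List.mem_iff_getElem]
  constructor
  · rintro ⟨jj, hjj, hget⟩
    rw [List.length_take, List.length_ofFn] at hjj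
    refine ⟨⟨jj, by omega⟩, by simp only []; omega, ?_⟩
    rw [← hget, List.getElem_take]
    simp [List.getElem_ofFn]
  · rintro ⟨j, hjt, hx⟩
    refine ⟨j.val, by rw [List.length_take, List.length_ofFn]; omega, ?_⟩
    rw [List.getElem_take]
    simp [List.getElem_ofFn, hx]

theorem mem_drop_ofFn {n : ℕ} {a : Fin n → ℕ} {x : ℕ} {t : ℕ} :
    x ∈ (List.ofFn a).drop t ↔ ∃ j : Fin n, t ≤ j.val ∧ a j = x := by
  rw [List.mem_iff_getElem]
  constructor
  · rintro ⟨jj, hjj, hget⟩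
    rw [List.length_drop, List.length_ofFn] at hjj
    refine ⟨⟨t + jj, by omega⟩, by simp only []; omega, ?_⟩
    rw [← hget, List.getElem_drop]
    simp [List.getElem_ofFn]
  · rintro ⟨j, hjt, hx⟩
    refine ⟨j.val - t, by rw [List.length_drop, List.length_ofFn]; omega, ?_⟩
    rw [List.getElem_drop]
    have : t + (j.val - t) = j.val := by omega
    simp only [List.getElem_ofFn]
    rw [← hx]
    congr 1
    exact Fin.ext (by simp [this])

theorem isCW_iff {n : ℕ} (a : Fin n → ℕ) : IsCatalanWord a ↔ CL (List.ofFn a) := by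
  constructor
  · rintro ⟨h1, h2⟩
    constructor
    · rw [Chn, List.Chain', List.isChain_iff_getElem]
      intro i hi
      rw [List.length_ofFn] at hi
      simp only [List.getElem_ofFn]
      have := h1 i (by omega)
      convert this using 2 <;> exact Fin.ext (by simp)
    · intro p k s hsplit hnp
      have hlen : p.length + 1 + s.length = n := by
        have := congrArg List.length hsplit
        rw [List.length_ofFn, List.length_append, List.length_cons] at this
        omega
      have hpn : p.length < n := by omega
      set i : Fin n := ⟨p.length, hpn⟩ with hi
      have hai : a i = k + 1 := by
        have h1' : ((List.ofFn a))[p.length]'(by rw [List.length_ofFn]; omega)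
            = (p ++ (k+1) :: s)[p.length]'(by
              rw [List.length_append, List.length_cons]; omega) := by
          congr 1
        rw [List.getElem_append_right (le_refl p.length)] at h1'
        simp only [List.getElem_ofFn] at h1'
        simpa using h1'
      have htake : (List.ofFn a).take p.length = p := by
        rw [hsplit, List.take_left]
      have hdrop : (List.ofFn a).drop (p.length + 1) = s := by
        rw [hsplit]
        have hpp : p ++ (k+1) :: s = (p ++ [k+1]) ++ s := by simp
        have hl : p.length + 1 = (p ++ [k+1]).length := by simp
        rw [hpp, hl, List.drop_left]
      have hmin : ∀ j : Fin n, a j = a i → i ≤ j := by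
        intro j haj
        by_contra hji
        push_neg at hji
        have hjp : j.val < p.length := hji
        have hm : (k+1) ∈ (List.ofFn a).take p.length := by
          rw [mem_take_ofFn (by omega)]
          exact ⟨j, hjp, by rw [haj, hai]⟩
        rw [htake] at hm
        exact hnp hm
      obtain ⟨⟨i₁, hi₁, hai₁⟩, ⟨i₂, hi₂, hai₂⟩⟩ := h2 i (by omega) hmin
      constructor
      · have hm : k ∈ (List.ofFn a).take p.length := by
          rw [mem_take_ofFn (by omega)]
          exact ⟨i₁, hi₁, by omega⟩
        rwa [htake] at hm
      · have hm : k ∈ (List.ofFn a).drop (p.length + 1) := by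
          rw [mem_drop_ofFn]
          refine ⟨i₂, ?_, by omega⟩
          have : p.length < i₂.val := hi₂
          omega
        rwa [hdrop] at hm
  · rintro ⟨h1, h2⟩
    constructor
    · intro i hi
      rw [Chn, List.Chain', List.isChain_iff_getElem] at h1
      have := h1 i (by rw [List.length_ofFn]; omega)
      simp only [List.getElem_ofFn] at this
      convert this using 2 <;> exact Fin.ext (by simp)
    · intro i hpos hmin
      obtain ⟨k, hk⟩ : ∃ k, a i = k + 1 := ⟨a i - 1, by omega⟩
      have hsplit : List.ofFn a
          = (List.ofFn a).take i.val ++ (k+1) :: (List.ofFn a).drop (i.val + 1) := by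
        conv_lhs => rw [← List.take_append_drop i.val (List.ofFn a)]
        congr 1
        rw [List.drop_eq_getElem_cons (by rw [List.length_ofFn]; omega)]
        congr 1
        rw [List.getElem_ofFn, ← hk]
      have hnp : (k+1) ∉ (List.ofFn a).take i.val := by
        intro hmem
        rw [mem_take_ofFn (by omega)] at hmem
        obtain ⟨j, hjlt, haj⟩ := hmem
        have := hmin j (by omega)
        exact absurd this (by rw [Fin.le_def]; omega)
      obtain ⟨hkp, hks⟩ := h2 _ k _ hsplit hnp
      constructor
      · rw [mem_take_ofFn (by omega)] at hkp
        obtain ⟨j, hjlt, haj⟩ := hkp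
        exact ⟨j, by rw [Fin.lt_def]; omega, by omega⟩
      · rw [mem_drop_ofFn] at hks
        obtain ⟨j, hjge, haj⟩ := hks
        exact ⟨j, by rw [Fin.lt_def]; omega, by omega⟩

theorem count_ofFn {n : ℕ} (a : Fin n → ℕ) (c : ℕ) :
    (List.ofFn a).count c = ∑ i : Fin n, if a i = c then 1 else 0 := by
  induction n with
  | zero => simp
  | succ n ih =>
    rw [List.ofFn_succ, List.count_cons, ih (fun i => a i.succ), Fin.sum_univ_succ]
    simp only [beq_iff_eq]
    by_cases h : a 0 = c <;> simp [h, eq_comm, Nat.add_comm]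

theorem countEq_eq {n : ℕ} (a : Fin n → ℕ) (c : ℕ) :
    countEq a c = (List.ofFn a).count c := by
  classical
  have hfin : ({i : Fin n | a i = c}).Finite := Set.toFinite _
  rw [countEq, Set.ncard_eq_toFinset_card _ hfin, count_ofFn]
  rw [show hfin.toFinset = Finset.univ.filter (fun i => a i = c) from by ext i; simp]
  rw [Finset.card_filter]

theorem aZ_eq (n m : ℕ) : aZ n m = (Tset n m).ncard := by
  have himg : Tset n m = List.ofFn '' {a : Fin n → ℕ | IsCatalanWord a ∧ countEq a 0 = m} := by
    ext l
    constructor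
    · rintro ⟨hlen, hcl, hcnt⟩
      subst hlen
      refine ⟨l.get, ⟨?_, ?_⟩, List.ofFn_get l⟩
      · rw [isCW_iff, List.ofFn_get]; exact hcl
      · rw [countEq_eq, List.ofFn_get]; exact hcnt
    · rintro ⟨a, ⟨hcw, hcnt⟩, rfl⟩
      exact ⟨List.length_ofFn (f := a), (isCW_iff a).mp hcw, by rw [← countEq_eq]; exact hcnt⟩
  rw [aZ, himg, Set.ncard_image_of_injective _ List.ofFn_injective]

end AZ

/-- Recurrence for the numbers `a(n,m)`, together with `a(n,n) = 1` for `n ≥ 1`. -/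
theorem aZ_recurrence :
    (∀ n m : ℕ, 2 ≤ n → 1 ≤ m → m ≤ n - 1 →
      aZ n m = ∑ j ∈ Finset.Icc 1 (n - m), (Nat.choose (j + m - 1) j - 1) * aZ (n - m) j) ∧
    (∀ n : ℕ, 1 ≤ n → aZ n n = 1) := by
  constructor
  · intro n m h2 hm1 hmn
    rw [AZ.aZ_eq n m, AZ.list_main n m hm1 hmn h2]
    exact Finset.sum_congr rfl (fun j hj => by rw [AZ.aZ_eq])
  · intro n hn
    have hset : {a : Fin n → ℕ | IsCatalanWord a ∧ countEq a 0 = n} = {fun _ => 0} := by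
      ext a
      simp only [Set.mem_setOf_eq, Set.mem_singleton_iff]
      constructor
      · rintro ⟨-, hcnt⟩
        funext i
        have huniv : {i : Fin n | a i = 0} = Set.univ := by
          apply Set.eq_of_subset_of_ncard_le (Set.subset_univ _) ?_ Set.finite_univ
          rw [Set.ncard_univ, Nat.card_eq_fintype_card, Fintype.card_fin]
          rw [countEq] at hcnt
          omega
        have hmem : i ∈ {i : Fin n | a i = 0} := by rw [huniv]; exact Set.mem_univ i
        exact hmem
      · rintro rfl
        refine ⟨⟨fun i h => by simp, fun i hpos _ => absurd hpos (by simp)⟩, ?_⟩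
        rw [countEq]
        simp [Set.ncard_univ]
    rw [aZ, hset, Set.ncard_singleton]
end

section
/- For n ≥ 3, 1 ≤ m ≤ n−2 and 2 ≤ i ≤ n−m, the number of members of 𝓛_n containing exactly m letters equal to 1 and exactly i letters equal to 0 equals (binomial(i+m−1, m) − 1)·a(n−i, m). -/
namespace CWBij

/-- chain condition -/
def Ch (l : List ℕ) : Prop := l.Chain' (fun x y => x ≤ y + 1)

/-- first-occurrence condition -/
def FO (l : List ℕ) : Prop :=
  ∀ k (u v : List ℕ), l = u ++ (k+1) :: v → (k+1) ∉ u → k ∈ u ∧ k ∈ v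

def CW (l : List ℕ) : Prop := Ch l ∧ FO l

def body : List ℕ → List ℕ → List ℕ
  | _,  [] => []
  | cs, 0 :: b => 1 :: (List.replicate cs.headI 0 ++ body cs.tail b)
  | cs, (x+1) :: b => (x+2) :: body cs b

def enc (c0 : ℕ) (cs b : List ℕ) : List ℕ := List.replicate c0 0 ++ body cs b

@[simp] lemma body_nil (cs : List ℕ) : body cs [] = [] := rfl
@[simp] lemma body_zero (cs t : List ℕ) :
    body cs (0 :: t) = 1 :: (List.replicate cs.headI 0 ++ body cs.tail t) := rfl
@[simp] lemma body_succ (cs t : List ℕ) (x : ℕ) :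
    body cs ((x+1) :: t) = (x+2) :: body cs t := rfl

lemma head?_body (cs b : List ℕ) : (body cs b).head? = b.head?.map (· + 1) := by
  match b with
  | [] => rfl
  | 0 :: t => rfl
  | (x+1) :: t => rfl

lemma mem_body_succ {k : ℕ} : ∀ (b cs : List ℕ), (k+1) ∈ body cs b ↔ k ∈ b := by
  intro b
  induction b with
  | nil => simp
  | cons x t ih =>
    intro cs
    match x with
    | 0 =>
      simp only [body_zero, List.mem_cons, List.mem_append, List.mem_replicate, ih]
      constructor
      · rintro (h | ⟨_, h⟩ | h)
        · left; omega
        · omega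
        · right; exact h
      · rintro (h | h)
        · subst h; left; rfl
        · right; right; exact h
    | x+1 =>
      simp only [body_succ, List.mem_cons, ih]
      constructor
      · rintro (h | h)
        · left; omega
        · right; exact h
      · rintro (h | h)
        · left; omega
        · right; exact h

lemma body_no_zero {u : List ℕ} (h : u.count 0 = 0) (cs : List ℕ) :
    body cs u = u.map (· + 1) := by
  induction u generalizing cs with
  | nil => rfl
  | cons x t ih =>
    match x with
    | 0 => simp at h
    | x+1 =>
      rw [show ((x+1) :: t).count 0 = t.count 0 by simp] at h
      simp [body_succ, ih h cs]

lemma mem_body_zero {b cs : List ℕ} (hlen : cs.length = b.count 0) :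
    0 ∈ body cs b ↔ cs.sum ≠ 0 := by
  induction b generalizing cs with
  | nil =>
    simp only [List.count_nil, List.length_eq_zero_iff] at hlen
    subst hlen; simp
  | cons x t ih =>
    match x with
    | 0 =>
      rw [show ((0:ℕ) :: t).count 0 = t.count 0 + 1 by simp] at hlen
      obtain ⟨c, cs', rfl⟩ : ∃ c cs', cs = c :: cs' := by
        cases cs with
        | nil => simp at hlen
        | cons c cs' => exact ⟨c, cs', rfl⟩
      simp only [body_zero, List.headI, List.tail_cons, List.mem_cons, List.mem_append,
        List.mem_replicate, List.sum_cons]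
      rw [ih (by simpa using hlen)]
      constructor
      · rintro (h | ⟨h, _⟩ | h)
        · omega
        · omega
        · omega
      · intro h
        by_cases hc : c = 0
        · subst hc; right; right; simpa using h
        · right; left; exact ⟨hc, trivial⟩
    | x+1 =>
      rw [show ((x+1) :: t).count 0 = t.count 0 by simp] at hlen
      simp only [body_succ, List.mem_cons]
      rw [ih hlen]
      constructor
      · rintro (h | h)
        · omega
        · exact h
      · intro h; right; exact h

lemma count_zero_cons_zero (t : List ℕ) : ((0:ℕ) :: t).count 0 = t.count 0 + 1 := by simp
lemma count_zero_cons_succ (t : List ℕ) (x : ℕ) : (((x:ℕ)+1) :: t).count 0 = t.count 0 := by simp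
lemma count_one_cons_zero (t : List ℕ) : ((0:ℕ) :: t).count 1 = t.count 1 := by simp
lemma count_one_cons_one (t : List ℕ) : ((1:ℕ) :: t).count 1 = t.count 1 + 1 := by simp

lemma body_append : ∀ (u : List ℕ), ∀ (v cs : List ℕ),
    body cs (u ++ v) = body cs u ++ body (cs.drop (u.count 0)) v := by
  intro u
  induction u with
  | nil => simp
  | cons x t ih =>
    intro v cs
    match x with
    | 0 =>
      rw [count_zero_cons_zero]
      simp only [List.cons_append, body_zero, ih v cs.tail, List.append_assoc]
      congr 2
      rw [← List.drop_one, List.drop_drop]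
      rw [Nat.add_comm]
    | x+1 =>
      rw [count_zero_cons_succ]
      simp [List.cons_append, body_succ, ih v cs]

lemma length_body : ∀ (b cs : List ℕ), cs.length = b.count 0 →
    (body cs b).length = b.length + cs.sum := by
  intro b
  induction b with
  | nil => intro cs h; simp only [List.count_nil, List.length_eq_zero_iff] at h; simp [h]
  | cons x t ih =>
    intro cs h
    match x with
    | 0 =>
      rw [count_zero_cons_zero] at h
      obtain ⟨c, cs', rfl⟩ : ∃ c cs', cs = c :: cs' := by
        cases cs with
        | nil => simp at h
        | cons c cs' => exact ⟨c, cs', rfl⟩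
      simp only [body_zero, List.headI, List.tail_cons, List.length_cons, List.length_append,
        List.length_replicate, List.sum_cons]
      rw [ih cs' (by simpa using h)]
      omega
    | x+1 =>
      rw [count_zero_cons_succ] at h
      simp only [body_succ, List.length_cons]
      rw [ih cs h]
      omega

lemma count_zero_body : ∀ (b cs : List ℕ), cs.length = b.count 0 →
    (body cs b).count 0 = cs.sum := by
  intro b
  induction b with
  | nil => intro cs h; simp only [List.count_nil, List.length_eq_zero_iff] at h; simp [h]
  | cons x t ih =>
    intro cs h
    match x with
    | 0 =>
      rw [count_zero_cons_zero] at h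
      obtain ⟨c, cs', rfl⟩ : ∃ c cs', cs = c :: cs' := by
        cases cs with
        | nil => simp at h
        | cons c cs' => exact ⟨c, cs', rfl⟩
      simp only [body_zero, List.headI, List.tail_cons, List.sum_cons]
      rw [List.count_cons, List.count_append, ih cs' (by simpa using h)]
      simp [List.count_replicate]
    | x+1 =>
      rw [count_zero_cons_succ] at h
      rw [body_succ, List.count_cons, ih cs h]
      simp

lemma count_one_body : ∀ (b cs : List ℕ),
    (body cs b).count 1 = b.count 0 := by
  intro b
  induction b with
  | nil => simp
  | cons x t ih =>
    intro cs
    match x with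
    | 0 =>
      rw [count_zero_cons_zero]
      simp only [body_zero]
      rw [List.count_cons, List.count_append, ih cs.tail]
      simp [List.count_replicate]
    | x+1 =>
      rw [count_zero_cons_succ, body_succ, List.count_cons, ih cs]
      simp

lemma ch_replicate_append {c : ℕ} {A : List ℕ} (hA : Ch A) :
    Ch (List.replicate c 0 ++ A) := by
  induction c with
  | zero => simpa
  | succ c ih =>
    rw [List.replicate_succ, List.cons_append]
    refine List.isChain_cons.mpr ⟨fun y _ => by omega, ih⟩

lemma ch_of_ch_append_left {A B : List ℕ} (h : Ch (A ++ B)) : Ch B :=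
  (List.isChain_append.mp h).2.1

lemma ch_body : ∀ (b cs : List ℕ), Ch (body cs b) ↔ Ch b := by
  intro b
  induction b with
  | nil => intro cs; simp [Ch]
  | cons x t ih =>
    intro cs
    match x with
    | 0 =>
      simp only [body_zero]
      constructor
      · intro h
        have h1 : Ch (List.replicate cs.headI 0 ++ body cs.tail t) := (List.isChain_cons.mp h).2
        have h2 : Ch (body cs.tail t) := ch_of_ch_append_left h1
        refine List.isChain_cons.mpr ⟨fun y _ => by omega, (ih cs.tail).mp h2⟩
      · intro h
        have h2 : Ch t := (List.isChain_cons.mp h).2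
        refine List.isChain_cons.mpr ⟨fun y hy => ?_, ch_replicate_append ((ih cs.tail).mpr h2)⟩
        omega
    | x+1 =>
      simp only [body_succ]
      unfold Ch List.Chain'
      rw [List.isChain_cons, List.isChain_cons,
        show List.IsChain (fun x y => x ≤ y + 1) (body cs t) ↔
          List.IsChain (fun x y => x ≤ y + 1) t from ih cs, head?_body]
      constructor
      · rintro ⟨h1, h2⟩
        refine ⟨fun y hy => ?_, h2⟩
        have := h1 (y+1) (by rw [hy]; simp)
        omega
      · rintro ⟨h1, h2⟩
        refine ⟨fun y hy => ?_, h2⟩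
        cases ht : t.head? with
        | none => rw [ht] at hy; simp at hy
        | some z =>
          rw [ht] at hy; simp at hy
          have := h1 z ht
          omega

lemma ch_enc {c0 : ℕ} {cs b : List ℕ} (hb : Ch b) : Ch (List.replicate c0 0 ++ body cs b) :=
  ch_replicate_append ((ch_body b cs).mpr hb)

lemma ch_dec {c0 : ℕ} {cs b : List ℕ} (h : Ch (List.replicate c0 0 ++ body cs b)) : Ch b :=
  (ch_body b cs).mp (ch_of_ch_append_left h)

/-- cancellation of leading zero blocks -/
lemma rep_cancel : ∀ (a a' : ℕ) (A A' : List ℕ), A.head? ≠ some 0 → A'.head? ≠ some 0 →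
    List.replicate a 0 ++ A = List.replicate a' 0 ++ A' → a = a' ∧ A = A' := by
  intro a
  induction a with
  | zero =>
    intro a' A A' hA hA' h
    cases a' with
    | zero => simpa using h
    | succ a' =>
      simp only [List.replicate_zero, List.replicate_succ, List.nil_append,
        List.cons_append] at h
      rw [h] at hA; simp at hA
  | succ a ih =>
    intro a' A A' hA hA' h
    cases a' with
    | zero =>
      simp only [List.replicate_zero, List.replicate_succ, List.nil_append,
        List.cons_append] at h
      rw [← h] at hA'; simp at hA'
    | succ a' =>
      rw [List.replicate_succ, List.replicate_succ] at h
      simp only [List.cons_append, List.cons.injEq] at h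
      obtain ⟨h1, h2⟩ := ih a' A A' hA hA' h.2
      exact ⟨by omega, h2⟩

lemma body_ne_nil {b cs : List ℕ} (hb : b ≠ []) : body cs b ≠ [] := by
  intro h
  have := head?_body cs b
  rw [h] at this
  cases b with
  | nil => exact hb rfl
  | cons x t => simp at this

lemma head?_body_ne_zero {b cs : List ℕ} : (body cs b).head? ≠ some 0 := by
  rw [head?_body]
  cases b <;> simp

lemma body_inj : ∀ (b b' cs cs' : List ℕ), cs.length = b.count 0 → cs'.length = b'.count 0 →
    body cs b = body cs' b' → cs = cs' ∧ b = b' := by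
  intro b
  induction b with
  | nil =>
    intro b' cs cs' h h' heq
    simp only [body_nil] at heq
    cases b' with
    | nil =>
      simp only [List.count_nil, List.length_eq_zero_iff] at h h'
      exact ⟨by rw [h, h'], rfl⟩
    | cons x t => exact absurd heq.symm (body_ne_nil (by simp))
  | cons x t ih =>
    intro b' cs cs' h h' heq
    match x, b' with
    | _, [] => exact absurd heq (body_ne_nil (by simp))
    | 0, 0 :: t' =>
      rw [show ((0:ℕ) :: t).count 0 = t.count 0 + 1 by simp] at h
      rw [show ((0:ℕ) :: t').count 0 = t'.count 0 + 1 by simp] at h'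
      obtain ⟨c, cs1, rfl⟩ : ∃ c cs1, cs = c :: cs1 := by
        cases cs with
        | nil => simp at h
        | cons c cs1 => exact ⟨c, cs1, rfl⟩
      obtain ⟨c', cs1', rfl⟩ : ∃ c cs1, cs' = c :: cs1 := by
        cases cs' with
        | nil => simp at h'
        | cons c cs1 => exact ⟨c, cs1, rfl⟩
      simp only [body_zero, List.headI, List.tail_cons, List.cons.injEq, true_and] at heq
      obtain ⟨hc, hrest⟩ := rep_cancel c c' _ _ head?_body_ne_zero head?_body_ne_zero heq
      obtain ⟨hcs, ht⟩ := ih t' cs1 cs1' (by simpa using h) (by simpa using h') hrest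
      exact ⟨by rw [hc, hcs], by rw [ht]⟩
    | 0, (y+1) :: t' => simp only [body_zero, body_succ, List.cons.injEq] at heq; omega
    | (y+1), 0 :: t' => simp only [body_zero, body_succ, List.cons.injEq] at heq; omega
    | (y+1), (y'+1) :: t' =>
      rw [show (((y:ℕ)+1) :: t).count 0 = t.count 0 by simp] at h
      rw [show (((y':ℕ)+1) :: t').count 0 = t'.count 0 by simp] at h'
      simp only [body_succ, List.cons.injEq] at heq
      obtain ⟨hcs, ht⟩ := ih t' cs cs' h h' heq.2
      have : y = y' := by omega
      exact ⟨hcs, by rw [ht, this]⟩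

lemma head?_dropWhile_ne : ∀ t : List ℕ, (t.dropWhile (· == 0)).head? ≠ some 0 := by
  intro t
  induction t with
  | nil => simp
  | cons x s ih =>
    by_cases hx : x = 0
    · subst hx; simpa using ih
    · rw [List.dropWhile_cons_of_neg (by simpa using hx)]
      simpa using hx

lemma exists_decomp : ∀ (N : ℕ) (l : List ℕ), l.length ≤ N → Ch l → l.head? ≠ some 0 →
    ∃ cs b, l = body cs b ∧ cs.length = b.count 0 := by
  intro N
  induction N with
  | zero =>
    intro l hN _ _
    have : l = [] := List.length_eq_zero_iff.mp (by omega)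
    exact ⟨[], [], by simp [this], by simp⟩
  | succ N ih =>
    intro l hN hch hhd
    match l with
    | [] => exact ⟨[], [], by simp, by simp⟩
    | 0 :: t => simp at hhd
    | 1 :: t =>
      -- leading 1; strip zero block from t
      set k := (t.takeWhile (· == 0)).length with hk
      set t' := t.dropWhile (· == 0) with ht'
      have htw : t.takeWhile (· == 0) = List.replicate k 0 := by
        apply List.eq_replicate_iff.mpr
        refine ⟨rfl, fun b hb => ?_⟩
        have := List.mem_takeWhile_imp hb
        simpa using this
      have hsplit : t = List.replicate k 0 ++ t' := by
        rw [← htw, ht', List.takeWhile_append_dropWhile]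
      have hd' : t'.head? ≠ some 0 := head?_dropWhile_ne t
      have hch' : Ch t' := by
        have h1 : Ch t := (List.isChain_cons.mp hch).2
        rw [hsplit] at h1
        exact ch_of_ch_append_left h1
      have hlen : t'.length ≤ N := by
        have h1 : t.length ≤ N := by simp at hN; omega
        have : t'.length ≤ t.length := by
          rw [ht']; exact (List.dropWhile_suffix _).length_le
        omega
      obtain ⟨cs, b, hb, hcl⟩ := ih t' hlen hch' hd'
      refine ⟨k :: cs, 0 :: b, ?_, ?_⟩
      · rw [body_zero]
        simp only [List.headI, List.tail_cons]
        rw [← hb, ← hsplit]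
      · rw [show ((0:ℕ) :: b).count 0 = b.count 0 + 1 by simp]
        simpa using hcl
    | (x+2) :: t =>
      have hd' : t.head? ≠ some 0 := by
        intro hcon
        have h1 := (List.isChain_cons.mp hch).1 0 hcon
        omega
      have hch' : Ch t := (List.isChain_cons.mp hch).2
      obtain ⟨cs, b, hb, hcl⟩ := ih t (by simp at hN; omega) hch' hd'
      refine ⟨cs, (x+1) :: b, ?_, ?_⟩
      · rw [body_succ, ← hb]
      · rw [show (((x:ℕ)+1) :: b).count 0 = b.count 0 by simp]
        exact hcl

lemma exists_first_split {α : Type*} [DecidableEq α] {x : α} :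
    ∀ {l : List α}, x ∈ l → ∃ u v, l = u ++ x :: v ∧ x ∉ u := by
  intro l
  induction l with
  | nil => simp
  | cons a t ih =>
    intro h
    by_cases hax : a = x
    · exact ⟨[], t, by rw [hax]; rfl, by simp⟩
    · have : x ∈ t := by
        rcases List.mem_cons.mp h with h | h
        · exact absurd h.symm hax
        · exact h
      obtain ⟨u, v, huv, hnu⟩ := ih this
      exact ⟨a :: u, v, by rw [List.cons_append, huv], by simp [hnu, Ne.symm hax]⟩

lemma first_occ_unique {α : Type*} {x : α} :
    ∀ (u₁ : List α) {u₂ v₁ v₂ : List α}, u₁ ++ x :: v₁ = u₂ ++ x :: v₂ → x ∉ u₁ → x ∉ u₂ →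
      u₁ = u₂ ∧ v₁ = v₂ := by
  intro u₁
  induction u₁ with
  | nil =>
    intro u₂ v₁ v₂ h h1 h2
    cases u₂ with
    | nil => simpa using h
    | cons a t =>
      simp only [List.nil_append, List.cons_append, List.cons.injEq] at h
      exact absurd (by rw [h.1]; exact List.mem_cons_self) h2
  | cons a t ih =>
    intro u₂ v₁ v₂ h h1 h2
    cases u₂ with
    | nil =>
      simp only [List.nil_append, List.cons_append, List.cons.injEq] at h
      exact absurd (by rw [← h.1]; exact List.mem_cons_self) h1
    | cons a' t' =>
      simp only [List.cons_append, List.cons.injEq] at h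
      obtain ⟨h3, h4⟩ := ih h.2 (fun hc => h1 (List.mem_cons_of_mem _ hc))
        (fun hc => h2 (List.mem_cons_of_mem _ hc))
      exact ⟨by rw [h.1, h3], h4⟩

lemma sum_eq_headI_add {cs : List ℕ} (h : cs ≠ []) : cs.sum = cs.headI + cs.tail.sum := by
  cases cs with
  | nil => exact absurd rfl h
  | cons c t => simp

lemma fo_enc {c0 : ℕ} {cs b : List ℕ} (hc0 : 1 ≤ c0) (hsum : cs.sum ≠ 0)
    (hlen : cs.length = b.count 0) (hb : FO b) : FO (List.replicate c0 0 ++ body cs b) := by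
  intro k u v heq hnotu
  have hkl : (k+1) ∈ List.replicate c0 0 ++ body cs b := by rw [heq]; simp
  have hkbody : (k+1) ∈ body cs b := by
    rcases List.mem_append.mp hkl with h | h
    · exact absurd (List.eq_of_mem_replicate h) (by omega)
    · exact h
  have hkb : k ∈ b := (mem_body_succ b cs).mp hkbody
  match k with
  | k'+1 =>
    obtain ⟨ub, vb, hsplit, hnotub⟩ := exists_first_split hkb
    have hbody : body cs b = body cs ub ++ (k'+2) :: body (cs.drop (ub.count 0)) vb := by
      rw [hsplit, body_append, body_succ]
    have hl2 : List.replicate c0 0 ++ body cs b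
        = (List.replicate c0 0 ++ body cs ub) ++ (k'+2) :: body (cs.drop (ub.count 0)) vb := by
      rw [hbody, List.append_assoc]
    have hnot2 : (k'+2) ∉ List.replicate c0 0 ++ body cs ub := by
      intro hc
      rcases List.mem_append.mp hc with h | h
      · exact absurd (List.eq_of_mem_replicate h) (by omega)
      · exact hnotub ((mem_body_succ ub cs).mp h)
    obtain ⟨hu, hv⟩ := first_occ_unique u (heq.symm.trans hl2) hnotu hnot2
    obtain ⟨h1, h2⟩ := hb k' ub vb hsplit hnotub
    constructor
    · rw [hu]
      exact List.mem_append.mpr (Or.inr ((mem_body_succ ub cs).mpr h1))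
    · rw [hv]
      exact (mem_body_succ vb _).mpr h2
  | 0 =>
    obtain ⟨ub, vb, hsplit, hnotub⟩ := exists_first_split hkb
    have hcnt : ub.count 0 = 0 := List.count_eq_zero.mpr hnotub
    have hbody : body cs b = body cs ub ++ 1 ::
        (List.replicate cs.headI 0 ++ body cs.tail vb) := by
      rw [hsplit, body_append, hcnt, List.drop_zero, body_zero]
    have hl2 : List.replicate c0 0 ++ body cs b
        = (List.replicate c0 0 ++ body cs ub) ++ 1 ::
          (List.replicate cs.headI 0 ++ body cs.tail vb) := by
      rw [hbody, List.append_assoc]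
    have hnot2 : (1:ℕ) ∉ List.replicate c0 0 ++ body cs ub := by
      intro hc
      rcases List.mem_append.mp hc with h | h
      · exact absurd (List.eq_of_mem_replicate h) (by omega)
      · exact hnotub ((mem_body_succ ub cs).mp h)
    obtain ⟨hu, hv⟩ := first_occ_unique u (heq.symm.trans hl2) hnotu hnot2
    have hcs_ne : cs ≠ [] := by
      intro h
      rw [h] at hlen
      rw [hsplit] at hlen
      simp [List.count_append, hcnt] at hlen
    constructor
    · rw [hu]
      exact List.mem_append.mpr (Or.inl (List.mem_replicate.mpr ⟨by omega, rfl⟩))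
    · rw [hv]
      by_cases hh : cs.headI = 0
      · have htail : cs.tail.sum ≠ 0 := by
          have := sum_eq_headI_add hcs_ne
          omega
        have hlen' : cs.tail.length = vb.count 0 := by
          have h1 : b.count 0 = vb.count 0 + 1 := by
            rw [hsplit]
            simp [List.count_append, hcnt]
          have h2 : cs.tail.length = cs.length - 1 := by simp
          omega
        exact List.mem_append.mpr (Or.inr ((mem_body_zero hlen').mpr htail))
      · exact List.mem_append.mpr (Or.inl (List.mem_replicate.mpr ⟨hh, rfl⟩))

lemma fo_dec {c0 : ℕ} {cs b : List ℕ} (hlen : cs.length = b.count 0)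
    (hl : FO (List.replicate c0 0 ++ body cs b)) :
    FO b ∧ (0 ∈ b → 1 ≤ c0 ∧ cs.sum ≠ 0) := by
  constructor
  · intro k ub vb hsplit hnotub
    have hbody : List.replicate c0 0 ++ body cs b
        = (List.replicate c0 0 ++ body cs ub) ++ (k+2) :: body (cs.drop (ub.count 0)) vb := by
      rw [hsplit, body_append, body_succ, List.append_assoc]
    have hnot2 : (k+2) ∉ List.replicate c0 0 ++ body cs ub := by
      intro hc
      rcases List.mem_append.mp hc with h | h
      · exact absurd (List.eq_of_mem_replicate h) (by omega)
      · exact hnotub ((mem_body_succ ub cs).mp h)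
    obtain ⟨h1, h2⟩ := hl (k+1) _ _ hbody hnot2
    constructor
    · rcases List.mem_append.mp h1 with h | h
      · exact absurd (List.eq_of_mem_replicate h) (by omega)
      · exact (mem_body_succ ub cs).mp h
    · exact (mem_body_succ vb _).mp h2
  · intro h0b
    obtain ⟨ub, vb, hsplit, hnotub⟩ := exists_first_split h0b
    have hcnt : ub.count 0 = 0 := List.count_eq_zero.mpr hnotub
    have hbody : List.replicate c0 0 ++ body cs b
        = (List.replicate c0 0 ++ body cs ub) ++ 1 ::
          (List.replicate cs.headI 0 ++ body cs.tail vb) := by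
      rw [hsplit, body_append, hcnt, List.drop_zero, body_zero, List.append_assoc]
    have hnot2 : (1:ℕ) ∉ List.replicate c0 0 ++ body cs ub := by
      intro hc
      rcases List.mem_append.mp hc with h | h
      · exact absurd (List.eq_of_mem_replicate h) (by omega)
      · exact hnotub ((mem_body_succ ub cs).mp h)
    obtain ⟨h1, h2⟩ := hl 0 _ _ hbody hnot2
    have hcs_ne : cs ≠ [] := by
      intro h
      rw [h] at hlen
      rw [hsplit] at hlen
      simp [List.count_append, hcnt] at hlen
    constructor
    · rcases List.mem_append.mp h1 with h | h
      · have := (List.mem_replicate.mp h).1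
        omega
      · rw [body_no_zero hcnt] at h
        simp at h
    · rcases List.mem_append.mp h2 with h | h
      · have hh := (List.mem_replicate.mp h).1
        have := sum_eq_headI_add hcs_ne
        omega
      · have hlen' : cs.tail.length = vb.count 0 := by
          have h1' : b.count 0 = vb.count 0 + 1 := by
            rw [hsplit]
            simp [List.count_append, hcnt]
          have h2' : cs.tail.length = cs.length - 1 := by simp
          omega
        have := (mem_body_zero hlen').mp h
        have := sum_eq_headI_add hcs_ne
        omega

lemma ch_iff {n : ℕ} (a : Fin n → ℕ) :
    (∀ (i : ℕ) (h : i + 1 < n), a ⟨i, Nat.lt_of_succ_lt h⟩ ≤ a ⟨i + 1, h⟩ + 1) ↔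
      Ch (List.ofFn a) := by
  rw [Ch, List.Chain', List.isChain_iff_getElem]
  simp only [List.length_ofFn, List.getElem_ofFn]

lemma fo_iff {n : ℕ} (a : Fin n → ℕ) :
    (∀ i : Fin n, 0 < a i → (∀ j : Fin n, a j = a i → i ≤ j) →
      ((∃ i₁ : Fin n, i₁ < i ∧ a i₁ + 1 = a i) ∧ (∃ i₂ : Fin n, i < i₂ ∧ a i₂ + 1 = a i))) ↔
    FO (List.ofFn a) := by
  constructor
  · intro h2 k u v heq hnotu
    have hlen : u.length + (v.length + 1) = n := by
      have := congrArg List.length heq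
      simp at this
      omega
    have hp : u.length < n := by omega
    have hap : a ⟨u.length, hp⟩ = k + 1 := by
      have : (List.ofFn a)[u.length]'(by simp; omega) = k + 1 := by
        simp only [heq]
        rw [List.getElem_append_right (le_refl u.length)]
        simp
      rwa [List.getElem_ofFn] at this
    have hmin : ∀ j : Fin n, a j = a ⟨u.length, hp⟩ → (⟨u.length, hp⟩ : Fin n) ≤ j := by
      intro j haj
      by_contra hcon
      have hj : (j : ℕ) < u.length := by
        simp only [not_le] at hcon
        exact hcon
      have : u[(j:ℕ)]'hj = k + 1 := by
        have : (List.ofFn a)[(j:ℕ)]'(by simp only [List.length_ofFn]; omega) = u[(j:ℕ)]'hj := by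
          simp only [heq]
          rw [List.getElem_append_left]
        rw [List.getElem_ofFn] at this
        rw [← this]
        simp [haj, hap]
      exact hnotu (this ▸ List.getElem_mem hj)
    obtain ⟨⟨i₁, hi₁, hv₁⟩, ⟨i₂, hi₂, hv₂⟩⟩ := h2 ⟨u.length, hp⟩ (by omega) hmin
    constructor
    · have hj : (i₁ : ℕ) < u.length := hi₁
      have : u[(i₁:ℕ)]'hj = k := by
        have h3 : (List.ofFn a)[(i₁:ℕ)]'(by simp only [List.length_ofFn]; omega) = u[(i₁:ℕ)]'hj := by
          simp only [heq]; rw [List.getElem_append_left]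
        rw [List.getElem_ofFn] at h3
        rw [← h3]
        have : a i₁ = k := by omega
        simpa using this
      exact this ▸ List.getElem_mem hj
    · have h4 : u.length < (i₂ : ℕ) := hi₂
      have hin : (i₂ : ℕ) < n := i₂.isLt
      obtain ⟨d, hd⟩ : ∃ d, (i₂:ℕ) - u.length = d + 1 := ⟨(i₂:ℕ) - u.length - 1, by omega⟩
      have hj2 : d < v.length := by omega
      have : v[d]'hj2 = k := by
        have h3 : (List.ofFn a)[(i₂:ℕ)]'(by simp only [List.length_ofFn]; omega) = v[d]'hj2 := by
          simp only [heq]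
          rw [List.getElem_append_right (by omega)]
          simp only [hd, List.getElem_cons_succ]
        rw [List.getElem_ofFn] at h3
        rw [← h3]
        have : a i₂ = k := by omega
        simpa using this
      exact this ▸ List.getElem_mem hj2
  · intro hFO i hpos hmin
    obtain ⟨k, hk⟩ : ∃ k, a i = k + 1 := ⟨a i - 1, by omega⟩
    have hdecomp : List.ofFn a = (List.ofFn a).take i ++ (k+1) :: (List.ofFn a).drop (i+1) := by
      have h1 : (List.ofFn a).drop (i : ℕ) = (k+1) :: (List.ofFn a).drop ((i:ℕ)+1) := by
        rw [List.drop_eq_getElem_cons (by simp)]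
        congr 1
        rw [List.getElem_ofFn]
        simpa using hk
      rw [← h1, List.take_append_drop]
    have hnot : (k+1) ∉ (List.ofFn a).take i := by
      intro hmem
      obtain ⟨j, hj, hval⟩ := List.mem_iff_getElem.mp hmem
      rw [List.getElem_take] at hval
      rw [List.getElem_ofFn] at hval
      have hjn : j < n := by simp at hj; omega
      have hji : j < (i : ℕ) := by simp at hj; omega
      have := hmin ⟨j, hjn⟩ (by rw [hk]; convert hval using 2)
      simp only [Fin.le_def] at this
      omega
    obtain ⟨h1, h2⟩ := hFO k _ _ hdecomp hnot
    constructor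
    · obtain ⟨j, hj, hval⟩ := List.mem_iff_getElem.mp h1
      rw [List.getElem_take, List.getElem_ofFn] at hval
      have hjn : j < n := by simp at hj; omega
      have hji : j < (i : ℕ) := by simp at hj; omega
      refine ⟨⟨j, hjn⟩, by simpa [Fin.lt_def] using hji, ?_⟩
      rw [hk]
      have : a ⟨j, hjn⟩ = k := by convert hval using 2
      omega
    · obtain ⟨j, hj, hval⟩ := List.mem_iff_getElem.mp h2
      rw [List.getElem_drop, List.getElem_ofFn] at hval
      have hjn : (i:ℕ) + 1 + j < n := by simp at hj; omega
      refine ⟨⟨(i:ℕ)+1+j, hjn⟩, by simp only [Fin.lt_def]; omega, ?_⟩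
      rw [hk]
      have : a ⟨(i:ℕ)+1+j, hjn⟩ = k := hval
      omega

lemma isCW_iff {n : ℕ} (a : Fin n → ℕ) : IsCatalanWord a ↔ CW (List.ofFn a) := by
  rw [IsCatalanWord, CW, ch_iff, fo_iff]

def Fm : ℕ → ℕ → Finset (List ℕ)
  | 0, _ => {[]}
  | (m+1), N => (Finset.range (N+1)).biUnion (fun c => (Fm m (N-c)).image (c :: ·))

lemma mem_Fm : ∀ (m N : ℕ) (cs : List ℕ), cs ∈ Fm m N ↔ cs.length = m ∧ cs.sum ≤ N := by
  intro m
  induction m with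
  | zero =>
    intro N cs
    simp only [Fm, Finset.mem_singleton]
    constructor
    · rintro rfl; simp
    · intro ⟨h1, _⟩; exact List.length_eq_zero_iff.mp h1
  | succ m ih =>
    intro N cs
    simp only [Fm, Finset.mem_biUnion, Finset.mem_range, Finset.mem_image]
    constructor
    · rintro ⟨c, hc, t, ht, rfl⟩
      obtain ⟨h1, h2⟩ := (ih _ t).mp ht
      refine ⟨by simp [h1], ?_⟩
      simp only [List.sum_cons]
      omega
    · rintro ⟨h1, h2⟩
      match cs with
      | [] => simp at h1
      | c :: t =>
        simp only [List.sum_cons] at h2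
        refine ⟨c, by omega, t, (ih _ t).mpr ⟨by simpa using h1, by omega⟩, rfl⟩

lemma card_Fm : ∀ (m N : ℕ), (Fm m N).card = (N + m).choose m := by
  intro m
  induction m with
  | zero => intro N; simp [Fm]
  | succ m ih =>
    intro N
    rw [Fm, Finset.card_biUnion]
    · have h1 : ∀ c ∈ Finset.range (N+1), ((Fm m (N-c)).image (c :: ·)).card
          = (N - c + m).choose m := by
        intro c _
        rw [Finset.card_image_of_injective _ (fun x y h => by injection h), ih]
      rw [Finset.sum_congr rfl h1]
      have key : ∑ x ∈ Finset.range (N+1), (N - x + m).choose m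
          = ∑ x ∈ Finset.range (N+1), (x + m).choose m := by
        rw [← Finset.sum_range_reflect]
        apply Finset.sum_congr rfl
        intro j hj
        simp only [Finset.mem_range] at hj
        congr 1
        omega
      rw [key, Nat.sum_range_add_choose]
      rfl
    · intro c1 h1 c2 h2 hne
      simp only [Function.onFun, Finset.disjoint_left, Finset.mem_image]
      rintro l ⟨t1, _, rfl⟩ ⟨t2, _, hcon⟩
      injection hcon with h _
      exact hne h.symm

def TTset (m i : ℕ) : Set (ℕ × List ℕ) :=
  {p | 1 ≤ p.1 ∧ p.2.sum ≠ 0 ∧ p.2.length = m ∧ p.1 + p.2.sum = i}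

lemma split_leading_zeros (l : List ℕ) :
    l = List.replicate (l.takeWhile (· == 0)).length 0 ++ l.dropWhile (· == 0) := by
  have htw : l.takeWhile (· == 0) = List.replicate (l.takeWhile (· == 0)).length 0 := by
    apply List.eq_replicate_iff.mpr
    refine ⟨rfl, fun b hb => ?_⟩
    have := List.mem_takeWhile_imp hb
    simpa using this
  conv_lhs => rw [← List.takeWhile_append_dropWhile (p := (· == 0)) (l := l)]
  rw [← htw]

lemma count_replicate_zero_zero (c : ℕ) : (List.replicate c (0:ℕ)).count 0 = c := by
  simp [List.count_replicate]

lemma count_replicate_zero_one (c : ℕ) : (List.replicate c (0:ℕ)).count 1 = 0 := by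
  simp [List.count_replicate]

lemma main_list (n m i : ℕ) (hm : 1 ≤ m) (hin : i ≤ n) :
    Set.ncard {l : List ℕ | CW l ∧ l.length = n ∧ l.count 1 = m ∧ l.count 0 = i}
    = Set.ncard (TTset m i) *
      Set.ncard {b : List ℕ | CW b ∧ b.length = n - i ∧ b.count 0 = m} := by
  have himg : {l : List ℕ | CW l ∧ l.length = n ∧ l.count 1 = m ∧ l.count 0 = i}
      = (fun p : (ℕ × List ℕ) × List ℕ => List.replicate p.1.1 0 ++ body p.1.2 p.2) ''
        ((TTset m i) ×ˢ {b : List ℕ | CW b ∧ b.length = n - i ∧ b.count 0 = m}) := by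
    ext l
    simp only [Set.mem_image, Set.mem_setOf_eq, Set.mem_prod]
    constructor
    · rintro ⟨⟨hch, hfo⟩, hlength, hcnt1, hcnt0⟩
      have hsplit := split_leading_zeros l
      set c0 := (l.takeWhile (· == 0)).length with hc0def
      set l' := l.dropWhile (· == 0) with hl'def
      have hch' : Ch l' := by
        have := hsplit ▸ hch
        exact ch_of_ch_append_left this
      obtain ⟨cs, b, hb, hlen⟩ := exists_decomp l'.length l' le_rfl hch' (head?_dropWhile_ne l)
      have hldec : l = List.replicate c0 0 ++ body cs b := by rw [hsplit, hb]
      have hcnt0' : c0 + cs.sum = i := by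
        rw [hldec, List.count_append, count_replicate_zero_zero, count_zero_body b cs hlen]
          at hcnt0
        exact hcnt0
      have hcntb : b.count 0 = m := by
        rw [hldec, List.count_append, count_replicate_zero_one, count_one_body b cs] at hcnt1
        simpa using hcnt1
      have hlenl : c0 + (b.length + cs.sum) = n := by
        rw [hldec] at hlength
        simp only [List.length_append, List.length_replicate] at hlength
        rw [length_body b cs hlen] at hlength
        exact hlength
      have hblen : b.length = n - i := by omega
      have hchb : Ch b := ch_dec (hldec ▸ hch)
      obtain ⟨hfob, hextra⟩ := fo_dec hlen (hldec ▸ hfo)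
      have h0b : 0 ∈ b := by
        have : 0 < b.count 0 := by omega
        exact List.count_pos_iff.mp this
      obtain ⟨hc0, hsum⟩ := hextra h0b
      refine ⟨((c0, cs), b), ⟨⟨hc0, hsum, by rw [hlen, hcntb], hcnt0'⟩,
        ⟨⟨hchb, hfob⟩, hblen, hcntb⟩⟩, hldec.symm⟩
    · rintro ⟨⟨⟨c0, cs⟩, b⟩, ⟨⟨h1, h2, h3, h4⟩, ⟨⟨hchb, hfob⟩, hblen, hbcnt⟩⟩, rfl⟩
      dsimp only at h1 h2 h3 h4 hchb hfob hblen hbcnt ⊢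
      have hlen : cs.length = b.count 0 := by rw [h3, hbcnt]
      refine ⟨⟨ch_enc hchb, fo_enc h1 h2 hlen hfob⟩, ?_, ?_, ?_⟩
      · simp only [List.length_append, List.length_replicate]
        rw [length_body b cs hlen]
        omega
      · rw [List.count_append, count_replicate_zero_one, count_one_body b cs, hbcnt]
        omega
      · rw [List.count_append, count_replicate_zero_zero, count_zero_body b cs hlen]
        exact h4
  have hinj : Set.InjOn (fun p : (ℕ × List ℕ) × List ℕ =>
      List.replicate p.1.1 0 ++ body p.1.2 p.2)
      ((TTset m i) ×ˢ {b : List ℕ | CW b ∧ b.length = n - i ∧ b.count 0 = m}) := by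
    rintro ⟨⟨c0, cs⟩, b⟩ ⟨⟨_, _, h3, _⟩, _, _, hbcnt⟩
      ⟨⟨c0', cs'⟩, b'⟩ ⟨⟨_, _, h3', _⟩, _, _, hbcnt'⟩ heq
    simp only at heq
    obtain ⟨hc0, hbody⟩ := rep_cancel c0 c0' _ _ head?_body_ne_zero head?_body_ne_zero heq
    obtain ⟨hcs, hb⟩ := body_inj b b' cs cs' (by rw [h3, hbcnt]) (by rw [h3', hbcnt']) hbody
    simp [Prod.ext_iff]
    exact ⟨⟨hc0, hcs⟩, hb⟩
  rw [himg, Set.ncard_image_of_injOn hinj]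
  rw [← Nat.card_coe_set_eq, Nat.card_congr (Equiv.Set.prod _ _), Nat.card_prod,
    Nat.card_coe_set_eq, Nat.card_coe_set_eq]

lemma ncard_TT (m i : ℕ) (hi : 1 ≤ i) :
    (TTset m i).ncard = (i + m - 1).choose m - 1 := by
  have h1 : TTset m i = (fun cs : List ℕ => ((i - cs.sum : ℕ), cs)) ''
      {cs : List ℕ | cs.length = m ∧ 1 ≤ cs.sum ∧ cs.sum ≤ i - 1} := by
    ext ⟨c0, cs⟩
    simp only [TTset, Set.mem_image, Set.mem_setOf_eq, Prod.mk.injEq]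
    constructor
    · rintro ⟨hc0, hsum, hlen, hadd⟩
      exact ⟨cs, ⟨hlen, by omega, by omega⟩, by omega, rfl⟩
    · rintro ⟨cs', ⟨hl, hs1, hs2⟩, hfst, rfl⟩
      refine ⟨by omega, by omega, hl, by omega⟩
  have hinj : Set.InjOn (fun cs : List ℕ => ((i - cs.sum : ℕ), cs))
      {cs : List ℕ | cs.length = m ∧ 1 ≤ cs.sum ∧ cs.sum ≤ i - 1} := by
    intro x _ y _ h
    simpa using (Prod.ext_iff.mp h).2
  rw [h1, Set.ncard_image_of_injOn hinj]
  have h2 : {cs : List ℕ | cs.length = m ∧ 1 ≤ cs.sum ∧ cs.sum ≤ i - 1}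
      = ↑(Fm m (i-1)) \ {List.replicate m 0} := by
    ext cs
    simp only [Set.mem_diff, Set.mem_setOf_eq, Finset.coe_sort_coe, Finset.mem_coe,
      mem_Fm, Set.mem_singleton_iff]
    constructor
    · rintro ⟨hl, hs1, hs2⟩
      refine ⟨⟨hl, hs2⟩, ?_⟩
      intro hcon
      rw [hcon] at hs1
      simp at hs1
    · rintro ⟨⟨hl, hs2⟩, hne⟩
      refine ⟨hl, ?_, hs2⟩
      by_contra hcon
      have hs0 : cs.sum = 0 := by omega
      apply hne
      apply List.eq_replicate_iff.mpr
      exact ⟨hl, fun b hb => (List.sum_eq_zero_iff).mp hs0 b hb⟩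
  rw [h2, Set.ncard_diff_singleton_of_mem ?hmem,
    Set.ncard_coe_finset, card_Fm]
  case hmem =>
    simp only [Finset.mem_coe, mem_Fm]
    constructor
    · simp
    · simp
  congr 2
  omega

lemma countEq_eq_count {n : ℕ} (a : Fin n → ℕ) (c : ℕ) :
    countEq a c = (List.ofFn a).count c := by
  have h1 : {i : Fin n | a i = c} = ↑(Finset.univ.filter (fun i => a i = c)) := by
    ext i; simp
  rw [countEq, h1, Set.ncard_coe_finset]
  rw [List.ofFn_eq_map, List.count_eq_countP, List.countP_map,
    List.countP_eq_length_filter, ← List.toFinset_card_of_nodup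
      (List.Nodup.filter _ (List.nodup_finRange n))]
  congr 1
  ext i
  simp [List.mem_filter, Function.comp]

lemma bridge (n : ℕ) (Q : List ℕ → Prop) :
    Set.ncard {a : Fin n → ℕ | IsCatalanWord a ∧ Q (List.ofFn a)}
      = Set.ncard {l : List ℕ | CW l ∧ l.length = n ∧ Q l} := by
  have himg : {l : List ℕ | CW l ∧ l.length = n ∧ Q l}
      = List.ofFn '' {a : Fin n → ℕ | IsCatalanWord a ∧ Q (List.ofFn a)} := by
    ext l
    simp only [Set.mem_image, Set.mem_setOf_eq]
    constructor
    · rintro ⟨hcw, hlen, hQ⟩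
      have hofn : List.ofFn (fun j : Fin n => l[(j : ℕ)]'(by rw [hlen]; exact j.isLt)) = l := by
        apply List.ext_getElem
        · simp [hlen]
        · intro j h1 h2
          simp
      exact ⟨_, ⟨(isCW_iff _).mpr (by rw [hofn]; exact hcw), by rw [hofn]; exact hQ⟩, hofn⟩
    · rintro ⟨a, ⟨hcw, hQ⟩, rfl⟩
      exact ⟨(isCW_iff a).mp hcw, by simp, hQ⟩
  rw [himg, Set.ncard_image_of_injective _ List.ofFn_injective]

end CWBij

/-- The number of Catalan words of length `n` with exactly `m` ones and `i` zeros equals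
`(choose (i+m-1) m - 1) * a (n-i) m`. -/
theorem count_ones_zeros (n m i : ℕ) (hn : 3 ≤ n) (hm1 : 1 ≤ m) (hm2 : m ≤ n - 2)
    (hi1 : 2 ≤ i) (hi2 : i ≤ n - m) :
    Set.ncard {a : Fin n → ℕ | IsCatalanWord a ∧ countEq a 1 = m ∧ countEq a 0 = i} =
      (Nat.choose (i + m - 1) m - 1) * aZ (n - i) m := by
  have hin : i ≤ n := by omega
  have h1 : {a : Fin n → ℕ | IsCatalanWord a ∧ countEq a 1 = m ∧ countEq a 0 = i}
      = {a : Fin n → ℕ | IsCatalanWord a ∧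
          ((List.ofFn a).count 1 = m ∧ (List.ofFn a).count 0 = i)} := by
    ext a
    simp only [Set.mem_setOf_eq, CWBij.countEq_eq_count]
  have h2 : aZ (n - i) m = Set.ncard {b : List ℕ | CWBij.CW b ∧ b.length = n - i ∧
      b.count 0 = m} := by
    rw [aZ]
    have h3 : {a : Fin (n-i) → ℕ | IsCatalanWord a ∧ countEq a 0 = m}
        = {a : Fin (n-i) → ℕ | IsCatalanWord a ∧ (List.ofFn a).count 0 = m} := by
      ext a
      simp only [Set.mem_setOf_eq, CWBij.countEq_eq_count]
    rw [h3, CWBij.bridge (n-i) (fun l => l.count 0 = m)]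
  rw [h1, CWBij.bridge n (fun l => l.count 1 = m ∧ l.count 0 = i)]
  rw [CWBij.main_list n m i hm1 hin, CWBij.ncard_TT m i (by omega), h2]
end

section
/- For every real x with 0 < x < 1/4, setting t = 1/(2√x), the series Σ_{j≥1} 1/(√x·U_j(t)·U_{j+1}(t)) converges and equals x·C(x)^2. -/
/-- `C(x) = (1 - √(1-4x))/(2x)`, the generating function of the Catalan numbers. -/
noncomputable def Cfun (x : ℝ) : ℝ := (1 - Real.sqrt (1 - 4*x)) / (2*x)

/-- Evaluation at `t` of the `n`-th Chebyshev polynomial of the second kind, with the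
index extended to all integers by the recurrence `U n = 2x·U (n-1) - U (n-2)`
(so `U (-1) = 0`, `U (-2) = -1`). -/
noncomputable def chebU (n : ℤ) (t : ℝ) : ℝ := (Polynomial.Chebyshev.U ℝ n).eval t

lemma chebU_closed (q r : ℝ) (h : q * r = 1) :
    ∀ n : ℕ, (q - r) * chebU n ((q + r)/2) = q^(n+1) - r^(n+1) := by
  intro n
  induction n using Nat.twoStepInduction with
  | zero => simp [chebU, Polynomial.Chebyshev.U_zero]
  | one =>
    simp only [chebU, Polynomial.Chebyshev.U_one, Nat.cast_one]
    simp only [Polynomial.eval_mul, Polynomial.eval_ofNat, Polynomial.eval_X]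
    ring
  | more n ih0 ih1 =>
    have hrec := Polynomial.Chebyshev.U_add_two ℝ n
    have : chebU ((n:ℕ)+2 : ℕ) ((q+r)/2) =
        2 * ((q+r)/2) * chebU ((n:ℕ)+1 : ℕ) ((q+r)/2) - chebU n ((q+r)/2) := by
      simp only [chebU]
      push_cast
      rw [hrec]
      simp [Polynomial.eval_sub, Polynomial.eval_mul]
    rw [this]
    linear_combination (q + r) * ih1 - ih0 + (q^(n+1) - r^(n+1)) * h

lemma tele_step (u q a UA UB : ℝ) (hu : u ≠ 0) (hq : q ≠ 0) (ha : a ≠ 0)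
    (hq2 : q^2 - 1 ≠ 0) (h1 : a^2 - 1 ≠ 0) (h2 : q^2*a^2 - 1 ≠ 0)
    (hUA : UA = (a - 1/a)/(q - 1/q)) (hUB : UB = (q*a - 1/(q*a))/(q - 1/q)) :
    1/(u * UA * UB) = (q - 1/q)/(u*(a^2-1)) - (q - 1/q)/(u*(q^2*a^2-1)) := by
  have hqq : q - 1/q ≠ 0 := by
    intro h; apply hq2
    have : (q - 1/q) * q = 0 := by rw [h]; ring
    field_simp at this
    linear_combination this
  have hUA' : UA = (a^2-1)*q/((q^2-1)*a) := by
    rw [hUA, div_eq_div_iff hqq (mul_ne_zero hq2 ha)]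
    field_simp
  have hUB' : UB = (q^2*a^2-1)/((q^2-1)*a) := by
    rw [hUB, div_eq_div_iff hqq (mul_ne_zero hq2 ha)]
    field_simp
  have E1 : u * UA * UB = u*q*((a^2-1)*(q^2*a^2-1))/((q^2-1)^2*a^2) := by
    rw [hUA', hUB']
    field_simp
  rw [E1, one_div_div]
  rw [div_sub_div _ _ (mul_ne_zero hu h1) (mul_ne_zero hu h2), div_eq_div_iff]
  · field_simp
    ring
  · exact mul_ne_zero (mul_ne_zero hu hq) (mul_ne_zero h1 h2)
  · exact mul_ne_zero (mul_ne_zero hu h1) (mul_ne_zero hu h2)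

/-- `Σ_{j≥1} 1/(√x · U_j(t) · U_{j+1}(t)) = x·C(x)²` where `t = 1/(2√x)`.
The series over `j ≥ 1` is indexed by `j : ℕ` via `j ↦ j + 1`. -/
theorem chebyshev_sum_eq_xC_sq (x : ℝ) (hx0 : 0 < x) (hx : x < 1/4) :
    Summable (fun j : ℕ => 1 / (Real.sqrt x * chebU ((j : ℤ) + 1) (1 / (2 * Real.sqrt x)) *
      chebU ((j : ℤ) + 2) (1 / (2 * Real.sqrt x)))) ∧
    ∑' j : ℕ, 1 / (Real.sqrt x * chebU ((j : ℤ) + 1) (1 / (2 * Real.sqrt x)) *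
      chebU ((j : ℤ) + 2) (1 / (2 * Real.sqrt x))) = x * (Cfun x) ^ 2 := by
  set u : ℝ := Real.sqrt x with hu_def
  have hu0 : 0 < u := Real.sqrt_pos.mpr hx0
  have hu2 : u^2 = x := Real.sq_sqrt hx0.le
  set s : ℝ := Real.sqrt (1 - 4*x) with hs_def
  have h4x : 0 < 1 - 4*x := by linarith
  have hs0 : 0 < s := Real.sqrt_pos.mpr h4x
  have hs2 : s^2 = 1 - 4*x := Real.sq_sqrt h4x.le
  set q : ℝ := (1+s)/(2*u) with hq_def
  have hq1 : 1 < q := by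
    rw [hq_def, lt_div_iff₀ (by positivity)]
    nlinarith [hu2, hs2, hs0, hu0, sq_nonneg (1 + s - 2*u)]
  have hq0 : 0 < q := lt_trans one_pos hq1
  have hqu : q + 1/q = 1/u := by
    have hinv : 1/q = (1-s)/(2*u) := by
      rw [hq_def, one_div_div, div_eq_div_iff (by positivity) (by positivity)]
      nlinarith [hu2, hs2]
    rw [hinv, hq_def]
    rw [← add_div]
    rw [div_eq_div_iff (by positivity) (ne_of_gt hu0)]
    ring
  have ht : 1/(2*u) = (q + 1/q)/2 := by rw [hqu]; ring
  have hqr : q * (1/q) = 1 := mul_one_div_cancel (ne_of_gt hq0)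
  have hform := chebU_closed q (1/q) hqr
  have hqq0 : 0 < q - 1/q := by
    have : 1/q < 1 := by rw [div_lt_one hq0]; exact hq1
    linarith
  -- positivity of U values
  have hUpos : ∀ n : ℕ, 0 < chebU n ((q + 1/q)/2) := by
    intro n
    have h := hform n
    have hlt : (1/q)^(n+1) < q^(n+1) :=
      pow_lt_pow_left₀ (by linarith) (by positivity) (by omega)
    nlinarith [hform n]
  -- the term as function
  set t : ℝ := 1/(2*u) with ht_def
  have htq : t = (q + 1/q)/2 := ht
  clear_value u s q t
  set f : ℕ → ℝ := fun j => 1 / (u * chebU ((j : ℤ) + 1) t * chebU ((j : ℤ) + 2) t) with hf_def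
  set g : ℕ → ℝ := fun j => (q - 1/q)/(u*((q^2)^(j+2) - 1)) with hg_def
  have hcast : ∀ (j : ℕ) (k : ℕ), ((j : ℤ) + (k : ℤ)) = ((j + k : ℕ) : ℤ) := by
    intro j k; push_cast; ring
  have hstep : ∀ j : ℕ, f j = g j - g (j + 1) := by
    intro j
    have e1 : ((j : ℤ) + 1) = ((j + 1 : ℕ) : ℤ) := by push_cast; ring
    have e2 : ((j : ℤ) + 2) = ((j + 2 : ℕ) : ℤ) := by push_cast; ring
    have hU1 := hform (j+1)
    have hU2 := hform (j+2)
    have ha1 : 1 < q^(j+2) := one_lt_pow₀ hq1 (by omega)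
    have ha0 : (0:ℝ) < q^(j+2) := by positivity
    have hA : chebU ((j+1:ℕ)) ((q+1/q)/2) = (q^(j+2) - 1/q^(j+2))/(q - 1/q) := by
      rw [eq_div_iff (ne_of_gt hqq0)]
      rw [mul_comm, hU1, one_div_pow]
    have hB : chebU ((j+2:ℕ)) ((q+1/q)/2) = (q*q^(j+2) - 1/(q*q^(j+2)))/(q - 1/q) := by
      rw [eq_div_iff (ne_of_gt hqq0)]
      rw [mul_comm, hU2, one_div_pow]
      congr 1
      · exact pow_succ' q (j+2)
      · congr 1
        exact pow_succ' q (j+2)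
    have hq2' : 1 < q^2 := one_lt_pow₀ hq1 two_ne_zero
    have ha2' : 1 < (q^(j+2))^2 := one_lt_pow₀ ha1 two_ne_zero
    have hmul : 1 < q^2*(q^(j+2))^2 := one_lt_mul hq2'.le ha2'
    have key := tele_step u q (q^(j+2)) (chebU ((j+1:ℕ)) ((q+1/q)/2)) (chebU ((j+2:ℕ)) ((q+1/q)/2))
      (ne_of_gt hu0) (ne_of_gt hq0) (ne_of_gt ha0)
      (ne_of_gt (by linarith : (0:ℝ) < q^2 - 1))
      (ne_of_gt (by linarith : (0:ℝ) < (q^(j+2))^2 - 1))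
      (ne_of_gt (by linarith : (0:ℝ) < q^2*(q^(j+2))^2 - 1))
      hA hB
    have p1 : (q^(j+2))^2 = (q^2)^(j+2) := by
      rw [← pow_mul, ← pow_mul, Nat.mul_comm]
    rw [p1, ← pow_succ' (q^2) (j+2)] at key
    simp only [hf_def, hg_def]
    rw [e1, e2, htq, key]
  have hfnonneg : ∀ j : ℕ, 0 ≤ f j := by
    intro j
    have e1 : ((j : ℤ) + 1) = ((j + 1 : ℕ) : ℤ) := by push_cast; ring
    have e2 : ((j : ℤ) + 2) = ((j + 2 : ℕ) : ℤ) := by push_cast; ring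
    simp only [hf_def]
    rw [e1, e2, htq]
    have := hUpos (j+1)
    have := hUpos (j+2)
    positivity
  -- limit of g
  have hglim : Filter.Tendsto g Filter.atTop (nhds 0) := by
    have hq2 : 1 < q^2 := one_lt_pow₀ hq1 (by norm_num)
    have h1 : Filter.Tendsto (fun j : ℕ => (q^2)^(j+2)) Filter.atTop Filter.atTop :=
      (tendsto_pow_atTop_atTop_of_one_lt hq2).comp (Filter.tendsto_add_atTop_nat 2)
    have h1' : Filter.Tendsto (fun j : ℕ => (q^2)^(j+2) - 1) Filter.atTop Filter.atTop :=
      (Filter.tendsto_atTop_add_const_right Filter.atTop (-1) h1).congr (fun n => by ring)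
    have h2 : Filter.Tendsto (fun j : ℕ => u*((q^2)^(j+2) - 1)) Filter.atTop Filter.atTop :=
      h1'.const_mul_atTop hu0
    have h3 := h2.inv_tendsto_atTop.const_mul (q - 1/q)
    simp only [hg_def, div_eq_mul_inv]
    simpa using h3
  have hpartial : ∀ n : ℕ, ∑ j ∈ Finset.range n, f j = g 0 - g n := by
    intro n
    rw [Finset.sum_congr rfl (fun j _ => hstep j)]
    exact Finset.sum_range_sub' g n
  have hHasSum : HasSum f (g 0) := by
    rw [hasSum_iff_tendsto_nat_of_nonneg hfnonneg]
    simp only [hpartial]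
    simpa using Filter.Tendsto.sub tendsto_const_nhds hglim
  constructor
  · exact hHasSum.summable
  · rw [hHasSum.tsum_eq]
    -- g 0 = x * Cfun x ^ 2
    have hinv : 1/q = (1-s)/(2*u) := by
      rw [hq_def, one_div_div, div_eq_div_iff (by positivity) (by positivity)]
      nlinarith [hu2, hs2]
    have hCval : x * Cfun x ^ 2 = (1/q)^2 := by
      have hu_ne : u ≠ 0 := ne_of_gt hu0
      rw [Cfun, hinv, ← hs_def, ← hu2, div_pow, div_pow]
      field_simp
    rw [hCval]
    simp only [hg_def]
    have hq4 : (q^2)^(0+2) = q^4 := by ring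
    rw [hq4, one_div_pow]
    have hu_ne : u ≠ 0 := ne_of_gt hu0
    have hq2' : 1 < q^2 := one_lt_pow₀ hq1 two_ne_zero
    have hq4' : 1 < q^4 := one_lt_pow₀ hq1 (by norm_num)
    have hq4pos : (0:ℝ) < q^4 - 1 := by linarith
    have hqu' : u * (q^2 + 1) = q := by
      have h := hqu
      field_simp at h
      linear_combination h
    rw [div_eq_div_iff (by positivity) (by positivity)]
    field_simp
    linear_combination (1 - q^2) * hqu'
end

section
/- For integers i > 1, s ≥ 1 and t ≥ 2 with s + t < n − 2i + 3, a_i(n,s,t) = Σ_{ℓ=2}^{m} (binomial(ℓ+t−1, ℓ) − 1)·a_{i−1}(n−t, s, ℓ), where m = n − s − t − 2i + 4. -/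
/-- `numLet i n s t` is the number of Catalan words of length `n` containing exactly `s`
letters equal to `i` and exactly `t` letters equal to `0`. -/
noncomputable def numLet (i n s t : ℕ) : ℕ :=
  Set.ncard {a : Fin n → ℕ | IsCatalanWord a ∧ countEq a i = s ∧ countEq a 0 = t}

open List

/-- condition (i) in list form -/
def C1 (l : List ℕ) : Prop := List.Chain' (fun x y => x ≤ y + 1) l

/-- condition (ii) in list form -/
def C2 (l : List ℕ) : Prop :=
  ∀ u k v, l = u ++ (k+1) :: v → (k+1) ∉ u → k ∈ u ∧ k ∈ v

def CWL (l : List ℕ) : Prop := C1 l ∧ C2 l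

def strip (l : List ℕ) : List ℕ := (l.filter (fun x => x ≠ 0)).map (· - 1)

def embed : List ℕ → List ℕ → List ℕ
  | [], _ => []
  | 0 :: b, [] => 1 :: embed b []
  | 0 :: b, c :: cs => 1 :: (List.replicate c 0 ++ embed b cs)
  | (k+1) :: b, cs => (k+2) :: embed b cs

def LSet (i n s t : ℕ) : Set (List ℕ) :=
  {l | l.length = n ∧ CWL l ∧ l.count i = s ∧ l.count 0 = t}

-- strip basics
lemma strip_append (u v : List ℕ) : strip (u ++ v) = strip u ++ strip v := by
  simp [strip]

lemma strip_cons_zero (l : List ℕ) : strip (0 :: l) = strip l := by simp [strip]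

lemma strip_cons_succ (k : ℕ) (l : List ℕ) : strip ((k+1) :: l) = k :: strip l := by
  simp [strip]

lemma strip_nil : strip [] = [] := rfl

lemma mem_strip (l : List ℕ) (k : ℕ) : k ∈ strip l ↔ (k+1) ∈ l := by
  induction l with
  | nil => simp [strip]
  | cons x l ih =>
    cases x with
    | zero => rw [strip_cons_zero]; simp [ih]
    | succ m => rw [strip_cons_succ]; simp [ih]

lemma strip_replicate (c : ℕ) : strip (List.replicate c 0) = [] := by
  induction c with
  | zero => rfl
  | succ c ih => rw [List.replicate_succ, strip_cons_zero, ih]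

lemma strip_embed (b cs : List ℕ) : strip (embed b cs) = b := by
  induction b generalizing cs with
  | nil => rfl
  | cons x b ih =>
    cases x with
    | zero =>
      cases cs with
      | nil => rw [show embed (0::b) [] = 1 :: embed b [] from rfl, strip_cons_succ, ih]
      | cons c cs =>
        rw [show embed (0::b) (c::cs) = 1 :: (List.replicate c 0 ++ embed b cs) from rfl,
          strip_cons_succ, strip_append, strip_replicate, ih]
        rfl
    | succ k =>
      rw [show embed ((k+1)::b) cs = (k+2) :: embed b cs from rfl, strip_cons_succ, ih]

lemma embed_head (x : ℕ) (b cs : List ℕ) :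
    ∃ tl, embed (x :: b) cs = (x+1) :: tl := by
  cases x with
  | zero => cases cs with
    | nil => exact ⟨embed b [], rfl⟩
    | cons c cs => exact ⟨List.replicate c 0 ++ embed b cs, rfl⟩
  | succ k => exact ⟨embed b cs, rfl⟩

lemma count_embed_succ (b cs : List ℕ) (k : ℕ) :
    (embed b cs).count (k+1) = b.count k := by
  induction b generalizing cs with
  | nil => rfl
  | cons x b ih =>
    cases x with
    | zero =>
      cases cs with
      | nil =>
        rw [show embed (0::b) [] = 1 :: embed b [] from rfl]
        rcases Nat.eq_zero_or_pos k with hk | hk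
        · subst hk; simp [List.count_cons, ih]
        · obtain ⟨p, rfl⟩ := Nat.exists_eq_add_of_lt hk
          simp only [Nat.zero_add]
          simp [List.count_cons, show ¬ (1 = p + 1 + 1) by omega]
          simpa using ih []
      | cons c cs =>
        rw [show embed (0::b) (c::cs) = 1 :: (List.replicate c 0 ++ embed b cs) from rfl]
        rcases Nat.eq_zero_or_pos k with hk | hk
        · subst hk; simp [List.count_cons, List.count_append, List.count_replicate, ih]
        · obtain ⟨p, rfl⟩ := Nat.exists_eq_add_of_lt hk
          simp only [Nat.zero_add]
          simp [List.count_cons, List.count_append, List.count_replicate,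
            show ¬ (1 = p + 1 + 1) by omega]
          simpa using ih cs
    | succ m =>
      rw [show embed ((m+1)::b) cs = (m+2) :: embed b cs from rfl]
      by_cases hmk : m + 1 = k
      · subst hmk; simp [List.count_cons, ih]
      · simp [List.count_cons, ih, hmk, show ¬ (m + 2 = k + 1) by omega]

lemma count_embed_zero (b cs : List ℕ) (h : cs.length = b.count 0) :
    (embed b cs).count 0 = cs.sum := by
  induction b generalizing cs with
  | nil =>
    simp at h
    subst h; rfl
  | cons x b ih =>
    cases x with
    | zero =>
      simp [List.count_cons] at h
      cases cs with
      | nil => simp at h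
      | cons c cs =>
        rw [show embed (0::b) (c::cs) = 1 :: (List.replicate c 0 ++ embed b cs) from rfl]
        simp at h
        simp [List.count_cons, List.count_append, List.count_replicate, ih cs h]
    | succ m =>
      rw [show embed ((m+1)::b) cs = (m+2) :: embed b cs from rfl]
      simp [List.count_cons] at h
      simp [List.count_cons, ih cs h]

lemma length_embed (b cs : List ℕ) (h : cs.length = b.count 0) :
    (embed b cs).length = b.length + cs.sum := by
  induction b generalizing cs with
  | nil =>
    simp at h
    subst h; rfl
  | cons x b ih =>
    cases x with
    | zero =>
      simp [List.count_cons] at h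
      cases cs with
      | nil => simp at h
      | cons c cs =>
        rw [show embed (0::b) (c::cs) = 1 :: (List.replicate c 0 ++ embed b cs) from rfl]
        simp at h
        simp [ih cs h]
        omega
    | succ m =>
      rw [show embed ((m+1)::b) cs = (m+2) :: embed b cs from rfl]
      simp [List.count_cons] at h
      simp [ih cs h]
      omega



-- chain lemmas
lemma c1_replicate_append (c : ℕ) (w : List ℕ) (h : C1 w) : C1 (List.replicate c 0 ++ w) := by
  induction c with
  | zero => simpa
  | succ c ih =>
    rw [List.replicate_succ, List.cons_append]
    exact List.isChain_cons.mpr ⟨fun y _ => by omega, ih⟩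

lemma c1_embed (b cs : List ℕ) (h : C1 b) : C1 (embed b cs) := by
  induction b generalizing cs with
  | nil => exact List.isChain_nil
  | cons x b ih =>
    have hb : C1 b := (List.isChain_cons.mp h).2
    cases x with
    | zero =>
      cases cs with
      | nil => exact List.isChain_cons.mpr ⟨fun y _ => by omega, ih [] hb⟩
      | cons c cs' =>
        exact List.isChain_cons.mpr
          ⟨fun y _ => by omega, c1_replicate_append _ _ (ih cs' hb)⟩
    | succ m =>
      rw [show embed ((m+1)::b) cs = (m+2) :: embed b cs from rfl]
      refine List.isChain_cons.mpr ⟨?_, ih cs hb⟩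
      intro y hy
      rcases b with _ | ⟨z, b'⟩
      · simp [embed] at hy
      · obtain ⟨tl, he⟩ := embed_head z b' cs
        rw [he] at hy; simp at hy; subst hy
        have : m + 1 ≤ z + 1 := (List.isChain_cons_cons.mp h).1
        omega

lemma c1_strip (a : List ℕ) (h : C1 a) : C1 (strip a) := by
  induction a with
  | nil => exact List.isChain_nil
  | cons x a ih =>
    have ha : C1 a := (List.isChain_cons.mp h).2
    cases x with
    | zero => rw [strip_cons_zero]; exact ih ha
    | succ m =>
      rw [strip_cons_succ]
      refine List.isChain_cons.mpr ⟨?_, ih ha⟩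
      intro y hy
      rcases a with _ | ⟨z, a'⟩
      · simp [strip] at hy
      · cases z with
        | zero =>
          have : m + 1 ≤ 0 + 1 := (List.isChain_cons_cons.mp h).1
          omega
        | succ p =>
          rw [strip_cons_succ] at hy
          simp at hy; subst hy
          have : m + 1 ≤ p + 1 + 1 := (List.isChain_cons_cons.mp h).1
          omega

-- split lemmas
lemma embed_head_ne_zero (b cs : List ℕ) : ∀ h ∈ (embed b cs).head?, h ≠ 0 := by
  cases b with
  | nil => simp [embed]
  | cons x b =>
    obtain ⟨tl, he⟩ := embed_head x b cs
    rw [he]; simp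

lemma exists_first_split {x : ℕ} {l : List ℕ} (h : x ∈ l) :
    ∃ u v, l = u ++ x :: v ∧ x ∉ u := by
  induction l with
  | nil => simp at h
  | cons y l ih =>
    by_cases hxy : y = x
    · exact ⟨[], l, by rw [hxy]; rfl, by simp⟩
    · rcases List.mem_cons.mp h with h1 | h1
      · exact absurd h1.symm hxy
      · obtain ⟨u, v, he, hu⟩ := ih h1
        refine ⟨y :: u, v, by rw [he]; rfl, ?_⟩
        intro hm
        rcases List.mem_cons.mp hm with h2 | h2
        · exact hxy h2.symm
        · exact hu h2

lemma first_split_unique {x : ℕ} {u v u' v' : List ℕ}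
    (h : u ++ x :: v = u' ++ x :: v') (hu : x ∉ u) (hu' : x ∉ u') : u = u' ∧ v = v' := by
  induction u generalizing u' with
  | nil =>
    cases u' with
    | nil => simpa using h
    | cons z u' =>
      simp at h
      exact absurd (h.1 ▸ (List.mem_cons_self (a := z) (l := u'))) (h.1 ▸ hu')
  | cons y u ih =>
    cases u' with
    | nil =>
      simp at h
      exact absurd (h.1 ▸ (List.mem_cons_self (a := y) (l := u))) (h.1 ▸ hu)
    | cons z u' =>
      simp at h
      obtain ⟨rfl, h2⟩ := h
      have := ih h2 (fun hx => hu (List.mem_cons_of_mem _ hx))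
        (fun hx => hu' (List.mem_cons_of_mem _ hx))
      exact ⟨by rw [this.1], this.2⟩

lemma lift_split {a u' v' : List ℕ} {k : ℕ} (h : strip a = u' ++ (k+1) :: v') :
    ∃ u v, a = u ++ (k+2) :: v ∧ strip u = u' ∧ strip v = v' := by
  induction a generalizing u' with
  | nil => simp [strip] at h
  | cons x a ih =>
    cases x with
    | zero =>
      rw [strip_cons_zero] at h
      obtain ⟨u, v, rfl, h1, h2⟩ := ih h
      exact ⟨0 :: u, v, rfl, by rw [strip_cons_zero]; exact h1, h2⟩
    | succ m =>
      rw [strip_cons_succ] at h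
      cases u' with
      | nil =>
        simp at h
        obtain ⟨h1, h2⟩ := h
        subst h1
        exact ⟨[], a, rfl, rfl, h2⟩
      | cons y u' =>
        rw [List.cons_append] at h
        injection h with hy h2
        subst hy
        obtain ⟨u, v, rfl, h3, h4⟩ := ih h2
        exact ⟨(m+1) :: u, v, rfl, by rw [strip_cons_succ, h3], h4⟩

lemma replicate_peel {c c' : ℕ} {e e' : List ℕ}
    (he : ∀ h ∈ e.head?, h ≠ 0) (he' : ∀ h ∈ e'.head?, h ≠ 0)
    (h : List.replicate c 0 ++ e = List.replicate c' 0 ++ e') : c = c' ∧ e = e' := by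
  induction c generalizing c' with
  | zero =>
    cases c' with
    | zero => simpa using h
    | succ d =>
      exfalso
      rw [List.replicate_succ] at h
      simp at h
      rw [h] at he
      simp at he
  | succ d ih =>
    cases c' with
    | zero =>
      exfalso
      rw [List.replicate_succ] at h
      simp at h
      rw [← h] at he'
      simp at he'
    | succ d' =>
      rw [List.replicate_succ, List.replicate_succ] at h
      simp only [List.cons_append, List.cons.injEq] at h
      obtain ⟨d_eq, e_eq⟩ := ih h.2
      exact ⟨by omega, e_eq⟩

lemma embed_inj_cs {b cs cs' : List ℕ} (h : embed b cs = embed b cs')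
    (h1 : cs.length = b.count 0) (h2 : cs'.length = b.count 0) : cs = cs' := by
  induction b generalizing cs cs' with
  | nil =>
    simp at h1 h2
    rw [h1, h2]
  | cons x b ih =>
    cases x with
    | zero =>
      simp [List.count_cons] at h1 h2
      cases cs with
      | nil => simp at h1
      | cons c ct =>
        cases cs' with
        | nil => simp at h2
        | cons c' ct' =>
          simp at h1 h2
          rw [show embed (0::b) (c::ct) = 1 :: (List.replicate c 0 ++ embed b ct) from rfl,
            show embed (0::b) (c'::ct') = 1 :: (List.replicate c' 0 ++ embed b ct') from rfl] at h
          simp only [List.cons.injEq, true_and] at h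
          obtain ⟨hc, he⟩ := replicate_peel (embed_head_ne_zero b ct) (embed_head_ne_zero b ct') h
          rw [hc, ih he h1 h2]
    | succ m =>
      simp [List.count_cons] at h1 h2
      rw [show embed ((m+1)::b) cs = (m+2) :: embed b cs from rfl,
        show embed ((m+1)::b) cs' = (m+2) :: embed b cs' from rfl] at h
      simp only [List.cons.injEq, true_and] at h
      exact ih h h1 h2

-- C2 lemmas
lemma c2_head {l : List ℕ} (h : C2 l) (hne : l ≠ []) : ∃ l', l = 0 :: l' := by
  cases l with
  | nil => exact absurd rfl hne
  | cons x l' =>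
    cases x with
    | zero => exact ⟨l', rfl⟩
    | succ k => exact absurd (h [] k l' rfl (by simp)).1 (by simp)

lemma c2_mem_down {l : List ℕ} (h : C2 l) {k : ℕ} (hk : (k+1) ∈ l) : k ∈ l := by
  obtain ⟨u, v, rfl, hu⟩ := exists_first_split hk
  exact List.mem_append_left _ (h u k v rfl hu).1

lemma c2_mem_le {l : List ℕ} (h : C2 l) {x k : ℕ} (hx : x ∈ l) (hk : k ≤ x) : k ∈ l := by
  induction x with
  | zero => rw [Nat.le_zero.mp hk]; exact hx
  | succ m ih =>
    by_cases hkm : k = m + 1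
    · exact hkm ▸ hx
    · exact ih (c2_mem_down h hx) (by omega)

lemma c2_count_two {l : List ℕ} (h : C2 l) {k : ℕ} (hk : (k+1) ∈ l) : 2 ≤ l.count k := by
  obtain ⟨u, v, rfl, hu⟩ := exists_first_split hk
  obtain ⟨h1, h2⟩ := h u k v rfl hu
  rw [List.count_append, List.count_cons]
  have c1 : 0 < u.count k := List.count_pos_iff.mpr h1
  have c2 : 0 < v.count k := List.count_pos_iff.mpr h2
  simp [show ¬ (k + 1 = k) by omega]
  omega

-- counts vs length
lemma sum_count_le (S : Finset ℕ) (l : List ℕ) : (∑ v ∈ S, l.count v) ≤ l.length := by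
  classical
  induction l with
  | nil => simp
  | cons x l ih =>
    have hc : ∀ v, (x :: l).count v = l.count v + if v = x then 1 else 0 := by
      intro v
      rw [List.count_cons]
      by_cases hvx : v = x
      · simp [hvx]
      · simp [hvx, Ne.symm hvx]
    simp only [hc, Finset.sum_add_distrib, Finset.sum_ite_eq', List.length_cons]
    by_cases hx : x ∈ S
    · simp [hx]; omega
    · simp [hx]; omega

lemma cwl_letter_bound {l : List ℕ} (h : C2 l) {x : ℕ} (hx : x ∈ l) : x < l.length := by
  classical
  have hsub : Finset.range (x+1) ⊆ l.toFinset := by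
    intro k hkm
    rw [List.mem_toFinset]
    exact c2_mem_le h hx (by simpa using Nat.lt_succ_iff.mp (Finset.mem_range.mp hkm))
  have := Finset.card_le_card hsub
  rw [Finset.card_range] at this
  have := List.toFinset_card_le l
  omega

-- decomposition
lemma decompose_aux : ∀ (N : ℕ) (w : List ℕ), w.length ≤ N →
    List.Chain' (fun x y => y = 0 → x ≤ 1) w → (∀ h ∈ w.head?, h ≠ 0) →
    ∃ b cs, w = embed b cs ∧ cs.length = b.count 0 := by
  intro N
  induction N with
  | zero =>
    intro w hw _ _
    rw [Nat.le_zero, List.length_eq_zero_iff] at hw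
    exact ⟨[], [], by rw [hw]; rfl, rfl⟩
  | succ N ih =>
    intro w hw hc hh
    cases w with
    | nil => exact ⟨[], [], rfl, rfl⟩
    | cons x w' =>
      cases x with
      | zero => exact absurd rfl (hh 0 rfl)
      | succ m =>
        cases m with
        | zero =>
          set T := w'.takeWhile (fun y => y == 0) with hT
          set D := w'.dropWhile (fun y => y == 0) with hD
          have hTD : T ++ D = w' := List.takeWhile_append_dropWhile
          have hTrep : T = List.replicate T.length 0 := by
            apply List.eq_replicate_of_mem
            intro b hb
            have := List.mem_takeWhile_imp hb
            simpa using this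
          have hDsuf : D <:+ w' := List.dropWhile_suffix _
          have hDlen : D.length ≤ N := by
            have := hDsuf.length_le
            simp at hw
            omega
          have hDchain : List.Chain' (fun x y => y = 0 → x ≤ 1) D :=
            hc.suffix (hDsuf.trans (List.suffix_cons 1 w'))
          have hDhead : ∀ h ∈ D.head?, h ≠ 0 := by
            intro h hmem
            have := List.head?_dropWhile_not (fun y => y == 0) w'
            rw [← hD] at this
            cases hD' : D.head? with
            | none => rw [hD'] at hmem; simp at hmem
            | some z =>
              rw [hD'] at hmem this
              simp at hmem this
              rw [hmem] at this
              exact this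
          obtain ⟨b, cs, hbcs, hlen⟩ := ih D hDlen hDchain hDhead
          refine ⟨0 :: b, T.length :: cs, ?_, ?_⟩
          · rw [show embed (0::b) (T.length::cs) = 1 :: (List.replicate T.length 0 ++ embed b cs) from rfl]
            rw [← hbcs, ← hTrep, hTD]
          · simp [List.count_cons, hlen]
        | succ p =>
          have hw' : w'.length ≤ N := by simp at hw; omega
          have hchain' : List.Chain' (fun x y => y = 0 → x ≤ 1) w' :=
            (List.isChain_cons.mp hc).2
          have hhead' : ∀ h ∈ w'.head?, h ≠ 0 := by
            intro h hmem hzero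
            have := (List.isChain_cons.mp hc).1 h hmem hzero
            omega
          obtain ⟨b, cs, hbcs, hlen⟩ := ih w' hw' hchain' hhead'
          refine ⟨(p+1) :: b, cs, ?_, ?_⟩
          · rw [show embed ((p+1)::b) cs = (p+2) :: embed b cs from rfl, ← hbcs]
          · simpa [List.count_cons] using hlen

lemma decompose (w : List ℕ) (hc : List.Chain' (fun x y => y = 0 → x ≤ 1) w)
    (hh : ∀ h ∈ w.head?, h ≠ 0) : ∃ b cs, w = embed b cs ∧ cs.length = b.count 0 :=
  decompose_aux w.length w le_rfl hc hh

-- C2 transfer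
lemma c2_strip {a : List ℕ} (h : C2 a) : C2 (strip a) := by
  intro u' k v' hsplit hnotmem
  obtain ⟨u, v, rfl, hu, hv⟩ := lift_split hsplit
  have hnm : (k+2) ∉ u := fun hm => hnotmem (hu ▸ (mem_strip u (k+1)).mpr hm)
  obtain ⟨m1, m2⟩ := h u (k+1) v rfl hnm
  exact ⟨hu ▸ (mem_strip u k).mpr m1, hv ▸ (mem_strip v k).mpr m2⟩

lemma c2_construct {b cs : List ℕ} {c₀ : ℕ} (hb : C2 b) (hc₀ : 1 ≤ c₀)
    (hL : cs.length = b.count 0) (hb0 : 0 ∈ b) (hsum : 1 ≤ cs.sum) :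
    C2 (List.replicate c₀ 0 ++ embed b cs) := by
  intro u k v he hu
  cases k with
  | succ k =>
    have hs : strip (List.replicate c₀ 0 ++ embed b cs) = b := by
      rw [strip_append, strip_replicate, strip_embed, List.nil_append]
    rw [he, strip_append, strip_cons_succ] at hs
    have h1 : (k+1) ∉ strip u := fun hm => hu ((mem_strip u (k+1)).mp hm)
    obtain ⟨m1, m2⟩ := hb (strip u) k (strip v) hs.symm h1
    exact ⟨(mem_strip u k).mp m1, (mem_strip v k).mp m2⟩
  | zero =>
    obtain ⟨b', rfl⟩ := c2_head hb (List.ne_nil_of_mem hb0)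
    obtain ⟨c, ct, rfl⟩ : ∃ c ct, cs = c :: ct := by
      cases cs with
      | nil => simp [List.count_cons] at hL
      | cons c ct => exact ⟨c, ct, rfl⟩
    have hL' : ct.length = b'.count 0 := by
      simp [List.count_cons] at hL
      omega
    have hE : List.replicate c₀ 0 ++ embed (0::b') (c::ct) =
        List.replicate c₀ 0 ++ 1 :: (List.replicate c 0 ++ embed b' ct) := rfl
    have h0 : (1:ℕ) ∉ List.replicate c₀ 0 := by simp [List.mem_replicate]
    have heq : u ++ (1:ℕ) :: v =
        List.replicate c₀ 0 ++ 1 :: (List.replicate c 0 ++ embed b' ct) := by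
      rw [← he]; rfl
    obtain ⟨hu', hv'⟩ := first_split_unique heq hu h0
    constructor
    · rw [hu']; simp [List.mem_replicate]; omega
    · rw [hv']
      rw [← List.count_pos_iff]
      rw [List.count_append, count_embed_zero b' ct hL', List.count_replicate]
      simp at hsum ⊢
      omega
  

-- transfer from Fin-world
lemma countEq_eq_count {n : ℕ} (a : Fin n → ℕ) (c : ℕ) :
    countEq a c = (List.ofFn a).count c := by
  classical
  rw [countEq]
  rw [show {i | a i = c} = ↑(Finset.univ.filter (fun i => a i = c)) by ext; simp]
  rw [Set.ncard_coe_finset]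
  rw [List.ofFn_eq_map, List.count_eq_countP, List.countP_map]
  rw [Fin.univ_def]
  rw [show (Finset.filter (fun x => a x = c)
      { val := ↑(List.finRange n), nodup := by exact (List.nodup_finRange n) } : Finset (Fin n)) =
      { val := Multiset.filter (fun x => a x = c) ↑(List.finRange n),
        nodup := by exact Multiset.Nodup.filter _ (List.nodup_finRange n) } from rfl]
  rw [Finset.card_mk, Multiset.filter_coe, Multiset.coe_card]
  rw [List.countP_eq_length_filter]
  have : (fun b => decide (a b = c)) = ((fun x : ℕ => x == c) ∘ a) := by
    funext x
    rfl
  rw [this]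

lemma isCatalanWord_iff {n : ℕ} (a : Fin n → ℕ) :
    IsCatalanWord a ↔ CWL (List.ofFn a) := by
  constructor
  · rintro ⟨hA, hB⟩
    constructor
    · rw [C1]; refine List.isChain_iff_getElem.mpr ?_
      intro j hj
      have hj' : j + 1 < n := by simp at hj; omega
      simpa [List.get_ofFn] using hA j hj'
    · intro u k v hsplit hnm
      have hlen : n = u.length + (v.length + 1) := by
        have := congrArg List.length hsplit; simpa using this
      have hp : u.length < n := by omega
      have hgetp : a ⟨u.length, hp⟩ = k + 1 := by
        have h1 : (List.ofFn a)[u.length]'(by simp; omega) = k + 1 := by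
          rw [List.getElem_of_eq hsplit]
          simp [List.getElem_append]
        rwa [List.getElem_ofFn] at h1
      have hmin : ∀ j : Fin n, a j = a ⟨u.length, hp⟩ → (⟨u.length, hp⟩ : Fin n) ≤ j := by
        intro j hj
        by_contra hlt
        push_neg at hlt
        have hju : (j : ℕ) < u.length := hlt
        have hg : u[(j:ℕ)] = k + 1 := by
          have h1 : (List.ofFn a)[(j:ℕ)]'(by simpa using j.isLt) = u[(j:ℕ)] := by
            rw [List.getElem_of_eq hsplit]
            simp [List.getElem_append, hju]
          rw [List.getElem_ofFn] at h1
          rw [← h1]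
          rw [show (⟨(j:ℕ), j.isLt⟩ : Fin n) = j from Fin.eta j j.isLt]
          rw [hj, hgetp]
        exact hnm (hg ▸ List.getElem_mem hju)
      obtain ⟨⟨i₁, hi₁lt, hi₁⟩, ⟨i₂, hi₂lt, hi₂⟩⟩ :=
        hB ⟨u.length, hp⟩ (by rw [hgetp]; omega) hmin
      rw [hgetp] at hi₁ hi₂
      constructor
      · have hi₁u : (i₁ : ℕ) < u.length := hi₁lt
        have hg : u[(i₁:ℕ)] = k := by
          have h1 : (List.ofFn a)[(i₁:ℕ)]'(by simpa using i₁.isLt) = u[(i₁:ℕ)] := by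
            rw [List.getElem_of_eq hsplit]
            simp [List.getElem_append, hi₁u]
          rw [List.getElem_ofFn] at h1
          rw [← h1]
          rw [show (⟨(i₁:ℕ), i₁.isLt⟩ : Fin n) = i₁ from Fin.eta i₁ i₁.isLt]
          omega
        exact hg ▸ List.getElem_mem hi₁u
      · have hi₂p : u.length < (i₂ : ℕ) := hi₂lt
        have hq : (i₂:ℕ) - (u.length + 1) < v.length := by
          have := i₂.isLt; omega
        have hg : v[(i₂:ℕ) - (u.length + 1)] = k := by
          have h1 : (List.ofFn a)[(i₂:ℕ)]'(by simpa using i₂.isLt) =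
              v[(i₂:ℕ) - (u.length + 1)] := by
            rw [List.getElem_of_eq (show List.ofFn a = (u ++ [k+1]) ++ v by
              rw [hsplit]; simp)]
            rw [List.getElem_append]
            have hL : ¬ ((i₂:ℕ) < (u ++ [k+1]).length) := by simp; omega
            rw [dif_neg hL]
            congr 1
            simp
          rw [List.getElem_ofFn] at h1
          rw [← h1]
          rw [show (⟨(i₂:ℕ), i₂.isLt⟩ : Fin n) = i₂ from Fin.eta i₂ i₂.isLt]
          omega
        exact hg ▸ List.getElem_mem hq
  · rintro ⟨h1, h2⟩
    constructor
    · intro j hj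
      have := List.isChain_iff_getElem.mp h1 j (by simp; omega)
      simpa [List.get_ofFn] using this
    · intro p hpos hmin
      obtain ⟨k, hk⟩ := Nat.exists_eq_succ_of_ne_zero hpos.ne'
      have hplen : (p:ℕ) < (List.ofFn a).length := by simpa using p.isLt
      have hgetp : (List.ofFn a)[(p:ℕ)]'hplen = k + 1 := by
        rw [List.getElem_ofFn]
        rw [show (⟨(p:ℕ), p.isLt⟩ : Fin n) = p from Fin.eta p p.isLt]
        exact hk
      have hsplit : List.ofFn a =
          (List.ofFn a).take (p:ℕ) ++ (k+1) :: (List.ofFn a).drop ((p:ℕ)+1) := by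
        conv_lhs => rw [← List.take_append_drop (p:ℕ) (List.ofFn a)]
        rw [List.drop_eq_getElem_cons hplen, hgetp]
      have hnm : (k+1) ∉ (List.ofFn a).take (p:ℕ) := by
        intro hm
        obtain ⟨j, hjlt, hjget⟩ := List.mem_iff_getElem.mp hm
        have hjp : j < (p:ℕ) := by simp at hjlt; omega
        have hjn : j < n := by have := p.isLt; omega
        have hval : a ⟨j, hjn⟩ = k + 1 := by
          rw [List.getElem_take] at hjget
          rwa [List.getElem_ofFn] at hjget
        have := hmin ⟨j, hjn⟩ (by rw [hval, hk])
        rw [Fin.le_def] at this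
        simp at this
        omega
      obtain ⟨m1, m2⟩ := h2 ((List.ofFn a).take (p:ℕ)) k ((List.ofFn a).drop ((p:ℕ)+1))
        hsplit hnm
      constructor
      · obtain ⟨j, hjlt, hjget⟩ := List.mem_iff_getElem.mp m1
        have hjp : j < (p:ℕ) := by simp at hjlt; omega
        have hjn : j < n := by have := p.isLt; omega
        refine ⟨⟨j, hjn⟩, ?_, ?_⟩
        · exact hjp
        · rw [List.getElem_take, List.getElem_ofFn] at hjget
          rw [hjget, hk]
      · obtain ⟨j, hjlt, hjget⟩ := List.mem_iff_getElem.mp m2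
        have hjn : (p:ℕ) + 1 + j < n := by simp at hjlt; omega
        refine ⟨⟨(p:ℕ) + 1 + j, hjn⟩, ?_, ?_⟩
        · show (p:ℕ) < (p:ℕ) + 1 + j; omega
        · rw [List.getElem_drop, List.getElem_ofFn] at hjget
          rw [hjget, hk]

lemma lset_eq_image (i n s t : ℕ) : LSet i n s t =
    List.ofFn '' {a : Fin n → ℕ | IsCatalanWord a ∧ countEq a i = s ∧ countEq a 0 = t} := by
  ext l
  constructor
  · rintro ⟨hlen, hcw, hci, hc0⟩
    subst hlen
    refine ⟨fun j => l[(j:ℕ)], ?_, (List.ofFn_getElem (xs := l))⟩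
    rw [Set.mem_setOf_eq, isCatalanWord_iff, countEq_eq_count, countEq_eq_count,
      List.ofFn_getElem]
    exact ⟨hcw, hci, hc0⟩
  · rintro ⟨a, ⟨hcw, hci, hc0⟩, rfl⟩
    rw [isCatalanWord_iff] at hcw
    rw [countEq_eq_count] at hci hc0
    exact ⟨by simp, hcw, hci, hc0⟩

lemma numLet_eq_ncard (i n s t : ℕ) : numLet i n s t = (LSet i n s t).ncard := by
  rw [numLet, lset_eq_image, Set.ncard_image_of_injective _ List.ofFn_injective]

lemma lset_finite (i n s t : ℕ) : (LSet i n s t).Finite := by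
  apply Set.Finite.subset (Set.Finite.image (fun l : List (Fin (n+1)) => l.map Fin.val)
    (List.finite_length_eq (Fin (n+1)) n))
  rintro l ⟨hlen, hcw, _, _⟩
  have hbound : ∀ x ∈ l, x < n + 1 := by
    intro x hx
    have := cwl_letter_bound hcw.2 hx
    omega
  refine ⟨l.attach.map (fun p => (⟨p.1, hbound p.1 p.2⟩ : Fin (n+1))), ?_, ?_⟩
  · simp [hlen]
  · simp [List.map_map]

-- ncard of biUnion
lemma ncard_biUnion {ι α : Type*} [DecidableEq ι] (S : Finset ι) (f : ι → Set α)
    (hf : ∀ i ∈ S, (f i).Finite)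
    (hd : ∀ i ∈ S, ∀ j ∈ S, i ≠ j → Disjoint (f i) (f j)) :
    (⋃ i ∈ S, f i).ncard = ∑ i ∈ S, (f i).ncard := by
  classical
  induction S using Finset.induction with
  | empty => simp
  | @insert a S ha ih =>
    rw [Finset.sum_insert ha]
    rw [Finset.set_biUnion_insert]
    rw [Set.ncard_union_eq ?dis ?f1 ?f2]
    · rw [ih (fun i hi => hf i (Finset.mem_insert_of_mem hi))
        (fun i hi j hj hij => hd i (Finset.mem_insert_of_mem hi) j
          (Finset.mem_insert_of_mem hj) hij)]
    case dis =>
      rw [Set.disjoint_iUnion_right]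
      intro i
      rw [Set.disjoint_iUnion_right]
      intro hi
      exact hd a (Finset.mem_insert_self a S) i (Finset.mem_insert_of_mem hi)
        (fun he => ha (he ▸ hi))
    case f1 => exact hf a (Finset.mem_insert_self a S)
    case f2 =>
      apply Set.Finite.biUnion (S.finite_toSet)
      intro i hi
      exact hf i (Finset.mem_insert_of_mem hi)

lemma ncard_prod {α β : Type*} (s : Set α) (t : Set β) :
    (s ×ˢ t).ncard = s.ncard * t.ncard := by
  rw [← Nat.card_coe_set_eq, ← Nat.card_coe_set_eq, ← Nat.card_coe_set_eq,
    ← Nat.card_prod]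
  exact Nat.card_congr (Equiv.Set.prod s t)

-- counting compositions
lemma ncard_len_sum_le (L : ℕ) : ∀ (B : ℕ),
    {cs : List ℕ | cs.length = L ∧ cs.sum ≤ B}.Finite ∧
    {cs : List ℕ | cs.length = L ∧ cs.sum ≤ B}.ncard = (B + L).choose L := by
  induction L with
  | zero =>
    intro B
    have he : {cs : List ℕ | cs.length = 0 ∧ cs.sum ≤ B} = {([] : List ℕ)} := by
      ext cs
      simp [List.length_eq_zero_iff]
      intro h; rw [h]; simp
    rw [he]
    exact ⟨Set.finite_singleton _, by simp⟩
  | succ L ih =>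
    intro B
    have he : {cs : List ℕ | cs.length = L + 1 ∧ cs.sum ≤ B} =
        ⋃ c ∈ Finset.range (B+1),
          (fun ct => c :: ct) '' {ct : List ℕ | ct.length = L ∧ ct.sum ≤ B - c} := by
      ext cs
      constructor
      · rintro ⟨hlen, hsum⟩
        cases cs with
        | nil => simp at hlen
        | cons c ct =>
          simp at hlen hsum
          rw [Set.mem_iUnion₂]
          exact ⟨c, Finset.mem_range.mpr (by omega), ct, ⟨hlen, by omega⟩, rfl⟩
      · intro hm
        rw [Set.mem_iUnion] at hm
        obtain ⟨c, hc⟩ := hm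
        rw [Set.mem_iUnion] at hc
        obtain ⟨hcr, ct, ⟨h1, h2⟩, rfl⟩ := hc
        rw [Finset.mem_range] at hcr
        constructor
        · simp [h1]
        · simp; omega
    constructor
    · rw [he]
      apply Set.Finite.biUnion (Finset.range (B+1)).finite_toSet
      intro c _
      exact Set.Finite.image _ (ih (B - c)).1
    · rw [he]
      rw [ncard_biUnion]
      · have hterm : ∀ c ∈ Finset.range (B+1),
            ((fun ct => c :: ct) '' {ct : List ℕ | ct.length = L ∧ ct.sum ≤ B - c}).ncard
              = (B - c + L).choose L := by
          intro c _
          rw [Set.ncard_image_of_injective _ (fun x y h => by injection h)]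
          exact (ih (B - c)).2
        rw [Finset.sum_congr rfl hterm]
        have hrefl : ∑ c ∈ Finset.range (B+1), (B - c + L).choose L
            = ∑ c ∈ Finset.range (B+1), (c + L).choose L := by
          rw [← Finset.sum_range_reflect]
          apply Finset.sum_congr rfl
          intro c hc
          rw [Finset.mem_range] at hc
          congr 2
          omega
        rw [hrefl]
        have hIcc := Nat.sum_Icc_choose (B + L) L
        rw [show Finset.Icc L (B+L) = Finset.Ico L (B+L+1) by rw [Finset.Ico_add_one_right_eq_Icc],
          Finset.sum_Ico_eq_sum_range, show B + L + 1 - L = B + 1 by omega] at hIcc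
        rw [show B + (L+1) = B + L + 1 by omega, ← hIcc]
        apply Finset.sum_congr rfl
        intro c _
        congr 1
        omega
      · intro c _
        exact Set.Finite.image _ (ih (B - c)).1
      · intro c₁ _ c₂ _ hne
        rw [Set.disjoint_left]
        rintro x ⟨ct₁, _, rfl⟩ ⟨ct₂, _, hx⟩
        exact hne (by injection hx with h1 h2; exact h1.symm)


def Cset (t L : ℕ) : Set (ℕ × List ℕ) :=
  {p | 1 ≤ p.1 ∧ p.2.length = L ∧ p.1 + p.2.sum = t ∧ 1 ≤ p.2.sum}

lemma cset_eq_image (t L : ℕ) (ht : 1 ≤ t) :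
    Cset t L = (fun cs => (t - cs.sum, cs)) ''
      {cs : List ℕ | cs.length = L ∧ cs.sum ≤ t - 1 ∧ 1 ≤ cs.sum} := by
  ext ⟨c₀, cs⟩
  constructor
  · rintro ⟨h1, h2, h3, h4⟩
    dsimp only at h1 h2 h3 h4
    exact ⟨cs, ⟨h2, by omega, h4⟩, by simp; omega⟩
  · rintro ⟨cs', ⟨h1, h2, h3⟩, he⟩
    rw [Prod.ext_iff] at he
    dsimp only at he
    obtain ⟨he1, he2⟩ := he
    subst he2
    refine ⟨?_, ?_, ?_, ?_⟩ <;> dsimp only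
    · omega
    · exact h1
    · omega
    · exact h3

lemma cset_finite (t L : ℕ) (ht : 1 ≤ t) : (Cset t L).Finite := by
  rw [cset_eq_image t L ht]
  apply Set.Finite.image
  apply Set.Finite.subset (ncard_len_sum_le L (t-1)).1
  intro cs ⟨h1, h2, _⟩
  exact ⟨h1, h2⟩

lemma cset_ncard (t L : ℕ) (ht : 1 ≤ t) :
    (Cset t L).ncard = (L + t - 1).choose L - 1 := by
  rw [cset_eq_image t L ht]
  rw [Set.ncard_image_of_injOn (fun x _ y _ h => by simp at h; exact h.2)]
  have hset : {cs : List ℕ | cs.length = L ∧ cs.sum ≤ t - 1 ∧ 1 ≤ cs.sum} =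
      {cs : List ℕ | cs.length = L ∧ cs.sum ≤ t - 1} \ {List.replicate L 0} := by
    ext cs
    constructor
    · rintro ⟨h1, h2, h3⟩
      refine ⟨⟨h1, h2⟩, ?_⟩
      intro hmem
      rw [Set.mem_singleton_iff] at hmem
      rw [hmem] at h3
      simp [List.sum_replicate] at h3
    · rintro ⟨⟨h1, h2⟩, hmem⟩
      refine ⟨h1, h2, ?_⟩
      by_contra hc
      push_neg at hc
      have hz : cs.sum = 0 := by omega
      apply hmem
      rw [Set.mem_singleton_iff]
      have : ∀ x ∈ cs, x = 0 := by
        intro x hx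
        by_contra hxz
        have := List.single_le_sum (fun y _ => Nat.zero_le y) x hx
        omega
      rw [List.eq_replicate_of_mem this, h1]
  rw [hset]
  rw [Set.ncard_diff_singleton_of_mem
    (show List.replicate L 0 ∈ {cs : List ℕ | cs.length = L ∧ cs.sum ≤ t - 1} from
      ⟨by simp, by simp [List.sum_replicate]⟩)]
  rw [(ncard_len_sum_le L (t-1)).2]
  rw [show t - 1 + L = L + t - 1 by omega]

/-- the gluing map -/
def glue (p : (ℕ × List ℕ) × List ℕ) : List ℕ :=
  List.replicate p.1.1 0 ++ embed p.2 p.1.2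

lemma glue_image (i s t n L : ℕ) (hi : 2 ≤ i) (hs : 1 ≤ s) (ht : 2 ≤ t) (hL : 2 ≤ L)
    (htn : t ≤ n) :
    glue '' (Cset t L ×ˢ LSet (i-1) (n-t) s L) = LSet i n s t ∩ {l | l.count 1 = L} := by
  ext a
  constructor
  · rintro ⟨⟨⟨c₀, cs⟩, b⟩, ⟨⟨hc1, hc2, hc3, hc4⟩, hb1, ⟨hbC1, hbC2⟩, hb3, hb4⟩, rfl⟩
    simp only [glue]
    dsimp only at hc1 hc2 hc3 hc4 hb1 hb3 hb4
    have hLb : cs.length = b.count 0 := by rw [hc2, hb4]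
    have hb0 : (0:ℕ) ∈ b := List.count_pos_iff.mp (by rw [hb4]; omega)
    have hcnt1 : (List.replicate c₀ 0 ++ embed b cs).count 1 = L := by
      rw [List.count_append, List.count_replicate, count_embed_succ b cs 0, hb4]
      simp
    refine ⟨⟨?_, ⟨?_, ?_⟩, ?_, ?_⟩, hcnt1⟩
    · rw [List.length_append, List.length_replicate, length_embed b cs hLb, hb1]
      omega
    · exact c1_replicate_append _ _ (c1_embed _ _ hbC1)
    · exact c2_construct hbC2 hc1 hLb hb0 hc4
    · rw [List.count_append, List.count_replicate, show i = (i-1)+1 by omega,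
        count_embed_succ b cs (i-1), hb3, if_neg (by simp)]
      omega
    · rw [List.count_append, List.count_replicate, count_embed_zero b cs hLb,
        if_pos (by simp)]
      omega
  · rintro ⟨⟨hlen, ⟨haC1, haC2⟩, hci, hc0⟩, hc1⟩
    simp only [Set.mem_setOf_eq] at hc1
    have hane : a ≠ [] := by
      intro he
      rw [he] at hci
      simp at hci
      omega
    -- decompose a
    set T := a.takeWhile (fun y => y == 0) with hT
    set D := a.dropWhile (fun y => y == 0) with hD
    have hTD : T ++ D = a := List.takeWhile_append_dropWhile
    have hTrep : T = List.replicate T.length 0 := by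
      apply List.eq_replicate_of_mem
      intro b hb
      simpa using List.mem_takeWhile_imp hb
    have hDchain : List.Chain' (fun x y => y = 0 → x ≤ 1) D := by
      apply List.IsChain.suffix _ (List.dropWhile_suffix _)
      exact haC1.imp (fun {x y} hxy hy => by omega)
    have hDhead : ∀ hd ∈ D.head?, hd ≠ 0 := by
      intro hd hmem
      have := List.head?_dropWhile_not (fun y => y == 0) a
      rw [← hD] at this
      cases hD' : D.head? with
      | none => rw [hD'] at hmem; simp at hmem
      | some z =>
        rw [hD'] at hmem this
        simp at hmem this
        rw [← hmem]
        exact this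
    obtain ⟨b, cs, hbcs, hLb⟩ := decompose D hDchain hDhead
    have haglue : a = List.replicate T.length 0 ++ embed b cs := by
      rw [← hTD, ← hTrep, hbcs]
    -- b = strip a
    have hstrip : strip a = b := by
      rw [haglue, strip_append, strip_replicate, strip_embed, List.nil_append]
    have hbC2 : C2 b := hstrip ▸ c2_strip haC2
    have hbC1 : C1 b := hstrip ▸ c1_strip a haC1
    -- counts
    have hcount0b : b.count 0 = L := by
      rw [← hc1, haglue, List.count_append, List.count_replicate,
        count_embed_succ b cs 0]
      simp
    have hcountib : b.count (i-1) = s := by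
      rw [← hci, haglue, List.count_append, List.count_replicate,
        show i = (i-1)+1 by omega, count_embed_succ b cs (i-1)]
      simp
    have hcount0a : T.length + cs.sum = t := by
      rw [← hc0, haglue, List.count_append, List.count_replicate,
        count_embed_zero b cs hLb]
      simp
    have hlenb : b.length = n - t := by
      have := hlen
      rw [haglue, List.length_append, List.length_replicate, length_embed b cs hLb] at this
      omega
    have hc₀pos : 1 ≤ T.length := by
      obtain ⟨a', ha'⟩ := c2_head haC2 hane
      rw [ha'] at hT
      rw [hT, List.takeWhile_cons]
      simp
    have hbne : b ≠ [] := by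
      intro he
      rw [he] at hcount0b
      simp at hcount0b
      omega
    have hsum : 1 ≤ cs.sum := by
      obtain ⟨b', hb'⟩ := c2_head hbC2 hbne
      obtain ⟨c, ct, hct⟩ : ∃ c ct, cs = c :: ct := by
        cases cs with
        | nil =>
          rw [hb'] at hLb
          simp [List.count_cons] at hLb
        | cons c ct => exact ⟨c, ct, rfl⟩
      have hLct : ct.length = b'.count 0 := by
        rw [hb', hct] at hLb
        simp [List.count_cons] at hLb
        omega
      have hsplit : a = List.replicate T.length 0 ++
          (0+1) :: (List.replicate c 0 ++ embed b' ct) := by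
        rw [haglue, hb', hct]
        rfl
      have h1nm : (0+1 : ℕ) ∉ List.replicate T.length 0 := by
        simp [List.mem_replicate]
      obtain ⟨_, hmv⟩ := haC2 (List.replicate T.length 0) 0
        (List.replicate c 0 ++ embed b' ct) hsplit h1nm
      have : 0 < c + (embed b' ct).count 0 := by
        rw [← List.count_pos_iff] at hmv
        rw [List.count_append, List.count_replicate] at hmv
        simpa using hmv
      rw [count_embed_zero b' ct hLct] at this
      rw [hct]
      simp
      omega
    refine ⟨⟨⟨T.length, cs⟩, b⟩, ⟨⟨hc₀pos, ?_, ?_, hsum⟩, hlenb, ⟨hbC1, hbC2⟩, hcountib, hcount0b⟩, ?_⟩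
    · rw [hLb, hcount0b]
    · exact hcount0a
    · exact haglue.symm

lemma glue_injOn (i s t n L : ℕ) (hL : 2 ≤ L) :
    Set.InjOn glue (Cset t L ×ˢ LSet (i-1) (n-t) s L) := by
  rintro ⟨⟨c₀, cs⟩, b⟩ ⟨⟨_, hc2, _, _⟩, _, _, _, hb4⟩ ⟨⟨c₀', cs'⟩, b'⟩
    ⟨⟨_, hc2', _, _⟩, _, _, _, hb4'⟩ he
  simp only [glue] at he
  have hbne : b ≠ [] := by
    intro h; rw [h] at hb4; simp at hb4; omega
  have hbne' : b' ≠ [] := by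
    intro h; rw [h] at hb4'; simp at hb4'; omega
  obtain ⟨hc₀, hemb⟩ := replicate_peel (embed_head_ne_zero b cs) (embed_head_ne_zero b' cs') he
  have hb : b = b' := by
    rw [← strip_embed b cs, ← strip_embed b' cs', hemb]
  subst hb
  have hcs : cs = cs' := embed_inj_cs hemb (by rw [hc2, hb4]) (by rw [hc2', hb4])
  simp [hc₀, hcs]


/-- Recurrence for `aᵢ(n,s,t)` when `s > 0` and `i > 1`:
if `s + t < n - 2i + 3` then `aᵢ(n,s,t) = Σ_{ℓ=2}^{m} (C(ℓ+t-1,ℓ) - 1)·a_{i-1}(n-t,s,ℓ)`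
with `m = n - s - t - 2i + 4`. -/
theorem numLet_recurrence (i s t n : ℕ) (hi : 1 < i) (hs : 1 ≤ s) (ht : 2 ≤ t)
    (h : s + t + 2 * i < n + 3) :
    numLet i n s t = ∑ l ∈ Finset.Icc 2 (n + 4 - (s + t + 2 * i)),
      (Nat.choose (l + t - 1) l - 1) * numLet (i - 1) (n - t) s l := by
  classical
  have hi2 : 2 ≤ i := hi
  have htn : t ≤ n := by omega
  set m := n + 4 - (s + t + 2 * i) with hm
  rw [numLet_eq_ncard]
  have hpart : LSet i n s t = ⋃ l ∈ Finset.Icc 2 m,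
      (LSet i n s t ∩ {a | a.count 1 = l}) := by
    ext a
    constructor
    · intro ha
      rw [Set.mem_iUnion₂]
      refine ⟨a.count 1, ?_, ha, rfl⟩
      obtain ⟨hlen, ⟨hC1, hC2⟩, hci, hc0⟩ := ha
      have hia : i ∈ a := List.count_pos_iff.mp (by rw [hci]; omega)
      have h2a : (1+1 : ℕ) ∈ a := c2_mem_le hC2 hia hi2
      have hcnt1 : 2 ≤ a.count 1 := c2_count_two hC2 h2a
      rw [Finset.mem_Icc]
      refine ⟨hcnt1, ?_⟩
      set S : Finset ℕ := insert 0 (insert 1 (insert i (Finset.Icc 2 (i-1)))) with hS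
      have hsum := sum_count_le S a
      have h0 : (0:ℕ) ∉ insert 1 (insert i (Finset.Icc 2 (i-1))) := by
        simp [Finset.mem_Icc]; omega
      have h1 : (1:ℕ) ∉ insert i (Finset.Icc 2 (i-1)) := by
        simp [Finset.mem_Icc]; omega
      have hii : i ∉ Finset.Icc 2 (i-1) := by simp [Finset.mem_Icc]; omega
      rw [hS, Finset.sum_insert h0, Finset.sum_insert h1, Finset.sum_insert hii] at hsum
      have hIccsum : 2 * (i - 2) ≤ ∑ v ∈ Finset.Icc 2 (i-1), a.count v := by
        have : ∑ _v ∈ Finset.Icc 2 (i-1), 2 ≤ ∑ v ∈ Finset.Icc 2 (i-1), a.count v := by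
          apply Finset.sum_le_sum
          intro j hj
          rw [Finset.mem_Icc] at hj
          exact c2_count_two hC2 (c2_mem_le hC2 hia (by omega))
        rw [Finset.sum_const, Nat.card_Icc] at this
        calc 2 * (i - 2) = (i - 1 + 1 - 2) * 2 := by omega
          _ ≤ _ := this
      rw [hlen] at hsum
      rw [hc0, hci] at hsum
      omega
    · intro hmem
      rw [Set.mem_iUnion₂] at hmem
      obtain ⟨l, _, ha, _⟩ := hmem
      exact ha
  rw [hpart, ncard_biUnion]
  · apply Finset.sum_congr rfl
    intro l hl
    rw [Finset.mem_Icc] at hl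
    have hL2 : 2 ≤ l := hl.1
    rw [← glue_image i s t n l hi2 hs ht hL2 htn,
      Set.ncard_image_of_injOn (glue_injOn i s t n l hL2),
      ncard_prod, cset_ncard t l (by omega), numLet_eq_ncard]
  · intro l _
    exact (lset_finite i n s t).subset Set.inter_subset_left
  · intro l1 _ l2 _ hne
    rw [Set.disjoint_left]
    rintro a ⟨_, ha1⟩ ⟨_, ha2⟩
    rw [Set.mem_setOf_eq] at ha1 ha2
    exact hne (by rw [← ha1, ← ha2])
end
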